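/- arXiv:1401.2648 — 6 statements merged into one kernel-verified Lean document; each statement's English description precedes it below -/
import Mathlib

section
/- Let n : ℕ and let R be a finite list of words in n generators, and let G be the finitely presented group PresentedGroup S, where S ⊆ FreeGroup (Fin n) is the (finite) set of elements of the free group determined by R. If G is residually finite, then the word problem for this presentation is decidable: the predicate on words w : List (Fin n × Bool) asserting that the image of FreeGroup.mk w under the quotient homomorphism to G equals 1 satisfies ComputablePred. -/
/-- The set of relators in the free group determined by a list of words. -/
def relsOf {α : Type} (R : List (List (α × Bool))) : Set (FreeGroup α) :=
  {x | ∃ r ∈ R, x = FreeGroup.mk r}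

/-- The element of the presented group represented by a word. -/
def wordElt {α : Type} (R : List (List (α × Bool))) (w : List (α × Bool)) :
    PresentedGroup (relsOf R) :=
  PresentedGroup.mk (relsOf R) (FreeGroup.mk w)

namespace WPaux

abbrev Word (n : ℕ) := List (Fin n × Bool)

section Reduce

variable {α : Type} [DecidableEq α]

/-- One step of free reduction, as a function suitable for `List.foldr`. -/
def redStep (x : α × Bool) : List (α × Bool) → List (α × Bool)
  | [] => [x]
  | hd :: tl => if x.1 = hd.1 ∧ x.2 = !hd.2 then tl else x :: hd :: tl

theorem reduce_eq_foldr (L : List (α × Bool)) :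
    FreeGroup.reduce L = L.foldr redStep [] := by
  induction L with
  | nil => rfl
  | cons x L ih =>
    rw [FreeGroup.reduce.cons, List.foldr_cons, ← ih]
    cases FreeGroup.reduce L <;> rfl

theorem mk_eq_mk_iff {a b : List (α × Bool)} :
    FreeGroup.mk a = FreeGroup.mk b ↔ FreeGroup.reduce a = FreeGroup.reduce b := by
  rw [← FreeGroup.toWord_inj, FreeGroup.toWord_mk, FreeGroup.toWord_mk]

end Reduce

/-! ### Certificates of triviality -/

section Triv

variable {α : Type} [DecidableEq α]

/-- The word `u * r_i^{±1} * u⁻¹` encoded by a certificate entry. -/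
def conjWord (R : List (List (α × Bool))) (c : ℕ × List (α × Bool) × Bool) :
    List (α × Bool) :=
  c.2.1 ++ (cond c.2.2 (R.getD c.1 []) (FreeGroup.invRev (R.getD c.1 []))) ++
    FreeGroup.invRev c.2.1

/-- The word encoded by a certificate of triviality. -/
def trivWord (R : List (List (α × Bool))) (L : List (ℕ × List (α × Bool) × Bool)) :
    List (α × Bool) :=
  (L.map (conjWord R)).flatten

theorem mk_conjWord (R : List (List (α × Bool))) (c : ℕ × List (α × Bool) × Bool) :
    FreeGroup.mk (conjWord R c) =
      FreeGroup.mk c.2.1 *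
        (cond c.2.2 (FreeGroup.mk (R.getD c.1 [])) (FreeGroup.mk (R.getD c.1 []))⁻¹) *
        (FreeGroup.mk c.2.1)⁻¹ := by
  rcases c with ⟨i, u, s⟩
  cases s <;>
    simp [conjWord, ← FreeGroup.mul_mk, FreeGroup.inv_mk, mul_assoc]

theorem mk_trivWord (R : List (List (α × Bool))) (L : List (ℕ × List (α × Bool) × Bool)) :
    FreeGroup.mk (trivWord R L) = (L.map fun c => FreeGroup.mk (conjWord R c)).prod := by
  induction L with
  | nil => simp [trivWord, ← FreeGroup.one_eq_mk]
  | cons c L ih =>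
    simp only [trivWord, List.map_cons, List.flatten_cons, List.prod_cons, ← ih,
      ← FreeGroup.mul_mk]

theorem mk_conjWord_mem (R : List (List (α × Bool))) (c : ℕ × List (α × Bool) × Bool) :
    FreeGroup.mk (conjWord R c) ∈ Subgroup.normalClosure (relsOf R) := by
  have hr : FreeGroup.mk (R.getD c.1 []) ∈ Subgroup.normalClosure (relsOf R) ∨
      FreeGroup.mk (R.getD c.1 []) = (1 : FreeGroup α) := by
    by_cases h : c.1 < R.length
    · left
      refine Subgroup.subset_normalClosure ⟨R[c.1], List.getElem_mem h, ?_⟩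
      rw [List.getD_eq_getElem _ _ h]
    · right
      rw [List.getD_eq_default _ _ (le_of_not_gt h), ← FreeGroup.one_eq_mk]
  rw [mk_conjWord]
  have hmem : (cond c.2.2 (FreeGroup.mk (R.getD c.1 []))
      (FreeGroup.mk (R.getD c.1 []))⁻¹) ∈ Subgroup.normalClosure (relsOf R) := by
    rcases hr with hr | hr
    · cases c.2.2
      · exact (Subgroup.inv_mem_iff _).2 hr
      · exact hr
    · cases c.2.2
      · rw [cond_false, hr, inv_one]; exact Subgroup.one_mem _
      · rw [cond_true, hr]; exact Subgroup.one_mem _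
  exact Subgroup.normalClosure_normal.conj_mem _ hmem _

/-- Soundness of triviality certificates. -/
theorem trivCert_sound (R : List (List (α × Bool))) (L : List (ℕ × List (α × Bool) × Bool))
    (w : List (α × Bool)) (h : FreeGroup.reduce (trivWord R L) = FreeGroup.reduce w) :
    wordElt R w = 1 := by
  have hmk : FreeGroup.mk (trivWord R L) = FreeGroup.mk w := mk_eq_mk_iff.2 h
  have hmem : FreeGroup.mk w ∈ Subgroup.normalClosure (relsOf R) := by
    rw [← hmk, mk_trivWord]
    exact Subgroup.list_prod_mem _ fun x hx => by
      obtain ⟨c, _, rfl⟩ := List.mem_map.1 hx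
      exact mk_conjWord_mem R c
  exact (QuotientGroup.eq_one_iff _).2 hmem

/-- Completeness of triviality certificates. -/
theorem trivCert_complete (R : List (List (α × Bool))) (w : List (α × Bool))
    (h : wordElt R w = 1) :
    ∃ L : List (ℕ × List (α × Bool) × Bool),
      FreeGroup.reduce (trivWord R L) = FreeGroup.reduce w := by
  have hmem : FreeGroup.mk w ∈ Subgroup.normalClosure (relsOf R) :=
    (QuotientGroup.eq_one_iff _).1 h
  have hmem' : FreeGroup.mk w ∈
      Submonoid.closure (Group.conjugatesOfSet (relsOf R) ∪ (Group.conjugatesOfSet (relsOf R))⁻¹) := by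
    rw [← Subgroup.closure_toSubmonoid]
    exact hmem
  obtain ⟨l, hl, hprod⟩ := Submonoid.exists_list_of_mem_closure hmem'
  -- every element of `l` is the image of some certificate entry
  have key : ∀ y ∈ l, ∃ c : ℕ × List (α × Bool) × Bool, FreeGroup.mk (conjWord R c) = y := by
    intro y hy
    have hy' := hl y hy
    have base : ∀ z : FreeGroup α, z ∈ Group.conjugatesOfSet (relsOf R) →
        ∃ i : ℕ, ∃ u : List (α × Bool), ∃ g : FreeGroup α,
          i < R.length ∧ FreeGroup.mk u = g ∧ z = g * FreeGroup.mk (R.getD i []) * g⁻¹ := by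
      intro z hz
      obtain ⟨a, ha, hconj⟩ := Group.mem_conjugatesOfSet_iff.1 hz
      obtain ⟨r, hr, rfl⟩ := ha
      obtain ⟨g, hg⟩ := isConj_iff.1 hconj
      obtain ⟨i, hi, rfl⟩ := List.mem_iff_getElem.1 hr
      exact ⟨i, g.toWord, g, hi, FreeGroup.mk_toWord, by
        rw [List.getD_eq_getElem _ _ hi, hg]⟩
    rcases hy' with hz | hz
    · obtain ⟨i, u, g, _, hu, hzeq⟩ := base y hz
      refine ⟨(i, u, true), ?_⟩
      rw [mk_conjWord]
      simp only [cond_true]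
      rw [hu, ← hzeq]
    · obtain ⟨i, u, g, _, hu, hzeq⟩ := base y⁻¹ (Set.mem_inv.1 hz)
      refine ⟨(i, u, false), ?_⟩
      rw [mk_conjWord]
      simp only [cond_false]
      rw [hu]
      have : y = (g * FreeGroup.mk (R.getD i []) * g⁻¹)⁻¹ := by
        rw [← hzeq, inv_inv]
      rw [this]
      group
  -- build the certificate by induction on `l`
  have : ∀ l' : List (FreeGroup α), (∀ y ∈ l', ∃ c : ℕ × List (α × Bool) × Bool,
      FreeGroup.mk (conjWord R c) = y) →
      ∃ L : List (ℕ × List (α × Bool) × Bool),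
        (L.map fun c => FreeGroup.mk (conjWord R c)) = l' := by
    intro l'
    induction l' with
    | nil => exact fun _ => ⟨[], rfl⟩
    | cons y l' ih =>
      intro hyp
      obtain ⟨c, hc⟩ := hyp y List.mem_cons_self
      obtain ⟨L, hL⟩ := ih fun z hz => hyp z (List.mem_cons_of_mem _ hz)
      exact ⟨c :: L, by simp [hL, hc]⟩
  obtain ⟨L, hL⟩ := this l key
  refine ⟨L, mk_eq_mk_iff.1 ?_⟩
  rw [mk_trivWord, hL, hprod]

end Triv

/-! ### Certificates of nontriviality -/

section Nontriv

variable {n : ℕ}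

/-- Composition of two functions `Fin m → Fin m` given as lists of values. -/
def compL (a b : List ℕ) : List ℕ := b.map fun x => a.getD x 0

/-- The list associated to the letter `x` by the table `t`. -/
def pickL (t : List (List ℕ × List ℕ)) (x : Fin n × Bool) : List ℕ :=
  cond x.2 (t.getD x.1.val ([], [])).1 (t.getD x.1.val ([], [])).2

/-- Evaluate a word as a function `Fin m → Fin m` given as a list of values. -/
def evalW (m : ℕ) (t : List (List ℕ × List ℕ)) (w : Word n) : List ℕ :=
  w.foldr (fun x acc => compL (pickL t x) acc) (List.range m)

/-- Validity check for one entry of the table. -/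
def okL (m : ℕ) (a : List ℕ) : Bool :=
  (decide (a.length = m)) && a.all fun x => decide (x < m)

def permCertOK (m : ℕ) (p : List ℕ × List ℕ) : Bool :=
  okL m p.1 && okL m p.2 && decide (compL p.1 p.2 = List.range m) &&
    decide (compL p.2 p.1 = List.range m)

/-- The full nontriviality certificate check. -/
def checkNT (R : List (Word n)) (w : Word n) (c : ℕ × List (List ℕ × List ℕ)) : Bool :=
  (decide (c.2.length = n)) && c.2.all (permCertOK c.1) &&
    (R.all fun r => decide (evalW c.1 c.2 r = List.range c.1)) &&
    !(decide (evalW c.1 c.2 w = List.range c.1))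

/-- `a` is the list of values of the permutation `σ`. -/
def Represents (m : ℕ) (a : List ℕ) (σ : Equiv.Perm (Fin m)) : Prop :=
  a.length = m ∧ ∀ j : Fin m, a.getD j.val 0 = (σ j).val

theorem represents_inj {m : ℕ} {a b : List ℕ} {σ : Equiv.Perm (Fin m)}
    (ha : Represents m a σ) (hb : Represents m b σ) : a = b := by
  refine List.ext_getElem (ha.1.trans hb.1.symm) fun i h1 h2 => ?_
  have hi : i < m := ha.1 ▸ h1
  have := (ha.2 ⟨i, hi⟩).trans (hb.2 ⟨i, hi⟩).symm
  rwa [List.getD_eq_getElem _ _ h1, List.getD_eq_getElem _ _ h2] at this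

theorem represents_one (m : ℕ) : Represents m (List.range m) 1 := by
  refine ⟨List.length_range, fun j => ?_⟩
  rw [List.getD_eq_getElem _ _ (by simpa using j.isLt), List.getElem_range]
  rfl

theorem compL_getD {a b : List ℕ} {j : ℕ} (hj : j < b.length) :
    (compL a b).getD j 0 = a.getD (b.getD j 0) 0 := by
  rw [List.getD_eq_getElem b 0 hj, List.getD_eq_getElem _ 0 (by simpa [compL] using hj)]
  simp only [compL, List.getElem_map]

theorem represents_compL {m : ℕ} {a b : List ℕ} {σ τ : Equiv.Perm (Fin m)}
    (ha : Represents m a σ) (hb : Represents m b τ) :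
    Represents m (compL a b) (σ * τ) := by
  refine ⟨by simpa [compL] using hb.1, fun j => ?_⟩
  have hj : j.val < b.length := by rw [hb.1]; exact j.isLt
  rw [compL_getD hj, hb.2 j, ha.2 (τ j), Equiv.Perm.mul_apply]

/-- The semantics of `evalW`. -/
theorem evalW_spec {m : ℕ} {t : List (List ℕ × List ℕ)} (ρ : Fin n → Equiv.Perm (Fin m))
    (ht : ∀ i : Fin n, Represents m (t.getD i.val ([], [])).1 (ρ i) ∧
      Represents m (t.getD i.val ([], [])).2 (ρ i)⁻¹)
    (w : Word n) :
    Represents m (evalW m t w) (FreeGroup.lift ρ (FreeGroup.mk w)) := by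
  induction w with
  | nil =>
    simpa [evalW, ← FreeGroup.one_eq_mk] using represents_one m
  | cons x w ih =>
    have hx : Represents m (pickL t x) (cond x.2 (ρ x.1) (ρ x.1)⁻¹) := by
      cases hxb : x.2 <;> simp only [pickL, hxb, cond_true, cond_false]
      · exact (ht x.1).2
      · exact (ht x.1).1
    have : FreeGroup.lift ρ (FreeGroup.mk (x :: w)) =
        (cond x.2 (ρ x.1) (ρ x.1)⁻¹) * FreeGroup.lift ρ (FreeGroup.mk w) := by
      rw [FreeGroup.lift_mk, FreeGroup.lift_mk, List.map_cons, List.prod_cons]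
    rw [this]
    exact represents_compL hx ih

theorem exists_perm_of_permCertOK {m : ℕ} {p : List ℕ × List ℕ}
    (h : permCertOK m p = true) :
    ∃ σ : Equiv.Perm (Fin m), Represents m p.1 σ ∧ Represents m p.2 σ⁻¹ := by
  have h' := h
  simp only [permCertOK, okL, Bool.and_eq_true, decide_eq_true_eq, List.all_eq_true] at h'
  obtain ⟨⟨⟨⟨h1len, h1lt⟩, h2len, h2lt⟩, h12⟩, h21⟩ := h'
  have hb1 : ∀ j : Fin m, p.1.getD j.val 0 < m := by
    intro j
    have hj : j.val < p.1.length := h1len ▸ j.isLt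
    rw [List.getD_eq_getElem _ _ hj]
    simpa using h1lt _ (List.getElem_mem hj)
  have hb2 : ∀ j : Fin m, p.2.getD j.val 0 < m := by
    intro j
    have hj : j.val < p.2.length := h2len ▸ j.isLt
    rw [List.getD_eq_getElem _ _ hj]
    simpa using h2lt _ (List.getElem_mem hj)
  have hcomp : ∀ (a b : List ℕ), compL a b = List.range m → a.length = m → b.length = m →
      ∀ j : Fin m, a.getD (b.getD j.val 0) 0 = j.val := by
    intro a b hab ha hb j
    have hj : j.val < b.length := hb ▸ j.isLt
    have h2 := congrArg (fun l => l.getD j.val 0) hab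
    rw [compL_getD hj] at h2
    rw [h2, List.getD_eq_getElem _ _ (by simpa using j.isLt), List.getElem_range]
  refine ⟨⟨fun j => ⟨p.1.getD j.val 0, hb1 j⟩, fun j => ⟨p.2.getD j.val 0, hb2 j⟩,
      fun j => ?_, fun j => ?_⟩, ⟨h1len, fun j => rfl⟩, ⟨h2len, fun j => rfl⟩⟩
  · exact Fin.ext (hcomp p.2 p.1 h21 h2len h1len j)
  · exact Fin.ext (hcomp p.1 p.2 h12 h1len h2len j)

/-- Soundness of nontriviality certificates. -/
theorem checkNT_sound {R : List (Word n)} {w : Word n} {c : ℕ × List (List ℕ × List ℕ)}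
    (h : checkNT R w c = true) : wordElt R w ≠ 1 := by
  obtain ⟨m, t⟩ := c
  simp only [checkNT, Bool.and_eq_true, Bool.not_eq_true', decide_eq_true_eq,
    List.all_eq_true, decide_eq_false_iff_not] at h
  obtain ⟨⟨⟨hlen, hall⟩, hrels⟩, hw⟩ := h
  -- construct the permutations
  have hperm : ∀ i : Fin n, ∃ σ : Equiv.Perm (Fin m),
      Represents m (t.getD i.val ([], [])).1 σ ∧ Represents m (t.getD i.val ([], [])).2 σ⁻¹ := by
    intro i
    have hi : i.val < t.length := hlen ▸ i.isLt
    refine exists_perm_of_permCertOK (p := t.getD i.val ([], [])) ?_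
    rw [List.getD_eq_getElem _ _ hi]
    exact hall _ (List.getElem_mem hi)
  choose ρ hρ using hperm
  have hφ : ∀ r ∈ relsOf R, FreeGroup.lift ρ r = 1 := by
    rintro _ ⟨r, hr, rfl⟩
    have hspec := evalW_spec ρ hρ r
    rw [hrels r hr] at hspec
    ext j
    have h2 := hspec.2 j
    have h1 := (represents_one m).2 j
    rw [h2] at h1
    exact h1
  intro hw1
  have hone : FreeGroup.lift ρ (FreeGroup.mk w) = 1 := by
    have hcomm : (PresentedGroup.toGroup hφ) (wordElt R w) = FreeGroup.lift ρ (FreeGroup.mk w) :=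
      rfl
    rw [hw1, map_one] at hcomm
    exact hcomm.symm
  have hspec := evalW_spec ρ hρ w
  rw [hone] at hspec
  exact hw (represents_inj hspec (represents_one m))

/-- The list of values of a permutation of `Fin m`. -/
def listOf {m : ℕ} (τ : Equiv.Perm (Fin m)) : List ℕ :=
  (List.finRange m).map fun j => (τ j).val

theorem represents_listOf {m : ℕ} (τ : Equiv.Perm (Fin m)) :
    Represents m (listOf τ) τ := by
  refine ⟨by simp [listOf], fun j => ?_⟩
  have hj : j.val < (listOf τ).length := by simp [listOf]
  rw [List.getD_eq_getElem _ _ hj]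
  simp only [listOf, List.getElem_map]
  congr 1
  apply Fin.ext
  simp [List.getElem_finRange]

theorem represents_okL {m : ℕ} {a : List ℕ} {σ : Equiv.Perm (Fin m)}
    (h : Represents m a σ) : okL m a = true := by
  simp only [okL, Bool.and_eq_true, decide_eq_true_eq, List.all_eq_true]
  refine ⟨h.1, fun x hx => ?_⟩
  obtain ⟨i, hi, rfl⟩ := List.mem_iff_getElem.1 hx
  have him : i < m := h.1 ▸ hi
  have h2 := h.2 ⟨i, him⟩
  rw [List.getD_eq_getElem _ _ hi] at h2
  simp only [h2, decide_eq_true_eq]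
  exact (σ ⟨i, him⟩).isLt

theorem permCertOK_of {m : ℕ} (σ : Equiv.Perm (Fin m)) :
    permCertOK m (listOf σ, listOf σ⁻¹) = true := by
  have h1 := represents_listOf σ
  have h2 := represents_listOf σ⁻¹
  simp only [permCertOK, Bool.and_eq_true, decide_eq_true_eq]
  have hc1 : compL (listOf σ) (listOf σ⁻¹) = List.range m := by
    have := represents_compL h1 h2
    rw [mul_inv_cancel] at this
    exact represents_inj this (represents_one m)
  have hc2 : compL (listOf σ⁻¹) (listOf σ) = List.range m := by
    have := represents_compL h2 h1
    rw [inv_mul_cancel] at this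
    exact represents_inj this (represents_one m)
  exact ⟨⟨⟨represents_okL h1, represents_okL h2⟩, hc1⟩, hc2⟩

/-- The Cayley embedding of a finite group into permutations of `Fin m`. -/
def cayley {Q : Type} [Group Q] {m : ℕ} (e : Q ≃ Fin m) : Q →* Equiv.Perm (Fin m) where
  toFun q :=
    { toFun := fun j => e (q * e.symm j)
      invFun := fun j => e (q⁻¹ * e.symm j)
      left_inv := fun j => by simp [inv_mul_cancel_left]
      right_inv := fun j => by simp [mul_inv_cancel_left] }
  map_one' := by ext j; simp
  map_mul' := fun a b => by ext j; simp [mul_assoc]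

theorem cayley_eq_one {Q : Type} [Group Q] {m : ℕ} (e : Q ≃ Fin m) {q : Q}
    (h : cayley e q = 1) : q = 1 := by
  have h1 := congrArg (fun σ : Equiv.Perm (Fin m) => e.symm (σ (e 1))) h
  simpa [cayley] using h1

/-- Completeness of nontriviality certificates. -/
theorem checkNT_complete {R : List (Word n)} {w : Word n}
    {Q : Type} [Group Q] [Finite Q] (f : PresentedGroup (relsOf R) →* Q)
    (hf : f (wordElt R w) ≠ 1) :
    ∃ c : ℕ × List (List ℕ × List ℕ), checkNT R w c = true := by
  letI : Fintype Q := Fintype.ofFinite Q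
  set m := Fintype.card Q with hm
  let e : Q ≃ Fin m := Fintype.equivFin Q
  let χ : PresentedGroup (relsOf R) →* Equiv.Perm (Fin m) := (cayley e).comp f
  let ρ : Fin n → Equiv.Perm (Fin m) := fun i => χ (PresentedGroup.of i)
  have key : ∀ x : FreeGroup (Fin n),
      FreeGroup.lift ρ x = χ (PresentedGroup.mk (relsOf R) x) := by
    intro x
    exact (FreeGroup.lift_unique (χ.comp (PresentedGroup.mk (relsOf R))) (fun i => rfl)).symm
  let t : List (List ℕ × List ℕ) :=
    (List.finRange n).map fun i => (listOf (ρ i), listOf (ρ i)⁻¹)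
  have ht : ∀ i : Fin n, t.getD i.val ([], []) = (listOf (ρ i), listOf (ρ i)⁻¹) := by
    intro i
    have hi : i.val < t.length := by simp [t]
    rw [List.getD_eq_getElem _ _ hi]
    simp only [t, List.getElem_map]
    have hfr : (List.finRange n)[i.val]'(by simpa using i.isLt) = i := by
      apply Fin.ext
      simp [List.getElem_finRange]
    rw [hfr]
  have hrep : ∀ i : Fin n, Represents m (t.getD i.val ([], [])).1 (ρ i) ∧
      Represents m (t.getD i.val ([], [])).2 (ρ i)⁻¹ := fun i => by
    rw [ht i]
    exact ⟨represents_listOf _, represents_listOf _⟩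
  refine ⟨(m, t), ?_⟩
  simp only [checkNT, Bool.and_eq_true, Bool.not_eq_true', decide_eq_true_eq,
    List.all_eq_true, decide_eq_false_iff_not]
  refine ⟨⟨⟨by simp [t], fun p hp => ?_⟩, fun r hr => ?_⟩, ?_⟩
  · obtain ⟨i, -, rfl⟩ := List.mem_map.1 hp
    exact permCertOK_of (ρ i)
  · have h1 : FreeGroup.lift ρ (FreeGroup.mk r) = 1 := by
      rw [key]
      have hone : PresentedGroup.mk (relsOf R) (FreeGroup.mk r) = 1 :=
        (QuotientGroup.eq_one_iff _).2 (Subgroup.subset_normalClosure ⟨r, hr, rfl⟩)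
      rw [hone, map_one]
    have hspec := evalW_spec ρ hrep r
    rw [h1] at hspec
    exact represents_inj hspec (represents_one m)
  · intro hcontra
    have hspec := evalW_spec ρ hrep w
    have h1 : FreeGroup.lift ρ (FreeGroup.mk w) = 1 := by
      ext j
      have h2 := hspec.2 j
      rw [hcontra] at h2
      have h3 := (represents_one m).2 j
      rw [h3] at h2
      exact h2.symm
    have h2 : χ (wordElt R w) = 1 := by
      rw [wordElt, ← key]
      exact h1
    exact hf (cayley_eq_one e h2)

end Nontriv

/-! ### Decoding wrappers and the decision procedure -/

section Checks

variable {n : ℕ}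

def checkTriv (R : List (Word n)) (w : Word n) (k : ℕ) : Bool :=
  match (Encodable.decode k : Option (List (ℕ × Word n × Bool))) with
  | none => false
  | some L => decide (FreeGroup.reduce (trivWord R L) = FreeGroup.reduce w)

def checkNontriv (R : List (Word n)) (w : Word n) (k : ℕ) : Bool :=
  match (Encodable.decode k : Option (ℕ × List (List ℕ × List ℕ))) with
  | none => false
  | some c => checkNT R w c

theorem checkTriv_sound {R : List (Word n)} {w : Word n} {k : ℕ}
    (h : checkTriv R w k = true) : wordElt R w = 1 := by
  unfold checkTriv at h
  cases hdec : (Encodable.decode k : Option (List (ℕ × Word n × Bool))) with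
  | none => rw [hdec] at h; exact absurd h (by simp)
  | some L =>
    rw [hdec] at h
    exact trivCert_sound R L w (by simpa using h)

theorem checkTriv_complete {R : List (Word n)} {w : Word n} (h : wordElt R w = 1) :
    ∃ k, checkTriv R w k = true := by
  obtain ⟨L, hL⟩ := trivCert_complete R w h
  refine ⟨Encodable.encode L, ?_⟩
  unfold checkTriv
  rw [Encodable.encodek]
  simp [hL]

theorem checkNontriv_sound {R : List (Word n)} {w : Word n} {k : ℕ}
    (h : checkNontriv R w k = true) : wordElt R w ≠ 1 := by
  unfold checkNontriv at h
  cases hdec : (Encodable.decode k : Option (ℕ × List (List ℕ × List ℕ))) with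
  | none => rw [hdec] at h; exact absurd h (by simp)
  | some c =>
    rw [hdec] at h
    exact checkNT_sound h

theorem checkNontriv_complete {R : List (Word n)} {w : Word n}
    {Q : Type} [Group Q] [Finite Q] (f : PresentedGroup (relsOf R) →* Q)
    (hf : f (wordElt R w) ≠ 1) :
    ∃ k, checkNontriv R w k = true := by
  obtain ⟨c, hc⟩ := checkNT_complete f hf
  refine ⟨Encodable.encode c, ?_⟩
  unfold checkNontriv
  rw [Encodable.encodek]
  exact hc

end Checks

/-! ### Primitive recursiveness of the checks -/

section Prim

open Primrec

theorem all_eq_foldr {α : Type} (p : α → Bool) (l : List α) :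
    l.all p = l.foldr (fun a b => p a && b) true := by
  induction l with
  | nil => rfl
  | cons a l ih => simp [List.all_cons, ih]

variable {α : Type} [Primcodable α]

theorem primrec_invRev :
    Primrec (FreeGroup.invRev : List (α × Bool) → List (α × Bool)) := by
  have h1 : Primrec fun p : List (α × Bool) × (α × Bool) => (p.2.1, !p.2.2) :=
    Primrec.pair (fst.comp snd) (Primrec.not.comp (snd.comp snd))
  have h2 : Primrec fun l : List (α × Bool) => l.map fun g : α × Bool => (g.1, !g.2) :=
    Primrec.list_map Primrec.id h1.to₂
  exact (Primrec.list_reverse.comp h2).of_eq fun l => rfl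

theorem primrec_redStep [DecidableEq α] :
    Primrec₂ (redStep : α × Bool → List (α × Bool) → List (α × Bool)) := by
  have hcond : PrimrecPred fun a :
      ((α × Bool) × List (α × Bool)) × ((α × Bool) × List (α × Bool)) =>
      a.1.1.1 = a.2.1.1 ∧ a.1.1.2 = !a.2.1.2 := by
    have h1 : PrimrecPred fun a :
        ((α × Bool) × List (α × Bool)) × ((α × Bool) × List (α × Bool)) =>
        a.1.1.1 = a.2.1.1 :=
      PrimrecRel.comp Primrec.eq
        (fst.comp (fst.comp fst)) (fst.comp (fst.comp snd))
    have h2 : PrimrecPred fun a :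
        ((α × Bool) × List (α × Bool)) × ((α × Bool) × List (α × Bool)) =>
        a.1.1.2 = !a.2.1.2 :=
      PrimrecRel.comp Primrec.eq
        (snd.comp (fst.comp fst)) (Primrec.not.comp (snd.comp (fst.comp snd)))
    exact h1.and h2
  have hite : Primrec fun a :
      ((α × Bool) × List (α × Bool)) × ((α × Bool) × List (α × Bool)) =>
      if a.1.1.1 = a.2.1.1 ∧ a.1.1.2 = !a.2.1.2 then a.2.2
      else a.1.1 :: a.2.1 :: a.2.2 :=
    Primrec.ite hcond (snd.comp snd)
      (Primrec.list_cons.comp (fst.comp fst)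
        (Primrec.list_cons.comp (fst.comp snd) (snd.comp snd)))
  have h := Primrec.list_casesOn
    (f := fun a : (α × Bool) × List (α × Bool) => a.2)
    (g := fun a : (α × Bool) × List (α × Bool) => [a.1])
    (h := fun a p => if a.1.1 = p.1.1 ∧ a.1.2 = !p.1.2 then p.2 else a.1 :: p.1 :: p.2)
    snd (Primrec.list_cons.comp fst (Primrec.const [])) hite.to₂
  have h' : Primrec fun a : (α × Bool) × List (α × Bool) => redStep a.1 a.2 :=
    h.of_eq fun a => by rcases a with ⟨x, acc⟩; cases acc <;> rfl
  exact h'.to₂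

theorem primrec_reduce [DecidableEq α] :
    Primrec (FreeGroup.reduce : List (α × Bool) → List (α × Bool)) := by
  have h := Primrec.list_foldr (f := @id (List (α × Bool)))
    (g := fun _ => ([] : List (α × Bool)))
    (h := fun _ p => redStep p.1 p.2)
    Primrec.id (Primrec.const _)
    (primrec_redStep.comp (fst.comp snd) (snd.comp snd)).to₂
  exact h.of_eq fun l => (reduce_eq_foldr l).symm

theorem primrec_conjWord (R : List (List (α × Bool))) :
    Primrec (conjWord R : ℕ × List (α × Bool) × Bool → List (α × Bool)) := by
  have hget : Primrec fun c : ℕ × List (α × Bool) × Bool => R.getD c.1 [] :=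
    (Primrec.list_getD ([] : List (α × Bool))).comp (Primrec.const R) fst
  have hcond : Primrec fun c : ℕ × List (α × Bool) × Bool =>
      cond c.2.2 (R.getD c.1 []) (FreeGroup.invRev (R.getD c.1 [])) :=
    Primrec.cond (snd.comp snd) hget (primrec_invRev.comp hget)
  exact (Primrec.list_append.comp
    (Primrec.list_append.comp (fst.comp snd) hcond)
    (primrec_invRev.comp (fst.comp snd))).of_eq fun c => rfl

theorem primrec_trivWord (R : List (List (α × Bool))) :
    Primrec (trivWord R : List (ℕ × List (α × Bool) × Bool) → List (α × Bool)) :=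
  Primrec.list_flatten.comp
    (Primrec.list_map Primrec.id ((primrec_conjWord R).comp snd).to₂)

theorem primrec_compL : Primrec₂ compL :=
  (Primrec.list_map snd ((Primrec.list_getD 0).comp (fst.comp fst) snd).to₂).to₂

theorem primrec_okL : Primrec₂ okL := by
  have h1 : Primrec fun p : ℕ × List ℕ => decide (p.2.length = p.1) :=
    (PrimrecRel.comp Primrec.eq (Primrec.list_length.comp snd) fst).decide
  have h2 : Primrec fun p : ℕ × List ℕ =>
      p.2.foldr (fun x b => decide (x < p.1) && b) true :=
    Primrec.list_foldr snd (Primrec.const true)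
      (Primrec₂.comp Primrec.and
        (PrimrecRel.comp Primrec.nat_lt (fst.comp snd) (fst.comp fst)).decide
        (snd.comp snd)).to₂
  have h' : Primrec fun p : ℕ × List ℕ => okL p.1 p.2 :=
    (Primrec₂.comp Primrec.and h1 h2).of_eq fun p => by
      unfold okL
      rw [all_eq_foldr]
  exact h'.to₂

theorem primrec_permCertOK : Primrec₂ permCertOK := by
  have ha := primrec_okL.comp (fst : Primrec fun p : ℕ × (List ℕ × List ℕ) => p.1)
    (fst.comp snd)
  have hb := primrec_okL.comp (fst : Primrec fun p : ℕ × (List ℕ × List ℕ) => p.1)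
    (snd.comp snd)
  have hc : Primrec fun p : ℕ × (List ℕ × List ℕ) =>
      decide (compL p.2.1 p.2.2 = List.range p.1) :=
    PrimrecRel.comp Primrec.eq
      (primrec_compL.comp (fst.comp snd) (snd.comp snd))
      (Primrec.list_range.comp fst) |>.decide
  have hd : Primrec fun p : ℕ × (List ℕ × List ℕ) =>
      decide (compL p.2.2 p.2.1 = List.range p.1) :=
    PrimrecRel.comp Primrec.eq
      (primrec_compL.comp (snd.comp snd) (fst.comp snd))
      (Primrec.list_range.comp fst) |>.decide
  exact (Primrec₂.comp Primrec.and
    (Primrec₂.comp Primrec.and (Primrec₂.comp Primrec.and ha hb) hc) hd).to₂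

theorem primrec_pickL {n : ℕ} :
    Primrec₂ (pickL : List (List ℕ × List ℕ) → Fin n × Bool → List ℕ) := by
  have hget : Primrec fun p : List (List ℕ × List ℕ) × (Fin n × Bool) =>
      p.1.getD p.2.1.val ([], []) :=
    (Primrec.list_getD (([], []) : List ℕ × List ℕ)).comp fst
      (Primrec.fin_val.comp (fst.comp snd))
  exact (Primrec.cond (snd.comp snd) (fst.comp hget) (snd.comp hget)).to₂

theorem primrec_evalW {n : ℕ} :
    Primrec₂ fun (c : ℕ × List (List ℕ × List ℕ)) (w : Word n) =>
      evalW c.1 c.2 w := by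
  have h := Primrec.list_foldr
    (f := fun a : (ℕ × List (List ℕ × List ℕ)) × Word n => a.2)
    (g := fun a : (ℕ × List (List ℕ × List ℕ)) × Word n => List.range a.1.1)
    (h := fun a p => compL (pickL a.1.2 p.1) p.2)
    snd (Primrec.list_range.comp (fst.comp fst))
    (primrec_compL.comp
      (primrec_pickL.comp (snd.comp (fst.comp fst)) (fst.comp snd))
      (snd.comp snd)).to₂
  exact (h.of_eq fun a => rfl).to₂

theorem primrec_checkNT {n : ℕ} (R : List (Word n)) :
    Primrec₂ fun (w : Word n) (c : ℕ × List (List ℕ × List ℕ)) => checkNT R w c := by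
  have hA : Primrec fun a : Word n × (ℕ × List (List ℕ × List ℕ)) =>
      decide (a.2.2.length = n) :=
    (PrimrecRel.comp Primrec.eq (Primrec.list_length.comp (snd.comp snd)) (Primrec.const n)).decide
  have hB : Primrec fun a : Word n × (ℕ × List (List ℕ × List ℕ)) =>
      a.2.2.all (permCertOK a.2.1) := by
    have h := Primrec.list_foldr
      (f := fun a : Word n × (ℕ × List (List ℕ × List ℕ)) => a.2.2)
      (g := fun _ => true)
      (h := fun a p => permCertOK a.2.1 p.1 && p.2)
      (snd.comp snd) (Primrec.const true)
      (Primrec₂.comp Primrec.and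
        (primrec_permCertOK.comp (fst.comp (snd.comp fst)) (fst.comp snd))
        (snd.comp snd)).to₂
    exact h.of_eq fun a => by rw [all_eq_foldr]
  have hC : Primrec fun a : Word n × (ℕ × List (List ℕ × List ℕ)) =>
      R.all fun r => decide (evalW a.2.1 a.2.2 r = List.range a.2.1) := by
    have h := Primrec.list_foldr
      (f := fun _ : Word n × (ℕ × List (List ℕ × List ℕ)) => R)
      (g := fun _ => true)
      (h := fun a p => decide (evalW a.2.1 a.2.2 p.1 = List.range a.2.1) && p.2)
      (Primrec.const R) (Primrec.const true)
      (Primrec₂.comp Primrec.and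
        (PrimrecRel.comp Primrec.eq
          (primrec_evalW.comp (snd.comp fst) (fst.comp snd))
          (Primrec.list_range.comp (fst.comp (snd.comp fst)))).decide
        (snd.comp snd)).to₂
    exact h.of_eq fun a => by rw [all_eq_foldr]
  have hD : Primrec fun a : Word n × (ℕ × List (List ℕ × List ℕ)) =>
      !decide (evalW a.2.1 a.2.2 a.1 = List.range a.2.1) :=
    Primrec.not.comp
      (PrimrecRel.comp Primrec.eq (primrec_evalW.comp snd fst)
        (Primrec.list_range.comp (fst.comp snd))).decide
  exact (Primrec₂.comp Primrec.and
    (Primrec₂.comp Primrec.and (Primrec₂.comp Primrec.and hA hB) hC) hD).to₂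

end Prim

section Comp

variable {n : ℕ}

theorem checkTriv_computable (R : List (Word n)) : Computable₂ (checkTriv R) := by
  have hdec : Primrec fun a : Word n × ℕ =>
      (Encodable.decode a.2 : Option (List (ℕ × Word n × Bool))) :=
    Primrec.decode.comp Primrec.snd
  have hbody : Primrec₂ fun (a : Word n × ℕ) (L : List (ℕ × Word n × Bool)) =>
      decide (FreeGroup.reduce (trivWord R L) = FreeGroup.reduce a.1) :=
    (PrimrecRel.comp Primrec.eq
      (primrec_reduce.comp ((primrec_trivWord R).comp Primrec.snd))
      (primrec_reduce.comp (Primrec.fst.comp Primrec.fst))).decide.to₂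
  have h := Primrec.option_casesOn hdec (Primrec.const false) hbody
  have h' : Primrec fun a : Word n × ℕ => checkTriv R a.1 a.2 :=
    h.of_eq fun a => by
      simp only [checkTriv]
      cases (Encodable.decode a.2 : Option (List (ℕ × Word n × Bool))) <;> rfl
  exact (Primrec.to_comp h').to₂

theorem checkNontriv_computable (R : List (Word n)) : Computable₂ (checkNontriv R) := by
  have hdec : Primrec fun a : Word n × ℕ =>
      (Encodable.decode a.2 : Option (ℕ × List (List ℕ × List ℕ))) :=
    Primrec.decode.comp Primrec.snd
  have hbody : Primrec₂ fun (a : Word n × ℕ) (c : ℕ × List (List ℕ × List ℕ)) =>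
      checkNT R a.1 c :=
    ((primrec_checkNT R).comp (Primrec.fst.comp Primrec.fst) Primrec.snd).to₂
  have h := Primrec.option_casesOn hdec (Primrec.const false) hbody
  have h' : Primrec fun a : Word n × ℕ => checkNontriv R a.1 a.2 :=
    h.of_eq fun a => by
      simp only [checkNontriv]
      cases (Encodable.decode a.2 : Option (ℕ × List (List ℕ × List ℕ))) <;> rfl
  exact (Primrec.to_comp h').to₂

end Comp

end WPaux

/-- If the finitely presented group `PresentedGroup (relsOf R)` is residually finite, then
the word problem for this presentation is decidable. -/
theorem word_problem_solvable_of_residually_finite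
    (n : ℕ) (R : List (List (Fin n × Bool)))
    (hres : ∀ g : PresentedGroup (relsOf R), g ≠ 1 →
      ∃ (Q : Type) (_ : Group Q) (_ : Finite Q) (f : PresentedGroup (relsOf R) →* Q),
        f g ≠ 1) :
    ComputablePred fun w : List (Fin n × Bool) => wordElt R w = 1 := by
  classical
  have htot : ∀ w : WPaux.Word n, ∃ k,
      (WPaux.checkTriv R w k || WPaux.checkNontriv R w k) = true := by
    intro w
    by_cases h : wordElt R w = 1
    · obtain ⟨k, hk⟩ := WPaux.checkTriv_complete h
      exact ⟨k, by simp [hk]⟩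
    · obtain ⟨Q, hQ, hF, f, hf⟩ := hres _ h
      obtain ⟨k, hk⟩ := WPaux.checkNontriv_complete f hf
      exact ⟨k, by simp [hk]⟩
  let ans : WPaux.Word n → Bool := fun w => WPaux.checkTriv R w (Nat.find (htot w))
  have hans : ∀ w, ans w = true ↔ wordElt R w = 1 := by
    intro w
    constructor
    · intro h
      exact WPaux.checkTriv_sound h
    · intro h
      have hspec := Nat.find_spec (htot w)
      rw [Bool.or_eq_true] at hspec
      rcases hspec with h1 | h1
      · exact h1
      · exact absurd h (WPaux.checkNontriv_sound h1)
  have horc : Computable₂ fun (w : WPaux.Word n) (k : ℕ) =>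
      (WPaux.checkTriv R w k || WPaux.checkNontriv R w k) :=
    Computable₂.comp₂ (Primrec.to_comp (Primrec.dom_bool₂ (· || ·))).to₂
      (WPaux.checkTriv_computable R) (WPaux.checkNontriv_computable R)
  have hrf : Partrec fun w : WPaux.Word n =>
      Nat.rfind fun k => Part.some (WPaux.checkTriv R w k || WPaux.checkNontriv R w k) :=
    Partrec.rfind horc.partrec₂
  have hmap : Partrec fun w : WPaux.Word n =>
      (Nat.rfind fun k => Part.some (WPaux.checkTriv R w k || WPaux.checkNontriv R w k)).map
        (fun k => WPaux.checkTriv R w k) :=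
    hrf.map (WPaux.checkTriv_computable R).to₂
  have hC : Computable ans := by
    refine hmap.of_eq fun w => ?_
    have hfind : (Nat.rfind fun k =>
        Part.some (WPaux.checkTriv R w k || WPaux.checkNontriv R w k)) =
        Part.some (Nat.find (htot w)) := by
      rw [Part.eq_some_iff]
      refine Nat.mem_rfind.2 ⟨?_, ?_⟩
      · rw [Part.mem_some_iff]
        exact (Nat.find_spec (htot w)).symm
      · intro m hm
        rw [Part.mem_some_iff]
        have hmin := Nat.find_min (htot w) hm
        rw [Bool.not_eq_true] at hmin
        exact hmin.symm
    rw [hfind, Part.map_some]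
    rfl
  refine ComputablePred.computable_iff.2 ⟨ans, hC, funext fun w => propext ?_⟩
  exact ⟨fun h => (hans w).2 h, fun h => (hans w).1 h⟩
end

section
/- Let n : ℕ and let R be a finite list of words in n generators, and let G be the finitely presented group PresentedGroup S, where S ⊆ FreeGroup (Fin n) is the set of elements determined by R. If G is conjugacy separable, then the conjugacy problem for this presentation is decidable: the predicate on pairs of words (w, v) asserting that the elements of G represented by w and by v are conjugate in G satisfies ComputablePred. -/
namespace ConjSep
open Primrec


open Primrec

theorem rePred_of_exists {α β} [Primcodable α] [Primcodable β] {p : α → Prop}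
    (f : α → β → Bool) (hf : Computable₂ f) (h : ∀ a, p a ↔ ∃ b, f a b = true) : REPred p := by
  set f' : α → ℕ → Bool := fun a k => (Encodable.decode (α := β) k).casesOn false (f a) with hf'def
  have hf' : Computable₂ f' :=
    Computable.option_casesOn (Computable.decode.comp Computable.snd)
      (Computable.const false) (hf.comp (Computable.fst.comp Computable.fst) Computable.snd)
  have hkey : ∀ a, p a ↔ ∃ k, f' a k = true := by
    intro a
    rw [h a]
    constructor
    · rintro ⟨b, hb⟩
      exact ⟨Encodable.encode b, by simp [hf'def, hb]⟩
    · rintro ⟨k, hk⟩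
      rcases hd : Encodable.decode (α := β) k with - | b
      · rw [hf'def] at hk; simp [hd] at hk
      · exact ⟨b, by rw [hf'def] at hk; simpa [hd] using hk⟩
  have hP : Partrec fun a => (Nat.rfind fun k => Part.some (f' a k)).map fun _ => () := by
    exact Partrec.map (Partrec.rfind (hf'.partrec₂)) ((Computable.const ()).comp Computable.fst).to₂
  unfold REPred
  apply hP.of_eq
  intro a
  apply Part.ext'
  · simp only [Part.map_Dom, Nat.rfind_dom, Part.mem_some_iff, Part.some_dom]
    constructor
    · rintro ⟨k, hk, -⟩
      exact ⟨(hkey a).2 ⟨k, by obtain ⟨_, h⟩ := hk; exact h⟩, trivial⟩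
    · rintro ⟨hp, -⟩
      obtain ⟨k, hk⟩ := (hkey a).1 hp
      exact ⟨k, Part.mem_some_iff.2 hk.symm, fun _ _ => trivial⟩
  · intro h1 h2
    rfl


open Primrec

def ball (m : ℕ) (f : ℕ → Bool) : Bool :=
  (List.range m).foldr (fun k b => f k && b) true

theorem ball_iff {m : ℕ} {f : ℕ → Bool} : ball m f = true ↔ ∀ k < m, f k = true := by
  have : ∀ l : List ℕ, (l.foldr (fun k b => f k && b) true = true ↔ ∀ k ∈ l, f k = true) := by
    intro l
    induction l with
    | nil => simp
    | cons a l ih => simp [Bool.and_eq_true, ih]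
  rw [ball, this]
  simp [List.mem_range]

theorem primrec_ball {α} [Primcodable α] {g : α → ℕ} {f : α → ℕ → Bool}
    (hg : Primrec g) (hf : Primrec₂ f) : Primrec fun a => ball (g a) (f a) := by
  have := Primrec.list_foldr (α := α) (β := ℕ) (σ := Bool)
    (f := fun a => List.range (g a)) (g := fun _ => true)
    (h := fun a p => f a p.1 && p.2)
    (Primrec.list_range.comp hg) (Primrec.const true)
    ((Primrec.dom_bool₂ (· && ·)).comp (hf.comp Primrec.fst (Primrec.fst.comp Primrec.snd))
      (Primrec.snd.comp Primrec.snd))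
  exact this.of_eq fun a => rfl

section
variable (n : ℕ)

theorem primrec_invRev : Primrec (FreeGroup.invRev (α := Fin n)) := by
  have hmap : Primrec fun (w : List (Fin n × Bool)) =>
      w.map fun g : Fin n × Bool => (g.1, !g.2) :=
    Primrec.list_map Primrec.id
      ((Primrec.pair (Primrec.fst.comp Primrec.snd)
        ((Primrec.dom_bool not).comp (Primrec.snd.comp Primrec.snd))))
  exact (Primrec.list_reverse.comp hmap).of_eq fun w => by
    simp [FreeGroup.invRev]

theorem primrec_reduce : Primrec (FreeGroup.reduce (α := Fin n)) := by
  have hh : Primrec₂ fun (_ : List (Fin n × Bool))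
      (x : (Fin n × Bool) × List (Fin n × Bool) × List (Fin n × Bool)) =>
      (List.casesOn x.2.2 [x.1] fun hd2 tl2 =>
        if x.1.1 = hd2.1 ∧ x.1.2 = !hd2.2 then tl2 else x.1 :: hd2 :: tl2 :
          List (Fin n × Bool)) := by
    apply Primrec.list_casesOn
      (f := fun (y : List (Fin n × Bool) ×
        ((Fin n × Bool) × List (Fin n × Bool) × List (Fin n × Bool))) => y.2.2.2)
      (g := fun y => [y.2.1])
      (h := fun y (q : (Fin n × Bool) × List (Fin n × Bool)) =>
        if y.2.1.1 = q.1.1 ∧ y.2.1.2 = !q.1.2 then q.2 else y.2.1 :: q.1 :: q.2)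
    · exact Primrec.snd.comp (Primrec.snd.comp Primrec.snd)
    · exact Primrec.list_cons.comp (Primrec.fst.comp Primrec.snd) (Primrec.const [])
    · apply Primrec.ite
      · apply PrimrecPred.and
        · exact Primrec.eq.comp (Primrec.fst.comp (Primrec.fst.comp (Primrec.snd.comp Primrec.fst)))
            (Primrec.fst.comp (Primrec.fst.comp Primrec.snd))
        · exact Primrec.eq.comp (Primrec.snd.comp (Primrec.fst.comp (Primrec.snd.comp Primrec.fst)))
            ((Primrec.dom_bool not).comp (Primrec.snd.comp (Primrec.fst.comp Primrec.snd)))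
      · exact Primrec.snd.comp Primrec.snd
      · exact Primrec.list_cons.comp (Primrec.fst.comp (Primrec.snd.comp Primrec.fst))
          (Primrec.list_cons.comp (Primrec.fst.comp Primrec.snd) (Primrec.snd.comp Primrec.snd))
  have := Primrec.list_rec (α := List (Fin n × Bool)) (β := Fin n × Bool)
    (σ := List (Fin n × Bool)) (f := id) (g := fun _ => []) Primrec.id (Primrec.const []) hh
  apply this.of_eq
  intro l
  induction l with
  | nil => rfl
  | cons x L ih => simp [FreeGroup.reduce]


end
section
variable (n : ℕ) (R : List (List (Fin n × Bool)))

open Primrec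


abbrev Word := List (Fin n × Bool)

def wconj (t w : Word n) : Word n := t ++ w ++ FreeGroup.invRev t

def relW (j : ℕ) (s : Bool) : Word n :=
  cond s (R.getD j []) (FreeGroup.invRev (R.getD j []))

def prodW (L : List (Word n × ℕ × Bool)) : Word n :=
  L.foldr (fun q acc => wconj n q.1 (relW n R q.2.1 q.2.2) ++ acc) []

def checkA (p : Word n × Word n) (c : Word n × List (Word n × ℕ × Bool)) : Bool :=
  decide (FreeGroup.reduce (wconj n c.1 p.1 ++ FreeGroup.invRev p.2)
    = FreeGroup.reduce (prodW n R c.2))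

theorem primrec_checkA : Primrec₂ (checkA n R) := by
  have hir := primrec_invRev n
  have hred : Primrec (FreeGroup.reduce (α := Fin n)) := primrec_reduce n
  -- left word
  have hleft : Primrec fun (x : (Word n × Word n) × (Word n × List (Word n × ℕ × Bool))) =>
      wconj n x.2.1 x.1.1 ++ FreeGroup.invRev x.1.2 := by
    unfold wconj
    exact Primrec.list_append.comp
      (Primrec.list_append.comp
        (Primrec.list_append.comp (Primrec.fst.comp Primrec.snd)
          (Primrec.fst.comp Primrec.fst))
        (hir.comp (Primrec.fst.comp Primrec.snd)))
      (hir.comp (Primrec.snd.comp Primrec.fst))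
  have hrelW : Primrec₂ fun (_ : (Word n × Word n) × (Word n × List (Word n × ℕ × Bool)))
      (q : Word n × ℕ × Bool) => relW n R q.2.1 q.2.2 := by
    unfold relW
    have hget : Primrec fun (y : ((Word n × Word n) × (Word n × List (Word n × ℕ × Bool)))
        × (Word n × ℕ × Bool)) => R.getD y.2.2.1 [] :=
      (Primrec.list_getD ([] : Word n)).comp (Primrec.const R)
        (Primrec.fst.comp (Primrec.snd.comp Primrec.snd))
    exact Primrec.cond (Primrec.snd.comp (Primrec.snd.comp Primrec.snd)) hget (hir.comp hget)
  have hprod : Primrec fun (x : (Word n × Word n) × (Word n × List (Word n × ℕ × Bool))) =>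
      prodW n R x.2.2 := by
    unfold prodW wconj
    apply Primrec.list_foldr (f := fun x : (Word n × Word n) × (Word n × List (Word n × ℕ × Bool)) => x.2.2) (g := fun _ => ([] : Word n))
      (h := fun x (q : (Word n × ℕ × Bool) × Word n) =>
        (q.1.1 ++ relW n R q.1.2.1 q.1.2.2 ++ FreeGroup.invRev q.1.1) ++ q.2)
      (Primrec.snd.comp Primrec.snd) (Primrec.const [])
    apply Primrec.list_append.comp _ (Primrec.snd.comp Primrec.snd)
    apply Primrec.list_append.comp
      (Primrec.list_append.comp (Primrec.fst.comp (Primrec.fst.comp Primrec.snd))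
        (hrelW.comp Primrec.fst (Primrec.fst.comp Primrec.snd)))
      (hir.comp (Primrec.fst.comp (Primrec.fst.comp Primrec.snd)))
  unfold checkA
  exact (Primrec.eq.comp (hred.comp hleft) (hred.comp hprod)).decide

theorem mk_eq_iff {L₁ L₂ : Word n} :
    FreeGroup.mk L₁ = FreeGroup.mk L₂ ↔ FreeGroup.reduce L₁ = FreeGroup.reduce L₂ := by
  constructor
  · intro h
    have := congrArg FreeGroup.toWord h
    simpa [FreeGroup.toWord_mk] using this
  · intro h
    rw [← FreeGroup.reduce.self (L := L₁), h, FreeGroup.reduce.self]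

theorem mk_wconj (t w : Word n) :
    FreeGroup.mk (wconj n t w) = FreeGroup.mk t * FreeGroup.mk w * (FreeGroup.mk t)⁻¹ := by
  rw [wconj, ← FreeGroup.mul_mk, ← FreeGroup.mul_mk, FreeGroup.inv_mk]

theorem mk_relW_mem (j : ℕ) (s : Bool) :
    FreeGroup.mk (relW n R j s) ∈ Subgroup.normalClosure (relsOf R) := by
  have hbase : FreeGroup.mk (R.getD j []) ∈ Subgroup.normalClosure (relsOf R) := by
    by_cases h : j < R.length
    · apply Subgroup.subset_normalClosure
      refine ⟨R.getD j [], ?_, rfl⟩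
      rw [List.getD_eq_getElem _ _ h]
      exact List.getElem_mem _
    · rw [List.getD_eq_default _ _ (le_of_not_gt h), ← FreeGroup.one_eq_mk]
      exact Subgroup.one_mem _
  cases s
  · rw [relW, cond_false, ← FreeGroup.inv_mk]
    exact Subgroup.inv_mem _ hbase
  · simpa [relW] using hbase

theorem mk_prodW_mem (L : List (Word n × ℕ × Bool)) :
    FreeGroup.mk (prodW n R L) ∈ Subgroup.normalClosure (relsOf R) := by
  induction L with
  | nil =>
    rw [prodW, List.foldr_nil, ← FreeGroup.one_eq_mk]
    exact Subgroup.one_mem _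
  | cons q L ih =>
    have : prodW n R (q :: L) = wconj n q.1 (relW n R q.2.1 q.2.2) ++ prodW n R L := rfl
    rw [this, ← FreeGroup.mul_mk]
    apply Subgroup.mul_mem _ _ ih
    rw [mk_wconj]
    exact Subgroup.Normal.conj_mem (Subgroup.normalClosure_normal) _ (mk_relW_mem n R _ _) _

theorem exists_code_of_mem {x : FreeGroup (Fin n)}
    (hx : x ∈ Subgroup.normalClosure (relsOf R)) :
    ∃ L, FreeGroup.mk (prodW n R L) = x := by
  have hx' : x ∈ Submonoid.closure
      (Group.conjugatesOfSet (relsOf R) ∪ (Group.conjugatesOfSet (relsOf R))⁻¹) := by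
    rw [← Subgroup.closure_toSubmonoid]
    exact hx
  obtain ⟨l, hl, hprod⟩ := Submonoid.exists_list_of_mem_closure hx'
  subst hprod
  clear hx hx'
  induction l with
  | nil => exact ⟨[], by simp [prodW, ← FreeGroup.one_eq_mk]⟩
  | cons y l ih =>
    obtain ⟨L, hL⟩ := ih fun z hz => hl z (List.mem_cons_of_mem _ hz)
    have hy := hl y List.mem_cons_self
    have key : ∀ z : FreeGroup (Fin n), z ∈ Group.conjugatesOfSet (relsOf R) →
        ∀ s : Bool, ∃ e : Word n × ℕ × Bool,
          FreeGroup.mk (wconj n e.1 (relW n R e.2.1 e.2.2)) = cond s z z⁻¹ := by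
      intro z hz s
      rw [Group.mem_conjugatesOfSet_iff] at hz
      obtain ⟨a, ha, hconj⟩ := hz
      obtain ⟨t, ht⟩ := isConj_iff.mp hconj
      obtain ⟨rw', hrw'R, hrw'⟩ := ha
      obtain ⟨j, hj, hgetj⟩ := List.getElem_of_mem hrw'R
      refine ⟨(t.toWord, j, s), ?_⟩
      have hrel : FreeGroup.mk (R.getD j []) = a := by
        rw [List.getD_eq_getElem _ _ hj, hgetj, ← hrw']
      cases s
      · show FreeGroup.mk (wconj n t.toWord (relW n R j false)) = z⁻¹
        rw [mk_wconj, relW, cond_false, ← FreeGroup.inv_mk, hrel, FreeGroup.mk_toWord, ← ht]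
        group
      · show FreeGroup.mk (wconj n t.toWord (relW n R j true)) = z
        rw [mk_wconj, relW, cond_true, hrel, FreeGroup.mk_toWord]
        exact ht
    have hentry : ∃ e : Word n × ℕ × Bool,
        FreeGroup.mk (wconj n e.1 (relW n R e.2.1 e.2.2)) = y := by
      rcases hy with hy | hy
      · exact key y hy true
      · obtain ⟨e, he⟩ := key y⁻¹ (Set.mem_inv.mp hy) false
        exact ⟨e, by simpa using he⟩
    obtain ⟨e, he⟩ := hentry
    refine ⟨e :: L, ?_⟩
    have : prodW n R (e :: L) = wconj n e.1 (relW n R e.2.1 e.2.2) ++ prodW n R L := rfl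
    rw [this, ← FreeGroup.mul_mk, he, hL, List.prod_cons]

theorem checkA_iff (p : Word n × Word n) :
    IsConj (wordElt R p.1) (wordElt R p.2) ↔ ∃ c, checkA n R p c = true := by
  constructor
  · intro hcj
    obtain ⟨c, hc⟩ := isConj_iff.mp hcj
    obtain ⟨u, rfl⟩ := PresentedGroup.mk_surjective (relsOf R) c
    have hc' : PresentedGroup.mk (relsOf R) (u * FreeGroup.mk p.1 * u⁻¹ * (FreeGroup.mk p.2)⁻¹)
        = 1 := by
      simp only [map_mul, map_inv]
      rw [show (PresentedGroup.mk (relsOf R)) (FreeGroup.mk p.1) = wordElt R p.1 from rfl,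
        show (PresentedGroup.mk (relsOf R)) (FreeGroup.mk p.2) = wordElt R p.2 from rfl, ← hc]
      group
    have hmem : u * FreeGroup.mk p.1 * u⁻¹ * (FreeGroup.mk p.2)⁻¹
        ∈ Subgroup.normalClosure (relsOf R) :=
      (QuotientGroup.eq_one_iff _).mp hc'
    obtain ⟨L, hL⟩ := exists_code_of_mem n R hmem
    refine ⟨(u.toWord, L), ?_⟩
    rw [checkA, decide_eq_true_iff, ← mk_eq_iff, ← FreeGroup.mul_mk, mk_wconj,
      FreeGroup.mk_toWord, ← FreeGroup.inv_mk, hL]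
  · rintro ⟨c, hc⟩
    rw [checkA, decide_eq_true_iff, ← mk_eq_iff, ← FreeGroup.mul_mk, mk_wconj,
      ← FreeGroup.inv_mk] at hc
    have hmem := mk_prodW_mem n R c.2
    rw [← hc] at hmem
    set u := FreeGroup.mk c.1
    have h1 : PresentedGroup.mk (relsOf R)
        (u * FreeGroup.mk p.1 * u⁻¹ * (FreeGroup.mk p.2)⁻¹) = 1 :=
      (QuotientGroup.eq_one_iff _).mpr hmem
    simp only [map_mul, map_inv] at h1
    apply isConj_iff.mpr
    refine ⟨PresentedGroup.mk (relsOf R) u, ?_⟩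
    have := mul_eq_one_iff_eq_inv.mp h1
    rw [wordElt, wordElt]
    rw [show ((PresentedGroup.mk (relsOf R)) (FreeGroup.mk p.2))⁻¹⁻¹
      = (PresentedGroup.mk (relsOf R)) (FreeGroup.mk p.2) from inv_inv _] at this
    exact this

def MT (T : List (List ℕ)) (a b : ℕ) : ℕ := (T.getD a []).getD b 0

def EV (T : List (List ℕ)) (I g : List ℕ) (e : ℕ) (w : Word n) : ℕ :=
  w.foldl (fun s x => MT T s (cond x.2 (g.getD x.1 0) (I.getD (g.getD x.1 0) 0))) e

abbrev DB := ℕ × List (List ℕ) × List ℕ × ℕ × List ℕ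

def checkB (p : Word n × Word n) (d : DB) : Bool :=
  decide (d.2.2.2.1 < d.1) &&
  ball d.1 (fun a => ball d.1 fun b => decide (MT d.2.1 a b < d.1)) &&
  ball d.1 (fun a => ball d.1 fun b => ball d.1 fun c =>
    decide (MT d.2.1 (MT d.2.1 a b) c = MT d.2.1 a (MT d.2.1 b c))) &&
  ball d.1 (fun a => decide (MT d.2.1 d.2.2.2.1 a = a) && decide (MT d.2.1 a d.2.2.2.1 = a)) &&
  ball d.1 (fun a => decide (d.2.2.1.getD a 0 < d.1) &&
    decide (MT d.2.1 (d.2.2.1.getD a 0) a = d.2.2.2.1) &&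
    decide (MT d.2.1 a (d.2.2.1.getD a 0) = d.2.2.2.1)) &&
  ball n (fun i => decide (d.2.2.2.2.getD i 0 < d.1)) &&
  ball R.length (fun j =>
    decide (EV n d.2.1 d.2.2.1 d.2.2.2.2 d.2.2.2.1 (R.getD j []) = d.2.2.2.1)) &&
  ball d.1 (fun u => !decide (MT d.2.1 (EV n d.2.1 d.2.2.1 d.2.2.2.2 d.2.2.2.1 p.1) u
    = MT d.2.1 u (EV n d.2.1 d.2.2.1 d.2.2.2.2 d.2.2.2.1 p.2)))

theorem primrec_MT : Primrec fun y : List (List ℕ) × ℕ × ℕ => MT y.1 y.2.1 y.2.2 :=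
  (list_getD (0 : ℕ)).comp ((list_getD ([] : List ℕ)).comp fst (fst.comp snd)) (snd.comp snd)

theorem primrec_MT_comp {δ} [Primcodable δ] {T : δ → List (List ℕ)} {A B : δ → ℕ}
    (hT : Primrec T) (hA : Primrec A) (hB : Primrec B) :
    Primrec fun z : δ => MT (T z) (A z) (B z) :=
  primrec_MT.comp (hT.pair (hA.pair hB))

theorem primrec_EV :
    Primrec fun y : (List (List ℕ) × List ℕ × List ℕ × ℕ) × Word n =>
      EV n y.1.1 y.1.2.1 y.1.2.2.1 y.1.2.2.2 y.2 := by
  apply Primrec.list_foldl (f := fun y : (List (List ℕ) × List ℕ × List ℕ × ℕ) × Word n => y.2)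
    (g := fun y => y.1.2.2.2)
    (h := fun y (sx : ℕ × (Fin n × Bool)) =>
      MT y.1.1 sx.1 (cond sx.2.2 (y.1.2.2.1.getD (sx.2.1 : ℕ) 0)
        (y.1.2.1.getD (y.1.2.2.1.getD (sx.2.1 : ℕ) 0) 0)))
    snd (snd.comp (snd.comp (snd.comp fst)))
  have hgl : Primrec fun z : ((List (List ℕ) × List ℕ × List ℕ × ℕ) × Word n) × ℕ × (Fin n × Bool) =>
      z.1.1.2.2.1.getD (z.2.2.1 : ℕ) 0 :=
    (list_getD (0 : ℕ)).comp (fst.comp (snd.comp (snd.comp (fst.comp fst))))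
      (fin_val.comp (fst.comp (snd.comp snd)))
  have hIl : Primrec fun z : ((List (List ℕ) × List ℕ × List ℕ × ℕ) × Word n) × ℕ × (Fin n × Bool) =>
      z.1.1.2.1.getD (z.1.1.2.2.1.getD (z.2.2.1 : ℕ) 0) 0 :=
    (list_getD (0 : ℕ)).comp (fst.comp (snd.comp (fst.comp fst))) hgl
  exact (primrec_MT_comp (fst.comp (fst.comp fst)) (fst.comp snd)
    (Primrec.cond (snd.comp (snd.comp snd)) hgl hIl)).to₂

theorem primrec_EV_comp {δ} [Primcodable δ] {T : δ → List (List ℕ)} {I g : δ → List ℕ}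
    {e : δ → ℕ} {w : δ → Word n} (hT : Primrec T) (hI : Primrec I) (hg : Primrec g)
    (he : Primrec e) (hw : Primrec w) :
    Primrec fun z : δ => EV n (T z) (I z) (g z) (e z) (w z) :=
  (primrec_EV n).comp ((hT.pair (hI.pair (hg.pair he))).pair hw)

theorem primrec_checkB : Primrec₂ (checkB n R) := by
  have hm : Primrec fun x : (Word n × Word n) × DB => x.2.1 := fst.comp snd
  have hT : Primrec fun x : (Word n × Word n) × DB => x.2.2.1 := fst.comp (snd.comp snd)
  have hI : Primrec fun x : (Word n × Word n) × DB => x.2.2.2.1 :=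
    fst.comp (snd.comp (snd.comp snd))
  have he : Primrec fun x : (Word n × Word n) × DB => x.2.2.2.2.1 :=
    fst.comp (snd.comp (snd.comp (snd.comp snd)))
  have hg : Primrec fun x : (Word n × Word n) × DB => x.2.2.2.2.2 :=
    snd.comp (snd.comp (snd.comp (snd.comp snd)))
  have hAnd : ∀ {f g : (Word n × Word n) × DB → Bool}, Primrec f → Primrec g →
      Primrec fun x => f x && g x := fun hf hg => (dom_bool₂ (· && ·)).comp hf hg
  have c1 : Primrec fun x : (Word n × Word n) × DB => decide (x.2.2.2.2.1 < x.2.1) :=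
    (nat_lt.comp he hm).decide
  have c2 : Primrec fun x : (Word n × Word n) × DB =>
      ball x.2.1 (fun a => ball x.2.1 fun b => decide (MT x.2.2.1 a b < x.2.1)) := by
    apply primrec_ball hm
    exact (primrec_ball (hm.comp fst)
      ((nat_lt.comp (primrec_MT_comp (hT.comp (fst.comp fst)) (snd.comp fst) snd)
        (hm.comp (fst.comp fst))).decide.to₂)).to₂
  have c3 : Primrec fun x : (Word n × Word n) × DB =>
      ball x.2.1 (fun a => ball x.2.1 fun b => ball x.2.1 fun c =>
        decide (MT x.2.2.1 (MT x.2.2.1 a b) c = MT x.2.2.1 a (MT x.2.2.1 b c))) := by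
    apply primrec_ball hm
    have hT3 : Primrec fun z : ((((Word n × Word n) × DB) × ℕ) × ℕ) × ℕ => z.1.1.1.2.2.1 :=
      hT.comp (fst.comp (fst.comp fst))
    have ha : Primrec fun z : ((((Word n × Word n) × DB) × ℕ) × ℕ) × ℕ => z.1.1.2 :=
      snd.comp (fst.comp fst)
    have hb : Primrec fun z : ((((Word n × Word n) × DB) × ℕ) × ℕ) × ℕ => z.1.2 := snd.comp fst
    exact (primrec_ball (hm.comp fst)
      ((primrec_ball (hm.comp (fst.comp fst))
        ((Primrec.eq.comp
          (primrec_MT_comp hT3 (primrec_MT_comp hT3 ha hb) snd)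
          (primrec_MT_comp hT3 ha (primrec_MT_comp hT3 hb snd))).decide.to₂)).to₂)).to₂
  have c4 : Primrec fun x : (Word n × Word n) × DB =>
      ball x.2.1 (fun a => decide (MT x.2.2.1 x.2.2.2.2.1 a = a)
        && decide (MT x.2.2.1 a x.2.2.2.2.1 = a)) := by
    apply primrec_ball hm
    have d1 := Primrec.eq.comp
      (primrec_MT_comp (δ := ((Word n × Word n) × DB) × ℕ) (hT.comp fst) (he.comp fst) snd) snd |>.decide
    have d2 := Primrec.eq.comp
      (primrec_MT_comp (δ := ((Word n × Word n) × DB) × ℕ) (hT.comp fst) snd (he.comp fst)) snd |>.decide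
    exact ((dom_bool₂ (· && ·)).comp d1 d2).to₂
  have c5 : Primrec fun x : (Word n × Word n) × DB =>
      ball x.2.1 (fun a => decide (x.2.2.2.1.getD a 0 < x.2.1) &&
        decide (MT x.2.2.1 (x.2.2.2.1.getD a 0) a = x.2.2.2.2.1) &&
        decide (MT x.2.2.1 a (x.2.2.2.1.getD a 0) = x.2.2.2.2.1)) := by
    apply primrec_ball hm
    have hiv : Primrec fun y : ((Word n × Word n) × DB) × ℕ => y.1.2.2.2.1.getD y.2 0 :=
      (list_getD (0 : ℕ)).comp (hI.comp fst) snd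
    have d1 := (nat_lt.comp hiv (hm.comp fst)).decide
    have d2 := Primrec.eq.comp (primrec_MT_comp (hT.comp fst) hiv snd) (he.comp fst) |>.decide
    have d3 := Primrec.eq.comp (primrec_MT_comp (hT.comp fst) snd hiv) (he.comp fst) |>.decide
    exact ((dom_bool₂ (· && ·)).comp ((dom_bool₂ (· && ·)).comp d1 d2) d3).to₂
  have c6 : Primrec fun x : (Word n × Word n) × DB =>
      ball n (fun i => decide (x.2.2.2.2.2.getD i 0 < x.2.1)) := by
    apply primrec_ball (Primrec.const n)
    exact (nat_lt.comp ((list_getD (0 : ℕ)).comp (hg.comp fst) snd) (hm.comp fst)).decide.to₂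
  have c7 : Primrec fun x : (Word n × Word n) × DB =>
      ball R.length (fun j =>
        decide (EV n x.2.2.1 x.2.2.2.1 x.2.2.2.2.2 x.2.2.2.2.1 (R.getD j []) = x.2.2.2.2.1)) := by
    apply primrec_ball (Primrec.const R.length)
    exact (Primrec.eq.comp
      (primrec_EV_comp n (hT.comp fst) (hI.comp fst) (hg.comp fst) (he.comp fst)
        ((list_getD ([] : Word n)).comp (Primrec.const R) snd))
      (he.comp fst)).decide.to₂
  have c8 : Primrec fun x : (Word n × Word n) × DB =>
      ball x.2.1 (fun u =>
        !decide (MT x.2.2.1 (EV n x.2.2.1 x.2.2.2.1 x.2.2.2.2.2 x.2.2.2.2.1 x.1.1) u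
          = MT x.2.2.1 u (EV n x.2.2.1 x.2.2.2.1 x.2.2.2.2.2 x.2.2.2.2.1 x.1.2))) := by
    apply primrec_ball hm
    have hw1 : Primrec fun y : ((Word n × Word n) × DB) × ℕ => y.1.1.1 :=
      fst.comp (fst.comp fst)
    have hw2 : Primrec fun y : ((Word n × Word n) × DB) × ℕ => y.1.1.2 :=
      snd.comp (fst.comp fst)
    have d1 := primrec_MT_comp (hT.comp fst)
      (primrec_EV_comp n (hT.comp fst) (hI.comp fst) (hg.comp fst) (he.comp fst) hw1) snd
    have d2 := primrec_MT_comp (hT.comp fst) snd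
      (primrec_EV_comp n (hT.comp fst) (hI.comp fst) (hg.comp fst) (he.comp fst) hw2)
    exact ((dom_bool not).comp (Primrec.eq.comp d1 d2).decide).to₂
  exact (hAnd (hAnd (hAnd (hAnd (hAnd (hAnd (hAnd c1 c2) c3) c4) c5) c6) c7) c8).to₂

theorem getD_map_range {β : Type} (F : ℕ → β) (d : β) {m i : ℕ} (h : i < m) :
    ((List.range m).map F).getD i d = F i := by
  rw [List.getD_eq_getElem?_getD, List.getElem?_map, List.getElem?_range h]
  rfl

theorem checkB_sound (p : Word n × Word n) (d : DB) (hd : checkB n R p d = true) :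
    ¬ IsConj (wordElt R p.1) (wordElt R p.2) := by
  obtain ⟨m, T, I, e, g⟩ := d
  simp only [checkB, Bool.and_eq_true, ball_iff, decide_eq_true_iff, Bool.not_eq_true',
    decide_eq_false_iff_not] at hd
  obtain ⟨⟨⟨⟨⟨⟨⟨h1, h2⟩, h3⟩, h4⟩, h5⟩, h6⟩, h7⟩, h8⟩ := hd
  letI : Mul (Fin m) := ⟨fun a b => ⟨MT T a b, h2 a a.isLt b b.isLt⟩⟩
  letI : One (Fin m) := ⟨⟨e, h1⟩⟩
  letI : Inv (Fin m) := ⟨fun a => ⟨I.getD a 0, (h5 a a.isLt).1.1⟩⟩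
  letI : Group (Fin m) := Group.ofLeftAxioms
    (fun a b c => Fin.ext (h3 a a.isLt b b.isLt c c.isLt))
    (fun a => Fin.ext ((h4 a a.isLt).1))
    (fun a => Fin.ext ((h5 a a.isLt).1.2))
  set f : Fin n → Fin m := fun i => ⟨g.getD i 0, h6 i i.isLt⟩ with hf
  set φ := FreeGroup.lift f with hφ
  have hsingle : ∀ (x : Fin n × Bool) (s : Fin m),
      (s * φ (FreeGroup.mk [x])).val
        = MT T s.val (cond x.2 (g.getD x.1 0) (I.getD (g.getD x.1 0) 0)) := by
    intro x s
    obtain ⟨i, b⟩ := x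
    rw [hφ, FreeGroup.lift_mk, List.map_singleton, List.prod_singleton]
    cases b <;> rfl
  have key : ∀ (L : Word n) (s : Fin m),
      (s * φ (FreeGroup.mk L)).val
        = L.foldl (fun s x => MT T s (cond x.2 (g.getD x.1 0) (I.getD (g.getD x.1 0) 0))) s.val := by
    intro L
    induction L with
    | nil => intro s; rw [← FreeGroup.one_eq_mk]; simp
    | cons x L ih =>
      intro s
      have : FreeGroup.mk (x :: L) = FreeGroup.mk [x] * FreeGroup.mk L := by
        rw [FreeGroup.mul_mk]; rfl
      rw [this, map_mul, ← mul_assoc, List.foldl_cons, ← hsingle x s, ih]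
  have hEVkey : ∀ L : Word n, EV n T I g e L = (φ (FreeGroup.mk L)).val := by
    intro L
    have := key L 1
    rw [one_mul] at this
    exact this.symm
  have hrels : ∀ r ∈ relsOf R, φ r = 1 := by
    rintro r ⟨rw', hrw'R, rfl⟩
    obtain ⟨j, hj, hgetj⟩ := List.getElem_of_mem hrw'R
    have := h7 j hj
    rw [List.getD_eq_getElem _ _ hj, hgetj, hEVkey rw'] at this
    exact Fin.ext this
  set ψ := PresentedGroup.toGroup hrels with hψ
  have hcomm : ∀ x : FreeGroup (Fin n), ψ (PresentedGroup.mk (relsOf R) x) = φ x := by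
    have : ψ.comp (PresentedGroup.mk (relsOf R)) = φ := by
      apply FreeGroup.ext_hom
      intro a
      show ψ (PresentedGroup.mk (relsOf R) (FreeGroup.of a)) = φ (FreeGroup.of a)
      rw [show PresentedGroup.mk (relsOf R) (FreeGroup.of a) = PresentedGroup.of a from rfl]
      rw [hψ, PresentedGroup.toGroup.of, hφ, FreeGroup.lift_apply_of]
    intro x
    exact DFunLike.congr_fun this x
  intro hcj
  have hcj' : IsConj (ψ (wordElt R p.1)) (ψ (wordElt R p.2)) := ψ.map_isConj hcj
  obtain ⟨c, hc⟩ := isConj_iff.mp hcj'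
  have hsemi : ψ (wordElt R p.1) * c⁻¹ = c⁻¹ * ψ (wordElt R p.2) := by
    rw [← hc]; group
  have hvals : MT T (EV n T I g e p.1) (c⁻¹).val = MT T (c⁻¹).val (EV n T I g e p.2) := by
    have lhs : (ψ (wordElt R p.1) * c⁻¹).val = MT T (EV n T I g e p.1) (c⁻¹).val := by
      rw [hEVkey, wordElt, hcomm]; rfl
    have rhs : (c⁻¹ * ψ (wordElt R p.2)).val = MT T (c⁻¹).val (EV n T I g e p.2) := by
      rw [hEVkey, wordElt, hcomm]; rfl
    rw [← lhs, ← rhs, hsemi]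
  exact h8 (c⁻¹).val (c⁻¹).isLt hvals

theorem checkB_complete (p : Word n × Word n)
    (hQex : ∃ (Q : Type) (_ : Group Q) (_ : Finite Q) (f : PresentedGroup (relsOf R) →* Q),
      ¬ IsConj (f (wordElt R p.1)) (f (wordElt R p.2))) :
    ∃ d : DB, checkB n R p d = true := by
  classical
  obtain ⟨Q, hG, hF, f, hQ⟩ := hQex
  letI := hG
  letI := hF
  letI : Fintype Q := Fintype.ofFinite Q
  set m := Fintype.card Q with hmdef
  have hm : 0 < m := Fintype.card_pos
  set eqv : Q ≃ Fin m := Fintype.equivFin Q with heqv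
  set enc : Q → ℕ := fun x => (eqv x).val with henc
  set dec : ℕ → Q := fun a => eqv.symm ⟨a % m, Nat.mod_lt _ hm⟩ with hdec
  have enc_lt : ∀ x, enc x < m := fun x => (eqv x).isLt
  have enc_dec : ∀ a, a < m → enc (dec a) = a := by
    intro a ha
    simp [henc, hdec, Nat.mod_eq_of_lt ha]
  have dec_enc : ∀ x, dec (enc x) = x := by
    intro x
    have h1 : (⟨enc x % m, Nat.mod_lt _ hm⟩ : Fin m) = eqv x :=
      Fin.ext (by simp [henc, Nat.mod_eq_of_lt (eqv x).isLt])
    rw [hdec]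
    simp only [h1, Equiv.symm_apply_apply]
  have enc_inj : Function.Injective enc := by
    intro x y h
    have := congrArg dec h
    rwa [dec_enc, dec_enc] at this
  set T : List (List ℕ) :=
    (List.range m).map fun a => (List.range m).map fun b => enc (dec a * dec b) with hT
  set I : List ℕ := (List.range m).map fun a => enc (dec a)⁻¹ with hIdef
  set e : ℕ := enc 1 with he
  set genQ : ℕ → Q := fun i => if h : i < n then f (PresentedGroup.of ⟨i, h⟩) else 1 with hgenQ
  set g : List ℕ := (List.range n).map fun i => enc (genQ i) with hgdef
  have hMT : ∀ a, a < m → ∀ b, b < m → MT T a b = enc (dec a * dec b) := by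
    intro a ha b hb
    rw [MT, hT, getD_map_range _ _ ha, getD_map_range _ _ hb]
  have hIv : ∀ a, a < m → I.getD a 0 = enc (dec a)⁻¹ := by
    intro a ha
    rw [hIdef, getD_map_range _ _ ha]
  have hgi : ∀ i, i < n → g.getD i 0 = enc (genQ i) := by
    intro i hi
    rw [hgdef, getD_map_range _ _ hi]
  set fbar : FreeGroup (Fin n) →* Q := f.comp (PresentedGroup.mk (relsOf R)) with hfbar
  have hgiv : ∀ i : Fin n, g.getD (i : ℕ) 0 = enc (fbar (FreeGroup.of i)) := by
    intro i
    rw [hgi _ i.isLt, hgenQ]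
    simp only [i.isLt, dif_pos, Fin.eta]
    rfl
  have hfold : ∀ (L : Word n) (x : Q),
      L.foldl (fun s y => MT T s (cond y.2 (g.getD y.1 0) (I.getD (g.getD y.1 0) 0))) (enc x)
        = enc (x * fbar (FreeGroup.mk L)) := by
    intro L
    induction L with
    | nil =>
      intro x
      rw [← FreeGroup.one_eq_mk, map_one, mul_one, List.foldl_nil]
    | cons y L ih =>
      intro x
      obtain ⟨i, b⟩ := y
      rw [List.foldl_cons]
      have hmkmul : FreeGroup.mk ((i, b) :: L) = FreeGroup.mk [(i, b)] * FreeGroup.mk L := by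
        rw [FreeGroup.mul_mk]; rfl
      cases b
      · have hstep : MT T (enc x) (cond false (g.getD (i : ℕ) 0) (I.getD (g.getD (i : ℕ) 0) 0))
            = enc (x * (fbar (FreeGroup.of i))⁻¹) := by
          rw [cond_false, hgiv i, hIv _ (enc_lt _), dec_enc,
            hMT _ (enc_lt _) _ (enc_lt _), dec_enc, dec_enc]
        rw [hstep, ih, hmkmul, map_mul]
        have : FreeGroup.mk [(i, false)] = (FreeGroup.of i : FreeGroup (Fin n))⁻¹ := by
          rw [show (FreeGroup.of i : FreeGroup (Fin n)) = FreeGroup.mk [(i, true)] from rfl,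
            FreeGroup.inv_mk]
          rfl
        rw [this, map_inv, mul_assoc]
      · have hstep : MT T (enc x) (cond true (g.getD (i : ℕ) 0) (I.getD (g.getD (i : ℕ) 0) 0))
            = enc (x * fbar (FreeGroup.of i)) := by
          rw [cond_true, hgiv i, hMT _ (enc_lt _) _ (enc_lt _), dec_enc, dec_enc]
        rw [hstep, ih, hmkmul, map_mul]
        have : FreeGroup.mk [(i, true)] = (FreeGroup.of i : FreeGroup (Fin n)) := rfl
        rw [this, mul_assoc]
  have hEV : ∀ L : Word n, EV n T I g e L = enc (fbar (FreeGroup.mk L)) := by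
    intro L
    have := hfold L 1
    rw [one_mul] at this
    exact this
  refine ⟨(m, T, I, e, g), ?_⟩
  simp only [checkB, Bool.and_eq_true, ball_iff, decide_eq_true_iff, Bool.not_eq_true',
    decide_eq_false_iff_not]
  refine ⟨⟨⟨⟨⟨⟨⟨enc_lt 1, ?_⟩, ?_⟩, ?_⟩, ?_⟩, ?_⟩, ?_⟩, ?_⟩
  · intro a ha b hb
    rw [hMT _ ha _ hb]
    exact enc_lt _
  · intro a ha b hb c hc
    rw [hMT _ ha _ hb, hMT _ (enc_lt _) _ hc, hMT _ hb _ hc, hMT _ ha _ (enc_lt _),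
      dec_enc, dec_enc, mul_assoc]
  · intro a ha
    constructor
    · rw [hMT _ (enc_lt _) _ ha, dec_enc, one_mul, enc_dec _ ha]
    · rw [hMT _ ha _ (enc_lt _), dec_enc, mul_one, enc_dec _ ha]
  · intro a ha
    refine ⟨⟨?_, ?_⟩, ?_⟩
    · rw [hIv _ ha]; exact enc_lt _
    · rw [hIv _ ha, hMT _ (enc_lt _) _ ha, dec_enc, inv_mul_cancel]
    · rw [hIv _ ha, hMT _ ha _ (enc_lt _), dec_enc, mul_inv_cancel]
  · intro i hi
    rw [hgi _ hi]
    exact enc_lt _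
  · intro j hj
    rw [hEV]
    have hmem : FreeGroup.mk (R.getD j []) ∈ relsOf R := by
      refine ⟨R.getD j [], ?_, rfl⟩
      rw [List.getD_eq_getElem _ _ hj]
      exact List.getElem_mem _
    have : PresentedGroup.mk (relsOf R) (FreeGroup.mk (R.getD j [])) = 1 :=
      (QuotientGroup.eq_one_iff _).mpr (Subgroup.subset_normalClosure hmem)
    rw [hfbar, MonoidHom.comp_apply, this, map_one]
  · intro u hu heq
    rw [hEV, hEV] at heq
    have hfw : fbar (FreeGroup.mk p.1) = f (wordElt R p.1) := rfl
    have hfv : fbar (FreeGroup.mk p.2) = f (wordElt R p.2) := rfl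
    rw [hfw, hfv, hMT _ (enc_lt _) _ hu, hMT _ hu _ (enc_lt _), dec_enc, dec_enc] at heq
    have hkey : f (wordElt R p.1) * dec u = dec u * f (wordElt R p.2) := enc_inj heq
    apply hQ
    apply isConj_iff.mpr
    refine ⟨(dec u)⁻¹, ?_⟩
    rw [inv_inv, mul_assoc, hkey, ← mul_assoc, inv_mul_cancel, one_mul]


end
end ConjSep

/-- If the finitely presented group `PresentedGroup (relsOf R)` is conjugacy separable, then
the conjugacy problem for this presentation is decidable. -/
theorem conjugacy_problem_solvable_of_conjugacy_separable
    (n : ℕ) (R : List (List (Fin n × Bool)))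
    (hconj : ∀ g h : PresentedGroup (relsOf R), ¬ IsConj g h →
      ∃ (Q : Type) (_ : Group Q) (_ : Finite Q) (f : PresentedGroup (relsOf R) →* Q),
        ¬ IsConj (f g) (f h)) :
    ComputablePred fun p : List (Fin n × Bool) × List (Fin n × Bool) =>
      IsConj (wordElt R p.1) (wordElt R p.2) := by
  classical
  rw [ComputablePred.computable_iff_re_compl_re']
  constructor
  · exact ConjSep.rePred_of_exists (ConjSep.checkA n R) (ConjSep.primrec_checkA n R).to_comp
      (ConjSep.checkA_iff n R)
  · apply ConjSep.rePred_of_exists (ConjSep.checkB n R) (ConjSep.primrec_checkB n R).to_comp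
    intro p
    constructor
    · intro hnc
      exact ConjSep.checkB_complete n R p (hconj _ _ hnc)
    · rintro ⟨d, hd⟩
      exact ConjSep.checkB_sound n R p d hd
end

section
/- Let n : ℕ and let R be a finite list of words in n generators, and let G be the finitely presented group PresentedGroup S, where S ⊆ FreeGroup (Fin n) is the set of elements determined by R. If G is subgroup separable, then the uniform membership problem for this presentation is decidable: the predicate on pairs (X, w), where X is a list of words and w is a word, asserting that the element of G represented by w lies in Subgroup.closure of the set of elements of G represented by the words in X, satisfies ComputablePred. -/
/-- A subset `T` of a group `G` is separable if every `g ∉ T` can be separated from `T`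
in some finite quotient. -/
def SubsetSeparable (G : Type) [Group G] (T : Set G) : Prop :=
  ∀ g ∉ T, ∃ (Q : Type) (_ : Group Q) (_ : Finite Q) (f : G →* Q), f g ∉ f '' T

/-- A group is subgroup separable if every finitely generated subgroup is separable. -/
def SubgroupSeparable (G : Type) [Group G] : Prop :=
  ∀ H : Subgroup G, H.FG → SubsetSeparable G (H : Set G)

namespace MPS

abbrev Word (n : ℕ) := List (Fin n × Bool)

variable {n : ℕ}

def sgn (b : Bool) (w : Word n) : Word n := bif b then w else FreeGroup.invRev w

def vWord (X : List (Word n)) (c : List (ℕ × Bool)) : Word n :=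
  (c.map fun ib => sgn ib.2 (X.getD ib.1 [])).flatten

def rWord (R : List (Word n)) (d : List (Word n × ℕ × Bool)) : Word n :=
  (d.map fun t => t.1 ++ sgn t.2.2 (R.getD t.2.1 []) ++ FreeGroup.invRev t.1).flatten

def checkYes (R : List (Word n)) (a : List (Word n) × Word n)
    (c : List (ℕ × Bool) × List (Word n × ℕ × Bool)) : Bool :=
  decide (FreeGroup.reduce a.2 = FreeGroup.reduce (rWord R c.2 ++ vWord a.1 c.1))

theorem mk_eq_mk_iff {L₁ L₂ : Word n} :
    FreeGroup.mk L₁ = FreeGroup.mk L₂ ↔ FreeGroup.reduce L₁ = FreeGroup.reduce L₂ := by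
  rw [← FreeGroup.toWord_inj, FreeGroup.toWord_mk, FreeGroup.toWord_mk]

theorem mk_nil : FreeGroup.mk ([] : Word n) = 1 := FreeGroup.one_eq_mk.symm

theorem mk_sgn_t (w : Word n) : FreeGroup.mk (sgn true w) = FreeGroup.mk w := rfl

theorem mk_sgn_f (w : Word n) : FreeGroup.mk (sgn false w) = (FreeGroup.mk w)⁻¹ := by
  simp [sgn, FreeGroup.inv_mk]

theorem mkh_one_iff {R : List (Word n)} (x : FreeGroup (Fin n)) :
    PresentedGroup.mk (relsOf R) x = 1 ↔ x ∈ Subgroup.normalClosure (relsOf R) :=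
  QuotientGroup.eq_one_iff x

theorem mkh_rWord (R : List (Word n)) (d : List (Word n × ℕ × Bool)) :
    PresentedGroup.mk (relsOf R) (FreeGroup.mk (rWord R d)) = 1 := by
  induction d with
  | nil => rw [show rWord R [] = [] from rfl, mk_nil, map_one]
  | cons t d ih =>
    have : rWord R (t :: d) = (t.1 ++ sgn t.2.2 (R.getD t.2.1 []) ++ FreeGroup.invRev t.1)
        ++ rWord R d := by simp [rWord]
    rw [this, ← FreeGroup.mul_mk, map_mul, ih, mul_one, ← FreeGroup.mul_mk, ← FreeGroup.mul_mk,
      map_mul, map_mul]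
    have hrel : PresentedGroup.mk (relsOf R) (FreeGroup.mk (sgn t.2.2 (R.getD t.2.1 []))) = 1 := by
      have h1 : PresentedGroup.mk (relsOf R) (FreeGroup.mk (R.getD t.2.1 [])) = 1 := by
        rcases lt_or_ge t.2.1 R.length with h | h
        · rw [mkh_one_iff]
          exact Subgroup.subset_normalClosure ⟨_, List.getD_eq_getElem R [] h ▸
            List.getElem_mem h, rfl⟩
        · rw [List.getD_eq_default R [] h, mk_nil, map_one]
      cases hb : t.2.2
      · rw [mk_sgn_f, map_inv, h1, inv_one]
      · rw [mk_sgn_t, h1]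
    rw [hrel, mul_one]
    rw [← map_mul, ← FreeGroup.inv_mk, mul_inv_cancel, map_one]

theorem mkh_vWord_mem (R X : List (Word n)) (c : List (ℕ × Bool)) :
    PresentedGroup.mk (relsOf R) (FreeGroup.mk (vWord X c)) ∈
      Subgroup.closure {x | ∃ u ∈ X, x = wordElt R u} := by
  induction c with
  | nil =>
    rw [show vWord X [] = [] from rfl, mk_nil, map_one]
    exact Subgroup.one_mem _
  | cons ib c ih =>
    have : vWord X (ib :: c) = sgn ib.2 (X.getD ib.1 []) ++ vWord X c := by simp [vWord]
    rw [this, ← FreeGroup.mul_mk, map_mul]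
    refine mul_mem ?_ ih
    have hbase : PresentedGroup.mk (relsOf R) (FreeGroup.mk (X.getD ib.1 [])) ∈
        Subgroup.closure {x | ∃ u ∈ X, x = wordElt R u} := by
      rcases lt_or_ge ib.1 X.length with h | h
      · exact Subgroup.subset_closure ⟨_, List.getD_eq_getElem X [] h ▸ List.getElem_mem h, rfl⟩
      · rw [List.getD_eq_default X [] h, mk_nil, map_one]
        exact Subgroup.one_mem _
    cases hb : ib.2
    · rw [mk_sgn_f, map_inv]; exact inv_mem hbase
    · rw [mk_sgn_t]; exact hbase

theorem checkYes_sound (R : List (Word n)) (a : List (Word n) × Word n)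
    (c : List (ℕ × Bool) × List (Word n × ℕ × Bool)) (h : checkYes R a c = true) :
    wordElt R a.2 ∈ Subgroup.closure {x | ∃ u ∈ a.1, x = wordElt R u} := by
  have hred : FreeGroup.reduce a.2 = FreeGroup.reduce (rWord R c.2 ++ vWord a.1 c.1) :=
    of_decide_eq_true h
  have hmk : FreeGroup.mk a.2 = FreeGroup.mk (rWord R c.2 ++ vWord a.1 c.1) :=
    mk_eq_mk_iff.mpr hred
  have : wordElt R a.2 = PresentedGroup.mk (relsOf R) (FreeGroup.mk (vWord a.1 c.1)) := by
    rw [wordElt, hmk, ← FreeGroup.mul_mk, map_mul, mkh_rWord, one_mul]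
  rw [this]
  exact mkh_vWord_mem R a.1 c.1

theorem exists_c (R X : List (Word n)) (l : List (PresentedGroup (relsOf R)))
    (hl : ∀ y ∈ l, y ∈ {x | ∃ u ∈ X, x = wordElt R u} ∪ {x | ∃ u ∈ X, x = wordElt R u}⁻¹) :
    ∃ c, PresentedGroup.mk (relsOf R) (FreeGroup.mk (vWord X c)) = l.prod := by
  induction l with
  | nil => exact ⟨[], by rw [show vWord X [] = [] from rfl, mk_nil, map_one, List.prod_nil]⟩
  | cons y l ih =>
    obtain ⟨c', hc'⟩ := ih fun y hy => hl y (List.mem_cons_of_mem _ hy)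
    rcases hl y (List.mem_cons_self) with ⟨u, hu, rfl⟩ | hy
    · obtain ⟨i, hlt, hi⟩ := List.mem_iff_getElem.mp hu
      refine ⟨(i, true) :: c', ?_⟩
      have : vWord X ((i, true) :: c') = sgn true (X.getD i []) ++ vWord X c' := by simp [vWord]
      rw [this, ← FreeGroup.mul_mk, map_mul, hc', List.prod_cons, mk_sgn_t,
        List.getD_eq_getElem X [] hlt, hi]
      rfl
    · rw [Set.mem_inv] at hy
      obtain ⟨u, hu, hyu⟩ := hy
      obtain ⟨i, hlt, hi⟩ := List.mem_iff_getElem.mp hu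
      refine ⟨(i, false) :: c', ?_⟩
      have : vWord X ((i, false) :: c') = sgn false (X.getD i []) ++ vWord X c' := by simp [vWord]
      rw [this, ← FreeGroup.mul_mk, map_mul, hc', List.prod_cons, mk_sgn_f, map_inv,
        List.getD_eq_getElem X [] hlt, hi]
      rw [show PresentedGroup.mk (relsOf R) (FreeGroup.mk u) = wordElt R u from rfl, ← hyu,
        inv_inv]

theorem mk_entry (R : List (Word n)) (cg : FreeGroup (Fin n)) (j : ℕ) (ε : Bool) :
    FreeGroup.mk (cg.toWord ++ sgn ε (R.getD j []) ++ FreeGroup.invRev cg.toWord)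
      = cg * FreeGroup.mk (sgn ε (R.getD j [])) * cg⁻¹ := by
  rw [← FreeGroup.mul_mk, ← FreeGroup.mul_mk, ← FreeGroup.inv_mk, FreeGroup.mk_toWord]

theorem exists_d (R : List (Word n)) (l : List (FreeGroup (Fin n)))
    (hl : ∀ y ∈ l, y ∈ Group.conjugatesOfSet (relsOf R) ∪ (Group.conjugatesOfSet (relsOf R))⁻¹) :
    ∃ d, FreeGroup.mk (rWord R d) = l.prod := by
  induction l with
  | nil => exact ⟨[], by rw [show rWord R [] = [] from rfl, mk_nil, List.prod_nil]⟩
  | cons y l ih =>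
    obtain ⟨d', hd'⟩ := ih fun y hy => hl y (List.mem_cons_of_mem _ hy)
    have hsplit : ∀ t : Word n × ℕ × Bool, rWord R (t :: d') =
        (t.1 ++ sgn t.2.2 (R.getD t.2.1 []) ++ FreeGroup.invRev t.1) ++ rWord R d' := by
      intro t; simp [rWord]
    rcases hl y (List.mem_cons_self) with hy | hy
    · obtain ⟨r, hrS, hconj⟩ := Group.mem_conjugatesOfSet_iff.mp hy
      obtain ⟨r', hr'R, rfl⟩ := hrS
      obtain ⟨cg, hcg⟩ := isConj_iff.mp hconj
      obtain ⟨j, hlt, hj⟩ := List.mem_iff_getElem.mp hr'R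
      refine ⟨(cg.toWord, j, true) :: d', ?_⟩
      rw [hsplit, ← FreeGroup.mul_mk, hd', List.prod_cons, mk_entry, mk_sgn_t,
        List.getD_eq_getElem R [] hlt, hj, hcg]
    · rw [Set.mem_inv] at hy
      obtain ⟨r, hrS, hconj⟩ := Group.mem_conjugatesOfSet_iff.mp hy
      obtain ⟨r', hr'R, rfl⟩ := hrS
      obtain ⟨cg, hcg⟩ := isConj_iff.mp hconj
      obtain ⟨j, hlt, hj⟩ := List.mem_iff_getElem.mp hr'R
      refine ⟨(cg.toWord, j, false) :: d', ?_⟩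
      rw [hsplit, ← FreeGroup.mul_mk, hd', List.prod_cons, mk_entry, mk_sgn_f,
        List.getD_eq_getElem R [] hlt, hj]
      have : y = cg * (FreeGroup.mk r')⁻¹ * cg⁻¹ := by
        have := congrArg (·⁻¹) hcg
        simpa [mul_assoc] using this.symm
      rw [this]

theorem checkYes_complete (R : List (Word n)) (a : List (Word n) × Word n)
    (h : wordElt R a.2 ∈ Subgroup.closure {x | ∃ u ∈ a.1, x = wordElt R u}) :
    ∃ c, checkYes R a c = true := by
  have h1 : wordElt R a.2 ∈ Submonoid.closure
      ({x | ∃ u ∈ a.1, x = wordElt R u} ∪ {x | ∃ u ∈ a.1, x = wordElt R u}⁻¹) := by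
    rw [← Subgroup.closure_toSubmonoid]; exact h
  obtain ⟨l, hl, hprod⟩ := Submonoid.exists_list_of_mem_closure h1
  obtain ⟨c, hc⟩ := exists_c R a.1 l hl
  set z := FreeGroup.mk a.2 * (FreeGroup.mk (vWord a.1 c))⁻¹ with hzdef
  have hz1 : PresentedGroup.mk (relsOf R) z = 1 := by
    rw [hzdef, map_mul, map_inv, hc, hprod]
    exact mul_inv_cancel _
  have hzN : z ∈ Subgroup.normalClosure (relsOf R) := (mkh_one_iff z).mp hz1
  have hzC : z ∈ Submonoid.closure (Group.conjugatesOfSet (relsOf R) ∪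
      (Group.conjugatesOfSet (relsOf R))⁻¹) := by
    rw [← Subgroup.closure_toSubmonoid]; exact hzN
  obtain ⟨l₂, hl₂, hprod₂⟩ := Submonoid.exists_list_of_mem_closure hzC
  obtain ⟨d, hd⟩ := exists_d R l₂ hl₂
  refine ⟨(c, d), decide_eq_true ?_⟩
  rw [← mk_eq_mk_iff, ← FreeGroup.mul_mk, hd, hprod₂, hzdef, inv_mul_cancel_right]
-- Part B: finite quotient certificates

def lookup (t : List ℕ) (j : ℕ) : ℕ := t.getD j 0

def compT (m : ℕ) (s t : List ℕ) : List ℕ := (List.range m).map fun j => lookup s (lookup t j)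

def invT (m : ℕ) (t : List ℕ) : List ℕ :=
  (List.range m).map fun j =>
    (List.range m).foldr (fun i acc => if lookup t i = j then i else acc) 0

def memB (x : List ℕ) (C : List (List ℕ)) : Bool := decide (x ∈ C)

def allB {β : Type} (f : β → Bool) (l : List β) : Bool := l.foldr (fun x b => f x && b) true

theorem memB_iff {x : List ℕ} {C : List (List ℕ)} : memB x C = true ↔ x ∈ C := by simp [memB]

theorem allB_iff {β : Type} {f : β → Bool} {l : List β} :
    allB f l = true ↔ ∀ x ∈ l, f x = true := by
  induction l with
  | nil => simp [allB]
  | cons x l ih => simp [allB, Bool.and_eq_true] at *; tauto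

def isPermB (m : ℕ) (t : List ℕ) : Bool :=
  decide (t.length = m) && allB (fun j => decide (j ∈ t)) (List.range m)

def gT (m : ℕ) (g : List (List ℕ)) (l : Fin n × Bool) : List ℕ :=
  bif l.2 then g.getD (l.1 : ℕ) (List.range m) else invT m (g.getD (l.1 : ℕ) (List.range m))

def evalW (m : ℕ) (g : List (List ℕ)) (w : Word n) : List ℕ :=
  w.foldr (fun l acc => compT m (gT m g l) acc) (List.range m)

def checkNo (R : List (Word n)) (a : List (Word n) × Word n)
    (c : ℕ × List (List ℕ) × List (List ℕ)) : Bool :=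
  allB (isPermB c.1) c.2.1 && allB (isPermB c.1) c.2.2 &&
  allB (fun r => decide (evalW c.1 c.2.1 r = List.range c.1)) R &&
  memB (List.range c.1) c.2.2 &&
  allB (fun s => allB (fun t => memB (compT c.1 s t) c.2.2) c.2.2) c.2.2 &&
  allB (fun u => memB (evalW c.1 c.2.1 u) c.2.2) a.1 &&
  !(memB (evalW c.1 c.2.1 a.2) c.2.2)

/-! table lemmas -/

def tableOf {m : ℕ} (σ : Equiv.Perm (Fin m)) : List ℕ := (List.finRange m).map fun j => (σ j : ℕ)

theorem length_tableOf {m : ℕ} (σ : Equiv.Perm (Fin m)) : (tableOf σ).length = m := by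
  simp [tableOf]

theorem lookup_tableOf {m : ℕ} (σ : Equiv.Perm (Fin m)) {j : ℕ} (h : j < m) :
    lookup (tableOf σ) j = (σ ⟨j, h⟩ : ℕ) := by
  rw [lookup, List.getD_eq_getElem _ _ (by simpa [tableOf] using h)]
  simp [tableOf, List.getElem_finRange, Fin.cast]

theorem tableOf_injective {m : ℕ} {σ τ : Equiv.Perm (Fin m)}
    (h : tableOf σ = tableOf τ) : σ = τ := by
  ext j
  have := congrArg (fun t => lookup t (j : ℕ)) h
  simpa [lookup_tableOf σ j.isLt, lookup_tableOf τ j.isLt] using this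

theorem isPermB_tableOf {m : ℕ} (σ : Equiv.Perm (Fin m)) : isPermB m (tableOf σ) = true := by
  rw [isPermB, Bool.and_eq_true, allB_iff]
  refine ⟨decide_eq_true (length_tableOf σ), fun j hj => decide_eq_true ?_⟩
  rw [List.mem_range] at hj
  exact List.mem_map.mpr ⟨σ⁻¹ ⟨j, hj⟩, List.mem_finRange _, by simp⟩

theorem tableOf_one {m : ℕ} : tableOf (1 : Equiv.Perm (Fin m)) = List.range m := by
  apply List.ext_getElem (by simp [tableOf])
  intro i h1 h2
  simp [tableOf, List.getElem_finRange, Fin.cast]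

theorem compT_tableOf {m : ℕ} (σ τ : Equiv.Perm (Fin m)) :
    compT m (tableOf σ) (tableOf τ) = tableOf (σ * τ) := by
  apply List.ext_getElem (by simp [compT, tableOf])
  intro i h1 h2
  rw [show (compT m (tableOf σ) (tableOf τ)).length = m by simp [compT]] at h1
  simp only [compT, List.getElem_map, List.getElem_range]
  rw [lookup_tableOf τ h1, lookup_tableOf σ (τ ⟨i, h1⟩).isLt]
  simp [tableOf, List.getElem_finRange, Fin.cast]

theorem foldr_find_unique {f : ℕ → ℕ} {j i₀ d : ℕ} (l : List ℕ) (h0 : i₀ ∈ l) (hf : f i₀ = j)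
    (huniq : ∀ i ∈ l, f i = j → i = i₀) :
    l.foldr (fun i acc => if f i = j then i else acc) d = i₀ := by
  induction l with
  | nil => cases h0
  | cons x l ih =>
    rw [List.foldr_cons]
    by_cases hx : f x = j
    · rw [if_pos hx]; exact huniq x (List.mem_cons_self) hx
    · rw [if_neg hx]
      have h0' : i₀ ∈ l := by
        rcases List.mem_cons.mp h0 with rfl | h; · exact absurd hf hx
        · exact h
      exact ih h0' fun i hi => huniq i (List.mem_cons_of_mem _ hi)

theorem invT_tableOf {m : ℕ} (σ : Equiv.Perm (Fin m)) :
    invT m (tableOf σ) = tableOf σ⁻¹ := by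
  apply List.ext_getElem (by simp [invT, tableOf])
  intro j h1 h2
  rw [show (invT m (tableOf σ)).length = m by simp [invT]] at h1
  simp only [invT, List.getElem_map, List.getElem_range]
  have : (List.range m).foldr
      (fun i acc => if lookup (tableOf σ) i = j then i else acc) 0 = ((σ⁻¹ ⟨j, h1⟩ : Fin m) : ℕ) := by
    apply foldr_find_unique
    · exact List.mem_range.mpr (σ⁻¹ ⟨j, h1⟩).isLt
    · rw [lookup_tableOf σ (σ⁻¹ ⟨j, h1⟩).isLt]
      simp
    · intro i hi hij
      rw [List.mem_range] at hi
      rw [lookup_tableOf σ hi] at hij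
      have : σ ⟨i, hi⟩ = ⟨j, h1⟩ := Fin.ext hij
      have := congrArg (⇑σ⁻¹) this
      rw [← Equiv.Perm.mul_apply, inv_mul_cancel, Equiv.Perm.one_apply] at this
      exact congrArg Fin.val this
  rw [this]
  simp [tableOf, List.getElem_finRange, Fin.cast]

theorem exists_perm_of_isPermB {m : ℕ} {t : List ℕ} (h : isPermB m t = true) :
    ∃ σ : Equiv.Perm (Fin m), tableOf σ = t := by
  rw [isPermB, Bool.and_eq_true, allB_iff] at h
  obtain ⟨hlen, hall⟩ := h
  rw [decide_eq_true_eq] at hlen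
  have hsub : List.range m ⊆ t := fun j hj => of_decide_eq_true (hall j hj)
  have hperm : (List.range m).Perm t :=
    ((List.nodup_range (n := m)).subperm hsub).perm_of_length_le (by rw [hlen, List.length_range])
  have hnodup : t.Nodup := hperm.nodup (List.nodup_range (n := m))
  have hmem : ∀ x ∈ t, x < m := fun x hx => List.mem_range.mp (hperm.mem_iff.mpr hx)
  have hf : ∀ i : Fin m, t.getD (i : ℕ) 0 < m := by
    intro i
    have hi : (i : ℕ) < t.length := by rw [hlen]; exact i.isLt
    rw [List.getD_eq_getElem _ _ hi]
    exact hmem _ (List.getElem_mem hi)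
  set f : Fin m → Fin m := fun i => ⟨t.getD (i : ℕ) 0, hf i⟩ with hfdef
  have hinj : Function.Injective f := by
    intro i j hij
    have hi : (i : ℕ) < t.length := by rw [hlen]; exact i.isLt
    have hj : (j : ℕ) < t.length := by rw [hlen]; exact j.isLt
    have : t[(i : ℕ)] = t[(j : ℕ)] := by
      have hv := congrArg Fin.val hij
      simp only [hfdef] at hv
      rwa [List.getD_eq_getElem _ _ hi, List.getD_eq_getElem _ _ hj] at hv
    exact Fin.ext ((hnodup.getElem_inj_iff).mp this)
  refine ⟨Equiv.ofBijective f (Finite.injective_iff_bijective.mp hinj), ?_⟩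
  apply List.ext_getElem (by rw [length_tableOf, hlen])
  intro i h1 h2
  rw [length_tableOf] at h1
  have : (Equiv.ofBijective f (Finite.injective_iff_bijective.mp hinj)) (⟨i, h1⟩ : Fin m) =
      f ⟨i, h1⟩ := rfl
  simp only [tableOf, List.getElem_map, List.getElem_finRange, Fin.cast, this, hfdef]
  exact List.getD_eq_getElem _ _ (by rw [hlen]; exact h1)

noncomputable def toPerm (m : ℕ) (t : List ℕ) : Equiv.Perm (Fin m) :=
  if h : ∃ σ : Equiv.Perm (Fin m), tableOf σ = t then h.choose else 1

theorem tableOf_toPerm {m : ℕ} {t : List ℕ} (h : isPermB m t = true) :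
    tableOf (toPerm m t) = t := by
  rw [toPerm, dif_pos (exists_perm_of_isPermB h)]
  exact (exists_perm_of_isPermB h).choose_spec

theorem toPerm_tableOf {m : ℕ} (σ : Equiv.Perm (Fin m)) : toPerm m (tableOf σ) = σ := by
  apply tableOf_injective
  exact tableOf_toPerm (isPermB_tableOf σ)
/-! evaluation lemma -/

theorem valid_getD {m : ℕ} {g : List (List ℕ)} (hg : allB (isPermB m) g = true) (x : ℕ) :
    isPermB m (g.getD x (List.range m)) = true := by
  rcases lt_or_ge x g.length with h | h
  · rw [List.getD_eq_getElem _ _ h]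
    exact allB_iff.mp hg _ (List.getElem_mem h)
  · rw [List.getD_eq_default _ _ h, ← tableOf_one]
    exact isPermB_tableOf 1

theorem mk_single_t (x : Fin n) : FreeGroup.mk [(x, true)] = FreeGroup.of x := rfl

theorem mk_single_f (x : Fin n) : FreeGroup.mk [(x, false)] = (FreeGroup.of x)⁻¹ := by
  rw [← mk_single_t, FreeGroup.inv_mk]
  rfl

theorem invT_valid {m : ℕ} {t : List ℕ} (h : isPermB m t = true) :
    invT m t = tableOf (toPerm m t)⁻¹ := by
  conv_lhs => rw [← tableOf_toPerm h]
  rw [invT_tableOf]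

theorem evalW_eq {m : ℕ} {g : List (List ℕ)} (hg : allB (isPermB m) g = true) (w : Word n) :
    evalW m g w =
      tableOf (FreeGroup.lift (fun x : Fin n => toPerm m (g.getD (x : ℕ) (List.range m)))
        (FreeGroup.mk w)) := by
  induction w with
  | nil => rw [show evalW m g [] = List.range m from rfl, mk_nil, map_one, tableOf_one]
  | cons l w ih =>
    obtain ⟨x, b⟩ := l
    have hmul : FreeGroup.mk ((x, b) :: w) = FreeGroup.mk [(x, b)] * FreeGroup.mk w := by
      rw [FreeGroup.mul_mk]; rfl
    have hstep : evalW m g ((x, b) :: w) = compT m (gT m g (x, b)) (evalW m g w) := rfl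
    rw [hstep, ih, hmul, map_mul]
    cases b
    · rw [mk_single_f, map_inv, FreeGroup.lift_apply_of]
      have : gT m g (x, false) = tableOf (toPerm m (g.getD (x : ℕ) (List.range m)))⁻¹ :=
        invT_valid (valid_getD hg (x : ℕ))
      rw [this, compT_tableOf]
    · rw [mk_single_t, FreeGroup.lift_apply_of]
      have : gT m g (x, true) = tableOf (toPerm m (g.getD (x : ℕ) (List.range m))) :=
        (tableOf_toPerm (valid_getD hg (x : ℕ))).symm
      rw [this, compT_tableOf]

/-! soundness of checkNo -/

theorem checkNo_sound (R : List (Word n)) (a : List (Word n) × Word n)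
    (c : ℕ × List (List ℕ) × List (List ℕ)) (h : checkNo R a c = true) :
    wordElt R a.2 ∉ Subgroup.closure {x | ∃ u ∈ a.1, x = wordElt R u} := by
  obtain ⟨m, g, C⟩ := c
  rw [checkNo] at h
  simp only [Bool.and_eq_true, Bool.not_eq_true'] at h
  obtain ⟨⟨⟨⟨⟨⟨h1, h2⟩, h3⟩, h4⟩, h5⟩, h6⟩, h7⟩ := h
  set fgen : Fin n → Equiv.Perm (Fin m) :=
    fun x => toPerm m (g.getD (x : ℕ) (List.range m)) with hfgen
  -- the subgroup of permutations whose table is in C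
  have hmulC : ∀ σ τ : Equiv.Perm (Fin m), tableOf σ ∈ C → tableOf τ ∈ C →
      tableOf (σ * τ) ∈ C := by
    intro σ τ hσ hτ
    rw [← compT_tableOf]
    exact memB_iff.mp (allB_iff.mp (allB_iff.mp h5 _ hσ) _ hτ)
  have honeC : tableOf (1 : Equiv.Perm (Fin m)) ∈ C := by rw [tableOf_one]; exact memB_iff.mp h4
  have hpowC : ∀ (σ : Equiv.Perm (Fin m)), tableOf σ ∈ C → ∀ k, tableOf (σ ^ (k + 1)) ∈ C := by
    intro σ hσ k
    induction k with
    | zero => rwa [pow_one]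
    | succ k ih => rw [pow_succ]; exact hmulC _ _ ih hσ
  set HC : Subgroup (Equiv.Perm (Fin m)) :=
    { carrier := {σ | tableOf σ ∈ C}
      one_mem' := honeC
      mul_mem' := fun hσ hτ => hmulC _ _ hσ hτ
      inv_mem' := by
        intro σ hσ
        obtain ⟨k, hk⟩ := Nat.exists_eq_succ_of_ne_zero (orderOf_pos σ).ne'
        have hinv : σ⁻¹ = σ ^ k := by
          apply inv_eq_of_mul_eq_one_right
          rw [← pow_succ', show k + 1 = orderOf σ from hk.symm]
          exact pow_orderOf_eq_one σ
        rcases Nat.eq_zero_or_pos k with rfl | hkpos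
        · rw [hinv, pow_zero]; exact honeC
        · obtain ⟨k', hk'⟩ := Nat.exists_eq_succ_of_ne_zero hkpos.ne'
          rw [hinv, hk']
          exact hpowC σ hσ k' } with hHC
  have hrel : ∀ r ∈ relsOf R, FreeGroup.lift fgen r = 1 := by
    rintro r ⟨r', hr', rfl⟩
    apply tableOf_injective
    rw [tableOf_one, ← evalW_eq h1]
    exact of_decide_eq_true (allB_iff.mp h3 _ hr')
  set φ := PresentedGroup.toGroup hrel with hφdef
  have hφ : ∀ w : Word n, φ (wordElt R w) = FreeGroup.lift fgen (FreeGroup.mk w) := fun w => rfl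
  intro hmem
  have himg : φ (wordElt R a.2) ∈ Subgroup.map φ
      (Subgroup.closure {x | ∃ u ∈ a.1, x = wordElt R u}) :=
    Subgroup.mem_map_of_mem φ hmem
  rw [MonoidHom.map_closure] at himg
  have hle : Subgroup.closure (φ '' {x | ∃ u ∈ a.1, x = wordElt R u}) ≤ HC := by
    apply (Subgroup.closure_le _).mpr
    rintro _ ⟨_, ⟨u, hu, rfl⟩, rfl⟩
    show tableOf (φ (wordElt R u)) ∈ C
    rw [hφ, ← evalW_eq h1]
    exact memB_iff.mp (allB_iff.mp h6 _ hu)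
  have : tableOf (φ (wordElt R a.2)) ∈ C := hle himg
  rw [hφ, ← evalW_eq h1] at this
  rw [← memB_iff] at this
  rw [h7] at this
  cases this
/-! completeness of checkNo -/

theorem checkNo_complete (R : List (Word n)) (a : List (Word n) × Word n)
    (hsep : SubgroupSeparable (PresentedGroup (relsOf R)))
    (h : wordElt R a.2 ∉ Subgroup.closure {x | ∃ u ∈ a.1, x = wordElt R u}) :
    ∃ c, checkNo R a c = true := by
  classical
  set S : Set (PresentedGroup (relsOf R)) := {x | ∃ u ∈ a.1, x = wordElt R u} with hS
  set H := Subgroup.closure S with hHdef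
  have hSfin : S.Finite := by
    have : S = wordElt R '' {u | u ∈ a.1} := by
      ext x; simp [hS, Set.mem_image, eq_comm]
    rw [this]
    exact (a.1.finite_toSet).image _
  have hFG : H.FG := (Subgroup.fg_iff H).mpr ⟨S, rfl, hSfin⟩
  obtain ⟨Q, _, _, f, hf⟩ := hsep H hFG _ h
  have : Fintype Q := Fintype.ofFinite Q
  set m := Fintype.card Q with hm
  set eQ : Q ≃ Fin m := Fintype.equivFin Q with heQ
  set κ : Equiv.Perm Q →* Equiv.Perm (Fin m) :=
    { toFun := fun σ => (eQ.symm.trans σ).trans eQ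
      map_one' := by ext x; simp
      map_mul' := by intro σ τ; ext x; simp } with hκ
  have hκinj : Function.Injective κ := by
    intro σ τ hst
    ext q
    have := DFunLike.congr_fun hst (eQ q)
    simp [hκ] at this
    exact this
  have hχinj : Function.Injective (MulAction.toPermHom Q Q) := by
    intro q q' hqq
    have := DFunLike.congr_fun hqq 1
    simpa using this
  set ψ : PresentedGroup (relsOf R) →* Equiv.Perm (Fin m) :=
    κ.comp ((MulAction.toPermHom Q Q).comp f) with hψ
  have hψspec : ∀ x, ψ x ∈ ψ '' (H : Set _) → f x ∈ f '' (H : Set _) := by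
    rintro x ⟨y, hy, hxy⟩
    exact ⟨y, hy, hχinj (hκinj hxy)⟩
  set gensL : List (List ℕ) :=
    (List.finRange n).map fun x => tableOf (ψ (PresentedGroup.of x)) with hgensL
  have hgetD : ∀ x : Fin n, gensL.getD (x : ℕ) (List.range m) =
      tableOf (ψ (PresentedGroup.of x)) := by
    intro x
    have hx : (x : ℕ) < gensL.length := by simp [hgensL, x.isLt]
    rw [List.getD_eq_getElem _ _ hx]
    simp [hgensL, List.getElem_finRange, Fin.cast]
  have hgvalid : allB (isPermB m) gensL = true := by
    rw [allB_iff]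
    intro t ht
    obtain ⟨x, _, rfl⟩ := List.mem_map.mp ht
    exact isPermB_tableOf _
  have hfgen : ∀ x : Fin n, toPerm m (gensL.getD (x : ℕ) (List.range m)) =
      ψ (PresentedGroup.of x) := by
    intro x
    rw [hgetD, toPerm_tableOf]
  have hlift : FreeGroup.lift (fun x : Fin n => toPerm m (gensL.getD (x : ℕ) (List.range m)))
      = ψ.comp (PresentedGroup.mk (relsOf R)) := by
    apply FreeGroup.ext_hom
    intro x
    rw [FreeGroup.lift_apply_of, hfgen]
    rfl
  have hevalW : ∀ w : Word n, evalW m gensL w = tableOf (ψ (wordElt R w)) := by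
    intro w
    rw [evalW_eq hgvalid, hlift]
    rfl
  set Cset : Set (List ℕ) := tableOf '' (ψ '' (H : Set _)) with hCset
  set C : List (List ℕ) := Cset.toFinite.toFinset.toList with hC
  have hmemC : ∀ x, x ∈ C ↔ ∃ σ ∈ ψ '' (H : Set _), tableOf σ = x := by
    intro x
    rw [hC, Finset.mem_toList, Set.Finite.mem_toFinset]
    exact Iff.rfl
  refine ⟨(m, gensL, C), ?_⟩
  rw [checkNo]
  simp only [Bool.and_eq_true, Bool.not_eq_true']
  refine ⟨⟨⟨⟨⟨⟨hgvalid, ?_⟩, ?_⟩, ?_⟩, ?_⟩, ?_⟩, ?_⟩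
  · -- C entries are perm tables
    rw [allB_iff]
    intro t ht
    obtain ⟨σ, _, rfl⟩ := (hmemC t).mp ht
    exact isPermB_tableOf σ
  · -- relators
    rw [allB_iff]
    intro r hr
    apply decide_eq_true
    rw [hevalW]
    have : wordElt R r = 1 := by
      rw [wordElt, mkh_one_iff]
      exact Subgroup.subset_normalClosure ⟨r, hr, rfl⟩
    rw [this, map_one, tableOf_one]
  · -- identity in C
    apply memB_iff.mpr
    rw [hmemC, ← tableOf_one]
    exact ⟨1, ⟨1, H.one_mem, map_one ψ⟩, rfl⟩
  · -- closed under composition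
    rw [allB_iff]
    intro s hs
    rw [allB_iff]
    intro t ht
    apply memB_iff.mpr
    obtain ⟨σ, ⟨x, hx, rfl⟩, rfl⟩ := (hmemC s).mp hs
    obtain ⟨τ, ⟨y, hy, rfl⟩, rfl⟩ := (hmemC t).mp ht
    rw [compT_tableOf, hmemC]
    exact ⟨ψ x * ψ y, ⟨x * y, H.mul_mem hx hy, map_mul ψ x y⟩, rfl⟩
  · -- X evals in C
    rw [allB_iff]
    intro u hu
    apply memB_iff.mpr
    rw [hevalW, hmemC]
    exact ⟨ψ (wordElt R u), ⟨wordElt R u, Subgroup.subset_closure ⟨u, hu, rfl⟩, rfl⟩, rfl⟩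
  · -- w eval not in C
    rw [← Bool.not_eq_true, memB_iff]
    intro hw
    rw [hevalW, hmemC] at hw
    obtain ⟨σ, hσ, hσeq⟩ := hw
    have : σ = ψ (wordElt R a.2) := tableOf_injective hσeq
    rw [this] at hσ
    exact hf (hψspec _ hσ)
/-! ### Computability of the checkers -/

section PrimrecPart
open Primrec

theorem primrec_invRev : Primrec (FreeGroup.invRev : Word n → Word n) :=
  list_reverse.comp <| list_map Primrec.id <|
    ((Primrec.pair (fst.comp snd) ((dom_bool not).comp (snd.comp snd)))).to₂

theorem primrec_sgn : Primrec₂ (sgn : Bool → Word n → Word n) :=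
  (Primrec.cond fst snd (primrec_invRev.comp snd)).to₂

def redStep (x : Fin n × Bool) (ih : Word n) : Word n :=
  List.casesOn ih [x] fun hd tl => if x.1 = hd.1 ∧ x.2 = !hd.2 then tl else x :: hd :: tl

theorem reduce_eq_foldr (L : Word n) :
    FreeGroup.reduce L = L.foldr redStep [] := by
  induction L with
  | nil => rfl
  | cons x L ih => rw [List.foldr_cons, ← ih]; exact FreeGroup.reduce.cons x

theorem primrec_redStep : Primrec₂ (redStep : (Fin n × Bool) → Word n → Word n) := by
  have hcond : PrimrecPred fun p : ((Fin n × Bool) × Word n) × ((Fin n × Bool) × Word n) =>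
      p.1.1.1 = p.2.1.1 ∧ p.1.1.2 = !p.2.1.2 :=
    PrimrecPred.and
      (Primrec.eq.comp (fst.comp (fst.comp fst)) (fst.comp (fst.comp snd)))
      (Primrec.eq.comp (snd.comp (fst.comp fst))
        ((dom_bool not).comp (snd.comp (fst.comp snd))))
  have h := Primrec.list_casesOn (α := (Fin n × Bool) × Word n)
    (f := fun p => p.2) (g := fun p => [p.1])
    (h := fun p q => if p.1.1 = q.1.1 ∧ p.1.2 = !q.1.2 then q.2 else p.1 :: q.1 :: q.2)
    snd (list_cons.comp fst (const []))
    (Primrec.ite hcond (snd.comp snd)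
      (list_cons.comp (fst.comp fst)
        (list_cons.comp (fst.comp snd) (snd.comp snd)))).to₂
  have h2 : Primrec fun p : (Fin n × Bool) × Word n => redStep p.1 p.2 :=
    h.of_eq fun p => by rcases p with ⟨x, ih⟩; cases ih <;> rfl
  exact h2.to₂

theorem primrec_reduce : Primrec (FreeGroup.reduce : Word n → Word n) := by
  have h : Primrec fun L : Word n => L.foldr (fun b s => redStep b s) [] :=
    list_foldr Primrec.id (const [])
      (primrec_redStep.comp (fst.comp snd) (snd.comp snd)).to₂
  exact h.of_eq fun L => (reduce_eq_foldr L).symm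

theorem primrec_vWord : Primrec₂ (vWord (n := n)) := by
  apply Primrec.to₂ (f := fun p : List (Word n) × List (ℕ × Bool) => vWord p.1 p.2)
  exact list_flatten.comp <| list_map snd <|
    (primrec_sgn.comp (snd.comp snd)
      ((list_getD ([] : Word n)).comp (fst.comp fst) (fst.comp snd))).to₂

theorem primrec_rWord (R : List (Word n)) :
    Primrec (rWord R) := by
  exact list_flatten.comp <| list_map Primrec.id <|
    (list_append.comp
      (list_append.comp (fst.comp snd)
        (primrec_sgn.comp (snd.comp (snd.comp snd))
          ((list_getD ([] : Word n)).comp (const R) (fst.comp (snd.comp snd)))))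
      (primrec_invRev.comp (fst.comp snd))).to₂

theorem primrec_checkYes (R : List (Word n)) : Primrec₂ (checkYes R) := by
  have h : PrimrecPred fun p : (List (Word n) × Word n) ×
      (List (ℕ × Bool) × List (Word n × ℕ × Bool)) =>
      FreeGroup.reduce p.1.2 = FreeGroup.reduce (rWord R p.2.2 ++ vWord p.1.1 p.2.1) :=
    Primrec.eq.comp (primrec_reduce.comp (snd.comp fst))
      (primrec_reduce.comp (list_append.comp ((primrec_rWord R).comp (snd.comp snd))
        (primrec_vWord.comp (fst.comp fst) (fst.comp snd))))
  have h2 : Primrec fun p : (List (Word n) × Word n) ×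
      (List (ℕ × Bool) × List (Word n × ℕ × Bool)) => checkYes R p.1 p.2 :=
    h.decide.of_eq fun p => by simp [checkYes]
  exact h2.to₂

end PrimrecPart
section PrimrecNo
open Primrec

def anyB {β : Type} (f : β → Bool) (l : List β) : Bool := l.foldr (fun x b => f x || b) false

theorem anyB_iff {β : Type} {f : β → Bool} {l : List β} :
    anyB f l = true ↔ ∃ x ∈ l, f x = true := by
  induction l with
  | nil => simp [anyB]
  | cons x l ih =>
    rw [show anyB f (x :: l) = (f x || anyB f l) from rfl, Bool.or_eq_true, ih]
    constructor
    · rintro (h | ⟨y, hy, hfy⟩)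
      exacts [⟨x, List.mem_cons_self, h⟩, ⟨y, List.mem_cons_of_mem _ hy, hfy⟩]
    · rintro ⟨y, hy, hfy⟩
      rcases List.mem_cons.mp hy with rfl | hy
      exacts [Or.inl hfy, Or.inr ⟨y, hy, hfy⟩]

theorem decide_mem_eq_anyB {β : Type} [DecidableEq β] (x : β) (l : List β)
    {inst : Decidable (x ∈ l)} :
    (@decide (x ∈ l) inst) = anyB (fun y => decide (y = x)) l := by
  rcases Bool.eq_false_or_eq_true (anyB (fun y => decide (y = x)) l) with h | h
  · rw [h]
    apply decide_eq_true
    obtain ⟨y, hy, hd⟩ := anyB_iff.mp h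
    rwa [of_decide_eq_true hd] at hy
  · rw [h]
    apply decide_eq_false
    intro hx
    rw [← Bool.not_eq_true, anyB_iff] at h
    exact h ⟨x, hx, decide_eq_true rfl⟩

theorem primrec_anyB {α β : Type} [Primcodable α] [Primcodable β] {f : α → β → Bool}
    {l : α → List β} (hf : Primrec₂ f) (hl : Primrec l) :
    Primrec fun a => anyB (f a) (l a) := by
  have hstep : Primrec₂ fun (a : α) (r : β × Bool) => f a r.1 || r.2 :=
    ((dom_bool₂ (· || ·)).comp (hf.comp fst (fst.comp snd)) (snd.comp snd)).to₂
  exact list_foldr hl (const false) hstep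

theorem primrec_allB {α β : Type} [Primcodable α] [Primcodable β] {f : α → β → Bool}
    {l : α → List β} (hf : Primrec₂ f) (hl : Primrec l) :
    Primrec fun a => allB (f a) (l a) := by
  have hstep : Primrec₂ fun (a : α) (r : β × Bool) => f a r.1 && r.2 :=
    ((dom_bool₂ (· && ·)).comp (hf.comp fst (fst.comp snd)) (snd.comp snd)).to₂
  exact list_foldr hl (const true) hstep

theorem primrec_lookup : Primrec₂ lookup := list_getD 0

theorem primrec_compT : Primrec fun p : ℕ × List ℕ × List ℕ => compT p.1 p.2.1 p.2.2 :=
  list_map (list_range.comp fst)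
    (primrec_lookup.comp (fst.comp (snd.comp fst))
      (primrec_lookup.comp (snd.comp (snd.comp fst)) snd)).to₂

theorem primrec_invT : Primrec fun p : ℕ × List ℕ => invT p.1 p.2 := by
  have hinner : Primrec fun q : (ℕ × List ℕ) × ℕ =>
      (List.range q.1.1).foldr (fun i acc => if lookup q.1.2 i = q.2 then i else acc) 0 := by
    have hstep : Primrec₂ fun (q : (ℕ × List ℕ) × ℕ) (r : ℕ × ℕ) =>
        if lookup q.1.2 r.1 = q.2 then r.1 else r.2 :=
      (Primrec.ite
        (Primrec.eq.comp
          (primrec_lookup.comp (snd.comp (fst.comp fst)) (fst.comp snd)) (snd.comp fst))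
        (fst.comp snd) (snd.comp snd)).to₂
    exact list_foldr (list_range.comp (fst.comp fst)) (const 0) hstep
  exact list_map (list_range.comp fst) hinner.to₂

theorem primrec_getTable : Primrec fun p : (ℕ × List (List ℕ)) × ℕ =>
    p.1.2.getD p.2 (List.range p.1.1) := by
  have h : Primrec fun p : (ℕ × List (List ℕ)) × ℕ =>
      (p.1.2[p.2]?).getD (List.range p.1.1) :=
    option_getD.comp (list_getElem?.comp (snd.comp fst) snd) (list_range.comp (fst.comp fst))
  exact h.of_eq fun p => by simp [List.getD]

theorem primrec_gT : Primrec fun p : (ℕ × List (List ℕ)) × (Fin n × Bool) =>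
    gT p.1.1 p.1.2 p.2 := by
  have hget : Primrec fun p : (ℕ × List (List ℕ)) × (Fin n × Bool) =>
      p.1.2.getD (p.2.1 : ℕ) (List.range p.1.1) :=
    primrec_getTable.comp (Primrec.pair fst (fin_val.comp (fst.comp snd)))
  exact Primrec.cond (snd.comp snd) hget
    (primrec_invT.comp (Primrec.pair (fst.comp fst) hget))

theorem primrec_evalW : Primrec fun p : (ℕ × List (List ℕ)) × Word n =>
    evalW p.1.1 p.1.2 p.2 := by
  have hstep : Primrec₂ fun (p : (ℕ × List (List ℕ)) × Word n) (r : (Fin n × Bool) × List ℕ) =>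
      compT p.1.1 (gT p.1.1 p.1.2 r.1) r.2 :=
    (primrec_compT.comp (Primrec.pair (fst.comp (fst.comp fst))
      (Primrec.pair (primrec_gT.comp (Primrec.pair (fst.comp fst) (fst.comp snd)))
        (snd.comp snd)))).to₂
  exact list_foldr snd (list_range.comp (fst.comp fst)) hstep

theorem primrec_memB : Primrec₂ memB := by
  have hf : Primrec₂ fun (p : List ℕ × List (List ℕ)) (y : List ℕ) => decide (y = p.1) :=
    (Primrec.eq.comp snd (fst.comp fst)).decide.to₂
  have h : Primrec fun p : List ℕ × List (List ℕ) => anyB (fun y => decide (y = p.1)) p.2 :=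
    primrec_anyB hf snd
  have h2 : Primrec fun p : List ℕ × List (List ℕ) => memB p.1 p.2 :=
    h.of_eq fun p => (decide_mem_eq_anyB p.1 p.2).symm
  exact h2.to₂

theorem primrec_isPermB : Primrec₂ isPermB := by
  have hmem : Primrec₂ fun (q : ℕ × List ℕ) (j : ℕ) => decide (j ∈ q.2) := by
    have hf : Primrec₂ fun (r : (ℕ × List ℕ) × ℕ) (i : ℕ) => decide (i = r.2) :=
      (Primrec.eq.comp snd (snd.comp fst)).decide.to₂
    have h : Primrec fun r : (ℕ × List ℕ) × ℕ => anyB (fun i => decide (i = r.2)) r.1.2 :=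
      primrec_anyB hf (snd.comp fst)
    exact (h.of_eq fun r => (decide_mem_eq_anyB r.2 r.1.2).symm).to₂
  have h : Primrec fun q : ℕ × List ℕ =>
      (decide (q.2.length = q.1) && allB (fun j => decide (j ∈ q.2)) (List.range q.1)) := by
    refine (dom_bool₂ (· && ·)).comp ?_ ?_
    · exact (Primrec.eq.comp (list_length.comp snd) fst).decide
    · exact primrec_allB hmem (list_range.comp fst)
  exact (h.of_eq fun q => rfl).to₂

theorem primrec_checkNo (R : List (Word n)) : Primrec₂ (checkNo R) := by
  have band := dom_bool₂ (· && ·)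
  set P := (List (Word n) × Word n) × ℕ × List (List ℕ) × List (List ℕ)
  have hm : Primrec fun p : P => p.2.1 := fst.comp snd
  have hg : Primrec fun p : P => p.2.2.1 := fst.comp (snd.comp snd)
  have hC : Primrec fun p : P => p.2.2.2 := snd.comp (snd.comp snd)
  have hX : Primrec fun p : P => p.1.1 := fst.comp fst
  have hw : Primrec fun p : P => p.1.2 := snd.comp fst
  have hA1 : Primrec fun p : P => allB (isPermB p.2.1) p.2.2.1 :=
    primrec_allB (primrec_isPermB.comp (hm.comp fst) snd).to₂ hg
  have hA2 : Primrec fun p : P => allB (isPermB p.2.1) p.2.2.2 :=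
    primrec_allB (primrec_isPermB.comp (hm.comp fst) snd).to₂ hC
  have hA3 : Primrec fun p : P =>
      allB (fun r => decide (evalW p.2.1 p.2.2.1 r = List.range p.2.1)) R := by
    have hf : Primrec₂ fun (p : P) (r : Word n) =>
        decide (evalW p.2.1 p.2.2.1 r = List.range p.2.1) :=
      (Primrec.eq.comp
        (primrec_evalW.comp (Primrec.pair (Primrec.pair (hm.comp fst) (hg.comp fst)) snd))
        (list_range.comp (hm.comp fst))).decide.to₂
    exact primrec_allB hf (const R)
  have hA4 : Primrec fun p : P => memB (List.range p.2.1) p.2.2.2 :=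
    primrec_memB.comp (list_range.comp hm) hC
  have hA5 : Primrec fun p : P =>
      allB (fun s => allB (fun t => memB (compT p.2.1 s t) p.2.2.2) p.2.2.2) p.2.2.2 := by
    have hinner : Primrec₂ fun (q : P × List ℕ) (t : List ℕ) =>
        memB (compT q.1.2.1 q.2 t) q.1.2.2.2 :=
      (primrec_memB.comp
        (primrec_compT.comp (Primrec.pair (hm.comp (fst.comp fst))
          (Primrec.pair (snd.comp fst) snd)))
        (hC.comp (fst.comp fst))).to₂
    have houter : Primrec₂ fun (p : P) (s : List ℕ) =>
        allB (fun t => memB (compT p.2.1 s t) p.2.2.2) p.2.2.2 :=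
      (primrec_allB hinner (hC.comp fst)).to₂
    exact primrec_allB houter hC
  have hA6 : Primrec fun p : P => allB (fun u => memB (evalW p.2.1 p.2.2.1 u) p.2.2.2) p.1.1 := by
    have hf : Primrec₂ fun (p : P) (u : Word n) => memB (evalW p.2.1 p.2.2.1 u) p.2.2.2 :=
      (primrec_memB.comp
        (primrec_evalW.comp (Primrec.pair (Primrec.pair (hm.comp fst) (hg.comp fst)) snd))
        (hC.comp fst)).to₂
    exact primrec_allB hf hX
  have hA7 : Primrec fun p : P => !(memB (evalW p.2.1 p.2.2.1 p.1.2) p.2.2.2) :=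
    (dom_bool not).comp
      (primrec_memB.comp (primrec_evalW.comp (Primrec.pair (Primrec.pair hm hg) hw)) hC)
  have H : Primrec fun p : P =>
      (allB (isPermB p.2.1) p.2.2.1 && allB (isPermB p.2.1) p.2.2.2 &&
        allB (fun r => decide (evalW p.2.1 p.2.2.1 r = List.range p.2.1)) R &&
        memB (List.range p.2.1) p.2.2.2 &&
        allB (fun s => allB (fun t => memB (compT p.2.1 s t) p.2.2.2) p.2.2.2) p.2.2.2 &&
        allB (fun u => memB (evalW p.2.1 p.2.2.1 u) p.2.2.2) p.1.1 &&
        !(memB (evalW p.2.1 p.2.2.1 p.1.2) p.2.2.2)) :=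
    band.comp (band.comp (band.comp (band.comp (band.comp (band.comp hA1 hA2) hA3) hA4) hA5)
      hA6) hA7
  have h2 : Primrec fun p : P => checkNo R p.1 p.2 := H.of_eq fun p => by simp [checkNo]
  exact h2.to₂

end PrimrecNo
section Assembly
open Primrec

def checkY' (R : List (Word n)) (a : List (Word n) × Word n) (k : ℕ) : Bool :=
  Option.casesOn (motive := fun _ => Bool)
    (Encodable.decode (α := List (ℕ × Bool) × List (Word n × ℕ × Bool)) k) false (checkYes R a)

def checkN' (R : List (Word n)) (a : List (Word n) × Word n) (k : ℕ) : Bool :=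
  Option.casesOn (motive := fun _ => Bool)
    (Encodable.decode (α := ℕ × List (List ℕ) × List (List ℕ)) k) false (checkNo R a)

theorem primrec_checkY' (R : List (Word n)) : Primrec₂ (checkY' R) := by
  have h : Primrec fun p : (List (Word n) × Word n) × ℕ =>
      Option.casesOn (motive := fun _ => Bool)
        (Encodable.decode (α := List (ℕ × Bool) × List (Word n × ℕ × Bool)) p.2) false
        (checkYes R p.1) :=
    option_casesOn (Primrec.decode.comp snd) (const false)
      ((primrec_checkYes R).comp (fst.comp fst) snd).to₂
  exact h.to₂

theorem primrec_checkN' (R : List (Word n)) : Primrec₂ (checkN' R) := by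
  have h : Primrec fun p : (List (Word n) × Word n) × ℕ =>
      Option.casesOn (motive := fun _ => Bool)
        (Encodable.decode (α := ℕ × List (List ℕ) × List (List ℕ)) p.2) false
        (checkNo R p.1) :=
    option_casesOn (Primrec.decode.comp snd) (const false)
      ((primrec_checkNo R).comp (fst.comp fst) snd).to₂
  exact h.to₂

theorem checkY'_iff (R : List (Word n)) (a : List (Word n) × Word n) :
    (∃ k, checkY' R a k = true) ↔ ∃ c, checkYes R a c = true := by
  constructor
  · rintro ⟨k, hk⟩
    rw [checkY'] at hk
    rcases hdec : Encodable.decode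
        (α := List (ℕ × Bool) × List (Word n × ℕ × Bool)) k with _ | c
    · rw [hdec] at hk; cases hk
    · rw [hdec] at hk; exact ⟨c, hk⟩
  · rintro ⟨c, hc⟩
    refine ⟨Encodable.encode c, ?_⟩
    rw [checkY', Encodable.encodek]
    exact hc

theorem checkN'_iff (R : List (Word n)) (a : List (Word n) × Word n) :
    (∃ k, checkN' R a k = true) ↔ ∃ c, checkNo R a c = true := by
  constructor
  · rintro ⟨k, hk⟩
    rw [checkN'] at hk
    rcases hdec : Encodable.decode (α := ℕ × List (List ℕ) × List (List ℕ)) k with _ | c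
    · rw [hdec] at hk; cases hk
    · rw [hdec] at hk; exact ⟨c, hk⟩
  · rintro ⟨c, hc⟩
    refine ⟨Encodable.encode c, ?_⟩
    rw [checkN', Encodable.encodek]
    exact hc

end Assembly

end MPS


/-- If the finitely presented group `PresentedGroup (relsOf R)` is subgroup separable, then
the uniform membership problem for this presentation is decidable. -/
theorem membership_problem_solvable_of_subgroup_separable
    (n : ℕ) (R : List (List (Fin n × Bool)))
    (hsep : SubgroupSeparable (PresentedGroup (relsOf R))) :
    ComputablePred fun p : List (List (Fin n × Bool)) × List (Fin n × Bool) =>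
      wordElt R p.2 ∈ Subgroup.closure {x | ∃ u ∈ p.1, x = wordElt R u} := by
  classical
  set Pr : List (List (Fin n × Bool)) × List (Fin n × Bool) → Prop := fun p =>
    wordElt R p.2 ∈ Subgroup.closure {x | ∃ u ∈ p.1, x = wordElt R u} with hPr
  have hYiff : ∀ a, Pr a ↔ ∃ k, MPS.checkY' R a k = true := by
    intro a
    rw [MPS.checkY'_iff]
    exact ⟨fun h => MPS.checkYes_complete R a h, fun ⟨c, hc⟩ => MPS.checkYes_sound R a c hc⟩
  have hNiff : ∀ a, ¬ Pr a ↔ ∃ k, MPS.checkN' R a k = true := by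
    intro a
    rw [MPS.checkN'_iff]
    exact ⟨fun h => MPS.checkNo_complete R a hsep h, fun ⟨c, hc⟩ => MPS.checkNo_sound R a c hc⟩
  set step : (List (MPS.Word n) × MPS.Word n) → ℕ → Bool := fun a k =>
    MPS.checkY' R a k || MPS.checkN' R a k with hstepdef
  have hstep : Computable₂ step := by
    apply Primrec₂.to_comp
    have h : Primrec fun p : (List (MPS.Word n) × MPS.Word n) × ℕ =>
        (MPS.checkY' R p.1 p.2 || MPS.checkN' R p.1 p.2) :=
      (Primrec.dom_bool₂ (· || ·)).comp
        ((MPS.primrec_checkY' R).comp Primrec.fst Primrec.snd)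
        ((MPS.primrec_checkN' R).comp Primrec.fst Primrec.snd)
    exact h.to₂
  set F : (List (MPS.Word n) × MPS.Word n) →. Bool := fun a =>
    (Nat.rfind fun k => Part.some (step a k)).map (fun k => MPS.checkY' R a k) with hFdef
  have hF : Partrec F := Partrec.map (Partrec.rfind hstep)
    ((MPS.primrec_checkY' R).to_comp)
  have tot : ∀ a, (decide (Pr a)) ∈ F a := by
    intro a
    have hex : ∃ k, step a k = true := by
      by_cases hPa : Pr a
      · obtain ⟨k, hk⟩ := (hYiff a).mp hPa
        exact ⟨k, by rw [hstepdef]; simp [hk]⟩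
      · obtain ⟨k, hk⟩ := (hNiff a).mp hPa
        exact ⟨k, by rw [hstepdef]; simp [hk]⟩
    obtain ⟨k, hk⟩ := hex
    have hdom : (Nat.rfind fun j => Part.some (step a j)).Dom :=
      Nat.rfind_dom.mpr ⟨k, Part.mem_some_iff.mpr hk.symm, fun {_} _ => trivial⟩
    have hk₀mem := Part.get_mem hdom
    set k₀ := (Nat.rfind fun j => Part.some (step a j)).get hdom with hk₀def
    have hk₀true : step a k₀ = true := (Part.mem_some_iff.mp (Nat.rfind_spec hk₀mem)).symm
    have hk₀' : (MPS.checkY' R a k₀ || MPS.checkN' R a k₀) = true := hk₀true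
    have hor : MPS.checkY' R a k₀ = true ∨ MPS.checkN' R a k₀ = true := by
      rcases Bool.eq_false_or_eq_true (MPS.checkY' R a k₀) with h | h
      · left; exact h
      · right; rwa [h, Bool.false_or] at hk₀'
    have hval : MPS.checkY' R a k₀ = decide (Pr a) := by
      by_cases hPa : Pr a
      · rw [decide_eq_true hPa]
        rcases hor with h | h
        · exact h
        · exact absurd ((hNiff a).mpr ⟨k₀, h⟩) (not_not_intro hPa)
      · rw [decide_eq_false hPa]
        rcases Bool.eq_false_or_eq_true (MPS.checkY' R a k₀) with h | h
        · exact absurd ((hYiff a).mpr ⟨k₀, h⟩) hPa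
        · exact h
    have : MPS.checkY' R a k₀ ∈ F a := Part.mem_map _ hk₀mem
    rwa [hval] at this
  have hcomp : Computable fun a => decide (Pr a) := Partrec.of_eq_tot hF tot
  exact ⟨fun p => Classical.propDecidable _, hcomp⟩
end

section
/- Let n : ℕ and let R be a finite list of words in n generators, and let G be the finitely presented group PresentedGroup S, where S ⊆ FreeGroup (Fin n) is the set of elements determined by R. Then, with no further hypotheses on G, the membership predicate is recursively enumerable: the predicate on pairs (X, w), where X is a list of words and w is a word, asserting that the element of G represented by w lies in Subgroup.closure of the set of elements of G represented by the words in X, satisfies REPred. -/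
namespace MembershipRE

abbrev Wd (n : ℕ) := List (Fin n × Bool)
abbrev Tm (n : ℕ) := Bool × (ℕ ⊕ (Wd n × ℕ))

variable {n : ℕ}

/-- signed word -/
def sgn (b : Bool) (u : Wd n) : Wd n := bif b then u else FreeGroup.invRev u

/-- the word corresponding to a witness term -/
def termWord (R X : List (Wd n)) : Tm n → Wd n
  | (b, Sum.inl i) => sgn b (X.getD i [])
  | (b, Sum.inr (g, j)) => g ++ sgn b (R.getD j []) ++ FreeGroup.invRev g

def check (R : List (Wd n)) (p : List (Wd n) × Wd n) (L : List (Tm n)) : Bool :=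
  decide (FreeGroup.reduce ((L.map (termWord R p.1)).flatten) = FreeGroup.reduce p.2)

lemma mk_sgn (b : Bool) (u : Wd n) :
    FreeGroup.mk (sgn b u) = (bif b then FreeGroup.mk u else (FreeGroup.mk u)⁻¹) := by
  cases b <;> simp [sgn, FreeGroup.inv_mk]

lemma mk_flatten (ws : List (Wd n)) :
    FreeGroup.mk ws.flatten = (ws.map FreeGroup.mk).prod := by
  induction ws with
  | nil => simp [← FreeGroup.one_eq_mk]
  | cons a t ih => simp [← FreeGroup.mul_mk, ih]

/-- the relevant set in the free group -/
def S0 (R X : List (Wd n)) : Set (FreeGroup (Fin n)) :=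
  {x | ∃ u ∈ X, x = FreeGroup.mk u} ∪ Group.conjugatesOfSet (relsOf R)

lemma termWord_mem (R X : List (Wd n)) (t : Tm n) :
    FreeGroup.mk (termWord R X t) ∈ Subgroup.closure (S0 R X) := by
  obtain ⟨b, d⟩ := t
  cases d with
  | inl i =>
    have ht : termWord R X (b, Sum.inl i) = sgn b (X.getD i []) := rfl
    by_cases h : i < X.length
    · have hX : X.getD i [] ∈ X := by
        rw [List.getD_eq_getElem _ _ h]; exact List.getElem_mem h
      have h1 : FreeGroup.mk (X.getD i []) ∈ Subgroup.closure (S0 R X) :=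
        Subgroup.subset_closure (Or.inl ⟨_, hX, rfl⟩)
      rw [ht, mk_sgn]
      cases b
      · exact inv_mem h1
      · exact h1
    · have h0 : X.getD i [] = [] := List.getD_eq_default _ _ (le_of_not_gt h)
      rw [ht, mk_sgn, h0, ← FreeGroup.one_eq_mk]
      cases b
      · exact inv_mem (one_mem _)
      · exact one_mem _
  | inr gj =>
    obtain ⟨g, j⟩ := gj
    have ht : termWord R X (b, Sum.inr (g, j)) =
        g ++ sgn b (R.getD j []) ++ FreeGroup.invRev g := rfl
    have hmk : ∀ u : Wd n, FreeGroup.mk (g ++ u ++ FreeGroup.invRev g) =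
        FreeGroup.mk g * FreeGroup.mk u * (FreeGroup.mk g)⁻¹ := by
      intro u; rw [← FreeGroup.mul_mk, ← FreeGroup.mul_mk, FreeGroup.inv_mk]
    by_cases h : j < R.length
    · have hr : FreeGroup.mk (R.getD j []) ∈ relsOf R := by
        refine ⟨_, ?_, rfl⟩
        rw [List.getD_eq_getElem _ _ h]; exact List.getElem_mem h
      have h1 : FreeGroup.mk g * FreeGroup.mk (R.getD j []) * (FreeGroup.mk g)⁻¹ ∈
          Subgroup.closure (S0 R X) :=
        Subgroup.subset_closure (Or.inr
          (Group.conj_mem_conjugatesOfSet (Group.subset_conjugatesOfSet hr)))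
      rw [ht, hmk, mk_sgn]
      cases b
      · have : FreeGroup.mk g * (FreeGroup.mk (R.getD j []))⁻¹ * (FreeGroup.mk g)⁻¹ =
            (FreeGroup.mk g * FreeGroup.mk (R.getD j []) * (FreeGroup.mk g)⁻¹)⁻¹ := by
          group
        rw [Bool.cond_false, this]
        exact inv_mem h1
      · rw [Bool.cond_true]; exact h1
    · have h0 : R.getD j [] = [] := List.getD_eq_default _ _ (le_of_not_gt h)
      have hs : sgn b ([] : Wd n) = [] := by
        cases b <;> simp [sgn, FreeGroup.invRev_empty]
      rw [ht, h0, hs, hmk, ← FreeGroup.one_eq_mk, mul_one, mul_inv_cancel]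
      exact one_mem _

lemma termWord_flip (R X : List (Wd n)) (b : Bool) (d : ℕ ⊕ (Wd n × ℕ)) :
    FreeGroup.mk (termWord R X (!b, d)) = (FreeGroup.mk (termWord R X (b, d)))⁻¹ := by
  have hsf : ∀ u : Wd n, FreeGroup.mk (sgn (!b) u) = (FreeGroup.mk (sgn b u))⁻¹ := by
    intro u
    cases b <;> simp [sgn, FreeGroup.inv_mk, FreeGroup.invRev_invRev]
  cases d with
  | inl i => exact hsf (X.getD i [])
  | inr gj =>
    obtain ⟨g, j⟩ := gj
    have hmk : ∀ b' : Bool, FreeGroup.mk (termWord R X (b', Sum.inr (g, j))) =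
        FreeGroup.mk g * FreeGroup.mk (sgn b' (R.getD j [])) * (FreeGroup.mk g)⁻¹ := by
      intro b'
      show FreeGroup.mk (g ++ sgn b' (R.getD j []) ++ FreeGroup.invRev g) = _
      rw [← FreeGroup.mul_mk, ← FreeGroup.mul_mk, FreeGroup.inv_mk]
    rw [hmk, hmk, hsf]
    group

lemma exists_term (R X : List (Wd n)) {x : FreeGroup (Fin n)} (hx : x ∈ S0 R X) :
    ∃ t : Tm n, FreeGroup.mk (termWord R X t) = x := by
  rcases hx with ⟨u, hu, rfl⟩ | hx
  · obtain ⟨i, hi⟩ := List.get_of_mem hu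
    refine ⟨(true, Sum.inl i), ?_⟩
    have hd : X.getD (i : ℕ) [] = u := by
      rw [List.getD_eq_getElem _ _ i.isLt, ← List.get_eq_getElem]; exact hi
    show FreeGroup.mk (sgn true (X.getD (i : ℕ) [])) = _
    rw [show sgn true (X.getD (i : ℕ) []) = X.getD (i : ℕ) [] from rfl, hd]
  · rw [Group.mem_conjugatesOfSet_iff] at hx
    obtain ⟨a, ha, hconj⟩ := hx
    obtain ⟨r, hr, rfl⟩ := ha
    obtain ⟨c, hc⟩ := isConj_iff.mp hconj
    obtain ⟨j, hj⟩ := List.get_of_mem hr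
    refine ⟨(true, Sum.inr (c.toWord, j)), ?_⟩
    have hRj : R.getD (j : ℕ) [] = r := by
      rw [List.getD_eq_getElem _ _ j.isLt, ← List.get_eq_getElem]; exact hj
    show FreeGroup.mk (c.toWord ++ sgn true (R.getD (j : ℕ) []) ++ FreeGroup.invRev c.toWord) = _
    rw [show sgn true (R.getD (j : ℕ) []) = R.getD (j : ℕ) [] from rfl, hRj,
      ← FreeGroup.mul_mk, ← FreeGroup.mul_mk, ← FreeGroup.inv_mk, FreeGroup.mk_toWord]
    exact hc

lemma mem_closure_iff_check (R X : List (Wd n)) (w : Wd n) :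
    FreeGroup.mk w ∈ Subgroup.closure (S0 R X) ↔ ∃ L : List (Tm n), check R (X, w) L = true := by
  constructor
  · intro h
    rw [← Subgroup.mem_toSubmonoid, Subgroup.closure_toSubmonoid] at h
    obtain ⟨l, hl, hprod⟩ := Submonoid.exists_list_of_mem_closure h
    have : ∃ L : List (Tm n), L.map (fun t => FreeGroup.mk (termWord R X t)) = l := by
      clear hprod
      induction l with
      | nil => exact ⟨[], rfl⟩
      | cons x t ih =>
        obtain ⟨L, hL⟩ := ih fun y hy => hl y (List.mem_cons_of_mem _ hy)
        have hx := hl x (List.mem_cons_self)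
        have : ∃ s : Tm n, FreeGroup.mk (termWord R X s) = x := by
          rcases hx with hx | hx
          · exact exists_term R X hx
          · obtain ⟨s, hs⟩ := exists_term R X (Set.mem_inv.mp hx)
            exact ⟨(!s.1, s.2), by rw [termWord_flip, hs, inv_inv]⟩
        obtain ⟨s, hs⟩ := this
        exact ⟨s :: L, by simp [hs, hL]⟩
    obtain ⟨L, hL⟩ := this
    refine ⟨L, ?_⟩
    have hmk : FreeGroup.mk ((L.map (termWord R X)).flatten) = FreeGroup.mk w := by
      rw [mk_flatten, List.map_map]
      rw [show (FreeGroup.mk ∘ termWord R X) = fun t => FreeGroup.mk (termWord R X t) from rfl]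
      rw [hL, hprod]
    have h1 := congrArg FreeGroup.toWord hmk
    rw [FreeGroup.toWord_mk, FreeGroup.toWord_mk] at h1
    simpa [check] using h1
  · rintro ⟨L, hL⟩
    simp only [check, decide_eq_true_eq] at hL
    have hmk : FreeGroup.mk w = FreeGroup.mk ((L.map (termWord R X)).flatten) :=
      (FreeGroup.reduce.exact hL).symm
    rw [hmk, mk_flatten, List.map_map]
    exact Submonoid.list_prod_mem _ (by
      intro x hx
      simp only [List.mem_map] at hx
      obtain ⟨t, _, rfl⟩ := hx
      exact termWord_mem R X t)

lemma mem_quot_iff (R X : List (Wd n)) (w : Wd n) :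
    wordElt R w ∈ Subgroup.closure {x | ∃ u ∈ X, x = wordElt R u} ↔
      FreeGroup.mk w ∈ Subgroup.closure (S0 R X) := by
  have himg : {x | ∃ u ∈ X, x = wordElt R u} =
      (PresentedGroup.mk (relsOf R)) '' {x | ∃ u ∈ X, x = FreeGroup.mk u} := by
    ext x
    constructor
    · rintro ⟨u, hu, rfl⟩; exact ⟨FreeGroup.mk u, ⟨u, hu, rfl⟩, rfl⟩
    · rintro ⟨y, ⟨u, hu, rfl⟩, rfl⟩; exact ⟨u, hu, rfl⟩
  have hker : (PresentedGroup.mk (relsOf R)).ker = Subgroup.normalClosure (relsOf R) :=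
    QuotientGroup.ker_mk' _
  rw [himg, ← MonoidHom.map_closure]
  show PresentedGroup.mk (relsOf R) (FreeGroup.mk w) ∈ _ ↔ _
  rw [← Subgroup.mem_comap, Subgroup.comap_map_eq, hker, Subgroup.normalClosure,
    ← Subgroup.closure_union]
  rfl

section Computability

lemma invRev_primrec : Primrec (FreeGroup.invRev : Wd n → Wd n) := by
  have h : Primrec₂ fun (_ : Wd n) (x : Fin n × Bool) => (x.1, !x.2) :=
    ((Primrec.fst.comp Primrec.snd).pair (Primrec.not.comp (Primrec.snd.comp Primrec.snd)))
  exact Primrec.list_reverse.comp (Primrec.list_map Primrec.id h)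

lemma sgn_primrec : Primrec₂ (sgn : Bool → Wd n → Wd n) :=
  Primrec.cond Primrec.fst Primrec.snd (invRev_primrec.comp Primrec.snd)

lemma reduce_eq_foldr (L : Wd n) :
    FreeGroup.reduce L = L.foldr (fun x r =>
      List.casesOn r [x] fun hd tl =>
        if x.1 = hd.1 ∧ x.2 = !hd.2 then tl else x :: hd :: tl) [] := by
  induction L with
  | nil => rfl
  | cons a t ih => rw [List.foldr_cons, ← ih, FreeGroup.reduce.cons]

lemma reduce_primrec : Primrec (FreeGroup.reduce : Wd n → Wd n) := by
  have hif : Primrec fun (y : (Wd n × ((Fin n × Bool) × Wd n)) × ((Fin n × Bool) × Wd n)) =>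
      if y.1.2.1.1 = y.2.1.1 ∧ y.1.2.1.2 = !y.2.1.2 then y.2.2
      else y.1.2.1 :: y.2.1 :: y.2.2 := by
    apply Primrec.ite
    · exact PrimrecPred.and
        (Primrec.eq.comp (Primrec.fst.comp (Primrec.fst.comp (Primrec.snd.comp Primrec.fst)))
          (Primrec.fst.comp (Primrec.fst.comp Primrec.snd)))
        (Primrec.eq.comp (Primrec.snd.comp (Primrec.fst.comp (Primrec.snd.comp Primrec.fst)))
          (Primrec.not.comp (Primrec.snd.comp (Primrec.fst.comp Primrec.snd))))
    · exact Primrec.snd.comp Primrec.snd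
    · exact Primrec.list_cons.comp (Primrec.fst.comp (Primrec.snd.comp Primrec.fst))
        (Primrec.list_cons.comp (Primrec.fst.comp Primrec.snd) (Primrec.snd.comp Primrec.snd))
  have hstep0 := Primrec.list_casesOn (Primrec.snd.comp Primrec.snd)
    (Primrec.list_cons.comp (Primrec.fst.comp Primrec.snd)
      (Primrec.const ([] : Wd n))) hif.to₂
  have hstep : Primrec fun (x : Wd n × ((Fin n × Bool) × Wd n)) =>
      (List.casesOn x.2.2 [x.2.1] (fun hd tl =>
        if x.2.1.1 = hd.1 ∧ x.2.1.2 = !hd.2 then tl else x.2.1 :: hd :: tl) : Wd n) :=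
    hstep0.of_eq (by rintro ⟨x, y, l⟩; cases l <;> rfl)
  have hfold := Primrec.list_foldr (Primrec.id (α := Wd n))
    (Primrec.const ([] : Wd n)) hstep.to₂
  exact hfold.of_eq fun L => (reduce_eq_foldr L).symm

lemma termWord_primrec (R : List (Wd n)) :
    Primrec₂ fun (X : List (Wd n)) (t : Tm n) => termWord R X t := by
  have hgetD : Primrec₂ fun (l : List (Wd n)) (i : ℕ) => l.getD i ([] : Wd n) :=
    Primrec.list_getD ([] : Wd n)
  have hg : Primrec fun (y : (List (Wd n) × Tm n) × ℕ) =>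
      sgn y.1.2.1 (y.1.1.getD y.2 []) :=
    sgn_primrec.comp (Primrec.fst.comp (Primrec.snd.comp Primrec.fst))
      (hgetD.comp (Primrec.fst.comp Primrec.fst) Primrec.snd)
  have hh : Primrec fun (y : (List (Wd n) × Tm n) × (Wd n × ℕ)) =>
      y.2.1 ++ sgn y.1.2.1 (R.getD y.2.2 []) ++ FreeGroup.invRev y.2.1 := by
    have hmid : Primrec fun (y : (List (Wd n) × Tm n) × (Wd n × ℕ)) =>
        sgn y.1.2.1 (R.getD y.2.2 []) :=
      sgn_primrec.comp (Primrec.fst.comp (Primrec.snd.comp Primrec.fst))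
        (hgetD.comp (Primrec.const R) (Primrec.snd.comp Primrec.snd))
    exact Primrec.list_append.comp
      (Primrec.list_append.comp (Primrec.fst.comp Primrec.snd) hmid)
      (invRev_primrec.comp (Primrec.fst.comp Primrec.snd))
  have h0 := Primrec.sumCasesOn (Primrec.snd.comp Primrec.snd) hg.to₂ hh.to₂
  have h : Primrec fun (x : List (Wd n) × Tm n) => termWord R x.1 x.2 :=
    h0.of_eq (by rintro ⟨X, b, d⟩; cases d <;> rfl)
  exact h.to₂

lemma check_primrec (R : List (Wd n)) :
    Primrec₂ fun (p : List (Wd n) × Wd n) (L : List (Tm n)) => check R p L := by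
  have h1 : Primrec fun (x : (List (Wd n) × Wd n) × List (Tm n)) =>
      FreeGroup.reduce ((x.2.map (termWord R x.1.1)).flatten) :=
    reduce_primrec.comp (Primrec.list_flatten.comp
      (Primrec.list_map Primrec.snd
        ((termWord_primrec R).comp (Primrec.fst.comp (Primrec.fst.comp Primrec.fst))
          Primrec.snd)))
  have h2 : Primrec fun (x : (List (Wd n) × Wd n) × List (Tm n)) =>
      FreeGroup.reduce x.1.2 :=
    reduce_primrec.comp (Primrec.snd.comp Primrec.fst)
  exact (Primrec.eq.comp h1 h2).decide

end Computability

/-- generic: an existentially quantified computable predicate is r.e. -/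
lemma rePred_of_exists {α β : Type} [Primcodable α] [Primcodable β] {p : α → Prop}
    (f : α → β → Bool) (hf : Computable₂ f) (h : ∀ a, p a ↔ ∃ b, f a b = true) :
    REPred p := by
  have hg : Computable fun (x : α × ℕ) =>
      (Option.casesOn (Encodable.decode x.2 : Option β) false (f x.1) : Bool) :=
    Computable.option_casesOn (Computable.decode.comp Computable.snd)
      (Computable.const false)
      ((hf.comp (Computable.fst.comp Computable.fst) Computable.snd).to₂)
  have hq : Partrec₂ fun (a : α) (k : ℕ) =>
      (Part.some (Option.casesOn (Encodable.decode k : Option β) false (f a)) : Part Bool) :=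
    Computable.partrec hg
  have hre := (Partrec.rfind hq).dom_re
  apply hre.of_eq
  intro a
  have hiff : (Nat.rfind fun k =>
      (Part.some (Option.casesOn (Encodable.decode k : Option β) false (f a)) :
        Part Bool)).Dom ↔ p a := by
    refine Nat.rfind_dom'.trans ?_
    constructor
    · rintro ⟨k, hk, -⟩
      simp only [Part.mem_some_iff] at hk
      rcases ho : (Encodable.decode k : Option β) with - | b
      · rw [ho] at hk; simp at hk
      · rw [ho] at hk; exact (h a).mpr ⟨b, hk.symm⟩
    · rintro hb
      obtain ⟨b, hfb⟩ := (h a).mp hb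
      refine ⟨Encodable.encode b, ?_, fun _ => trivial⟩
      simp [Encodable.encodek, hfb]
  rw [propext hiff]

end MembershipRE

open MembershipRE in
/-- The membership predicate for a finitely presented group is recursively enumerable. -/
theorem membership_problem_re (n : ℕ) (R : List (List (Fin n × Bool))) :
    REPred fun p : List (List (Fin n × Bool)) × List (Fin n × Bool) =>
      wordElt R p.2 ∈ Subgroup.closure {x | ∃ u ∈ p.1, x = wordElt R u} := by
  apply rePred_of_exists (fun p L => check R p L) (check_primrec R).to_comp
  intro p
  rw [mem_quot_iff R p.1 p.2, mem_closure_iff_check]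
end

section
/- Let n : ℕ and let R be a finite list of words in n generators, and let G be the finitely presented group PresentedGroup S, where S ⊆ FreeGroup (Fin n) is the set of elements determined by R. Then the predicate on pairs (X, Y) of lists of words asserting that Subgroup.closure of the set of elements of G represented by the words in X equals Subgroup.closure of the set of elements of G represented by the words in Y satisfies REPred. -/
set_option linter.unnecessarySeqFocus false
set_option linter.unnecessarySimpa false

open Encodable in
theorem re_of_exists {α γ : Type} [Primcodable α] [Primcodable γ] {p : α → Prop}
    {q : α → γ → Bool} (hq : Computable₂ q) (h : ∀ a, p a ↔ ∃ c, q a c = true) :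
    REPred p := by
  classical
  set Q : α → ℕ → Bool := fun a k => (Encodable.decode (α := γ) k).casesOn false (q a) with hQdef
  have hQ : Computable₂ Q := by
    apply Computable.option_casesOn (Computable.decode.comp Computable.snd)
      (Computable.const false)
    exact (hq.comp (Computable.fst.comp Computable.fst) Computable.snd).to₂
  have hpf : Partrec fun a => Nat.rfind fun k => Part.some (Q a k) := by
    apply Partrec.rfind
    exact hQ.partrec₂
  have := hpf.dom_re
  apply this.of_eq
  intro a
  show (∃ n, true ∈ Part.some (Q a n) ∧ ∀ {m : ℕ}, m < n → (Part.some (Q a m)).Dom) ↔ p a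
  constructor
  · rintro ⟨n, hn, -⟩
    rw [h]
    simp only [Part.mem_some_iff] at hn
    rcases hdn : Encodable.decode (α := γ) n with - | c
    · rw [hQdef] at hn; simp [hdn] at hn
    · exact ⟨c, by rw [hQdef] at hn; simpa [hdn] using hn.symm⟩
  · rw [h]
    rintro ⟨c, hc⟩
    refine ⟨Encodable.encode c, ?_, fun {m} _ => trivial⟩
    simp [hQdef, hc, Part.mem_some_iff]

namespace SameSubgroupRE

variable {n : ℕ}

abbrev Word (n : ℕ) := List (Fin n × Bool)
abbrev Item (n : ℕ) := (ℕ × Bool) ⊕ ((ℕ × Bool) × Word n)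

def itemWord (R L : List (Word n)) : Item n → Word n
  | .inl (i, b) => cond b (L.getD i []) (FreeGroup.invRev (L.getD i []))
  | .inr ((i, b), c) =>
      c ++ (cond b (R.getD i []) (FreeGroup.invRev (R.getD i []))) ++ FreeGroup.invRev c

def candidate (R L : List (Word n)) (e : List (Item n)) : Word n :=
  (e.map (itemWord R L)).flatten

def checkWord (R L : List (Word n)) (w : Word n) (e : List (Item n)) : Bool :=
  decide (FreeGroup.reduce w = FreeGroup.reduce (candidate R L e))

def checkAll (R L X : List (Word n)) (E : List (List (Item n))) : Bool :=
  (List.range X.length).all fun i => checkWord R L (X.getD i []) (E.getD i [])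

def check (R : List (Word n)) (p : List (Word n) × List (Word n))
    (c : List (List (Item n)) × List (List (Item n))) : Bool :=
  checkAll R p.2 p.1 c.1 && checkAll R p.1 p.2 c.2

/-- soundness of a single item -/
lemma itemWord_mem (R L : List (Word n)) (it : Item n) :
    wordElt R (itemWord R L it) ∈
      Subgroup.closure {x | ∃ v ∈ L, x = wordElt R v} := by
  have hgen : ∀ i : ℕ, wordElt R (L.getD i []) ∈
      Subgroup.closure {x | ∃ v ∈ L, x = wordElt R v} := by
    intro i
    rcases lt_or_ge i L.length with hi | hi
    · rw [List.getD_eq_getElem L [] hi]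
      exact Subgroup.subset_closure ⟨L[i], List.getElem_mem hi, rfl⟩
    · rw [List.getD_eq_default _ _ hi]
      exact Subgroup.one_mem _
  have hinv : ∀ w : Word n, wordElt R (FreeGroup.invRev w) = (wordElt R w)⁻¹ := by
    intro w
    unfold wordElt
    rw [← FreeGroup.inv_mk, map_inv]
  have hrel : ∀ i : ℕ, wordElt R (R.getD i []) = 1 := by
    intro i
    rcases lt_or_ge i R.length with hi | hi
    · apply (QuotientGroup.eq_one_iff _).2
      rw [List.getD_eq_getElem R [] hi]
      exact Subgroup.subset_normalClosure ⟨R[i], List.getElem_mem hi, rfl⟩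
    · rw [List.getD_eq_default _ _ hi]; rfl
  rcases it with ⟨i, b⟩ | ⟨⟨i, b⟩, c⟩
  · cases b
    · simpa [itemWord, hinv] using inv_mem (hgen i)
    · simpa [itemWord] using hgen i
  · have : wordElt R (itemWord R L (.inr ((i, b), c))) = 1 := by
      unfold itemWord wordElt
      rw [← FreeGroup.mul_mk, ← FreeGroup.mul_mk, map_mul, map_mul]
      cases b <;>
        simp only [cond] <;>
        rw [show (FreeGroup.mk (FreeGroup.invRev c) : FreeGroup (Fin n)) =
              (FreeGroup.mk c)⁻¹ from (FreeGroup.inv_mk).symm, map_inv]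
      · rw [show (FreeGroup.mk (FreeGroup.invRev (R.getD i [])) : FreeGroup (Fin n)) =
              (FreeGroup.mk (R.getD i []))⁻¹ from (FreeGroup.inv_mk).symm, map_inv]
        have h1 : PresentedGroup.mk (relsOf R) (FreeGroup.mk (R.getD i [])) = 1 := hrel i
        rw [h1]; simp
      · have h1 : PresentedGroup.mk (relsOf R) (FreeGroup.mk (R.getD i [])) = 1 := hrel i
        rw [h1]; simp
    rw [this]
    exact Subgroup.one_mem _

lemma checkWord_sound (R L : List (Word n)) (w : Word n) (e : List (Item n))
    (h : checkWord R L w e = true) :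
    wordElt R w ∈ Subgroup.closure {x | ∃ v ∈ L, x = wordElt R v} := by
  have hred : FreeGroup.mk w = FreeGroup.mk (candidate R L e) :=
    FreeGroup.reduce.exact (by simpa [checkWord] using h)
  have : wordElt R w = wordElt R (candidate R L e) := by
    unfold wordElt; rw [hred]
  rw [this]
  unfold candidate
  have key : ∀ l : List (Item n), wordElt R ((l.map (itemWord R L)).flatten) =
      (l.map (fun it => wordElt R (itemWord R L it))).prod := by
    intro l
    induction l with
    | nil => rfl
    | cons a l ih =>
        simp only [List.map_cons, List.flatten_cons, List.prod_cons, ← ih]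
        unfold wordElt
        rw [← FreeGroup.mul_mk, map_mul]
  rw [key]
  exact list_prod_mem (by
    intro x hx
    simp only [List.mem_map] at hx
    rcases hx with ⟨it, -, rfl⟩
    exact itemWord_mem R L it)

/-- every element of the generating union set is `mk` of some item word -/
lemma exists_item (R L : List (Word n))
    (U : Set (FreeGroup (Fin n)))
    (hU : U = {x | ∃ v ∈ L, x = FreeGroup.mk v} ∪ Group.conjugatesOfSet (relsOf R))
    (y : FreeGroup (Fin n)) (hy : y ∈ U ∪ U⁻¹) :
    ∃ it : Item n, FreeGroup.mk (itemWord R L it) = y := by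
  have mkinv : ∀ w : Word n,
      FreeGroup.mk (FreeGroup.invRev w) = (FreeGroup.mk w : FreeGroup (Fin n))⁻¹ :=
    fun w => (FreeGroup.inv_mk).symm
  have conj_case : ∀ (b : Bool) (z : FreeGroup (Fin n)), z ∈ Group.conjugatesOfSet (relsOf R) →
      ∃ it : Item n, FreeGroup.mk (itemWord R L it) = cond b z z⁻¹ := by
    intro b z hz
    rcases Group.mem_conjugatesOfSet_iff.1 hz with ⟨a, ha, hconj⟩
    rcases isConj_iff.1 hconj with ⟨c, rfl⟩
    rcases ha with ⟨r, hrR, rfl⟩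
    rcases List.mem_iff_getElem.1 hrR with ⟨i, hi, rfl⟩
    refine ⟨.inr ((i, b), c.toWord), ?_⟩
    have hgetD : R.getD i [] = R[i] := List.getD_eq_getElem R [] hi
    cases b <;>
      simp only [itemWord, cond, hgetD, ← FreeGroup.mul_mk, mkinv, FreeGroup.mk_toWord] <;>
      group
  have gen_case : ∀ (b : Bool) (z : FreeGroup (Fin n)), z ∈ {x | ∃ v ∈ L, x = FreeGroup.mk v} →
      ∃ it : Item n, FreeGroup.mk (itemWord R L it) = cond b z z⁻¹ := by
    rintro b z ⟨v, hvL, rfl⟩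
    rcases List.mem_iff_getElem.1 hvL with ⟨i, hi, rfl⟩
    refine ⟨.inl (i, b), ?_⟩
    have hgetD : L.getD i [] = L[i] := List.getD_eq_getElem L [] hi
    cases b <;> simp only [itemWord, cond, hgetD, mkinv]
  rcases hy with hy | hy
  · rw [hU] at hy
    rcases hy with hy | hy
    · simpa using gen_case true y hy
    · simpa using conj_case true y hy
  · rw [Set.mem_inv, hU] at hy
    rcases hy with hy | hy
    · simpa using gen_case false y⁻¹ hy
    · simpa using conj_case false y⁻¹ hy

lemma exists_items_of_list (R L : List (Word n)) (U : Set (FreeGroup (Fin n)))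
    (hU : U = {x | ∃ v ∈ L, x = FreeGroup.mk v} ∪ Group.conjugatesOfSet (relsOf R)) :
    ∀ l : List (FreeGroup (Fin n)), (∀ y ∈ l, y ∈ U ∪ U⁻¹) →
      ∃ e : List (Item n), FreeGroup.mk (candidate R L e) = l.prod := by
  intro l
  induction l with
  | nil => exact fun _ => ⟨[], rfl⟩
  | cons y l ih =>
      intro h
      obtain ⟨e, he⟩ := ih fun z hz => h z (List.mem_cons_of_mem _ hz)
      obtain ⟨it, hit⟩ := exists_item R L U hU y (h y List.mem_cons_self)
      refine ⟨it :: e, ?_⟩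
      simp only [candidate, List.map_cons, List.flatten_cons, List.prod_cons, ← FreeGroup.mul_mk]
      rw [show FreeGroup.mk ((e.map (itemWord R L)).flatten) = l.prod from he, hit]

lemma checkWord_complete (R L : List (Word n)) (w : Word n)
    (h : wordElt R w ∈ Subgroup.closure {x | ∃ v ∈ L, x = wordElt R v}) :
    ∃ e : List (Item n), checkWord R L w e = true := by
  classical
  set π : FreeGroup (Fin n) →* PresentedGroup (relsOf R) := PresentedGroup.mk (relsOf R) with hπ
  have himg : {x | ∃ v ∈ L, x = wordElt R v} = π '' {x | ∃ v ∈ L, x = FreeGroup.mk v} := by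
    ext x
    constructor
    · rintro ⟨v, hv, rfl⟩; exact ⟨FreeGroup.mk v, ⟨v, hv, rfl⟩, rfl⟩
    · rintro ⟨g, ⟨v, hv, rfl⟩, rfl⟩; exact ⟨v, hv, rfl⟩
  rw [himg, ← MonoidHom.map_closure] at h
  rcases h with ⟨g, hg, hgw⟩
  have hker : g⁻¹ * FreeGroup.mk w ∈ Subgroup.normalClosure (relsOf R) := by
    apply (QuotientGroup.eq_one_iff _).1
    have : π (g⁻¹ * FreeGroup.mk w) = 1 := by
      rw [map_mul, map_inv, hgw]
      simp [wordElt, hπ]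
    exact this
  set U : Set (FreeGroup (Fin n)) :=
    {x | ∃ v ∈ L, x = FreeGroup.mk v} ∪ Group.conjugatesOfSet (relsOf R) with hU
  have hmem : FreeGroup.mk w ∈ Subgroup.closure U := by
    have h1 : g ∈ Subgroup.closure U :=
      Subgroup.closure_mono Set.subset_union_left hg
    have h2 : g⁻¹ * FreeGroup.mk w ∈ Subgroup.closure U := by
      refine Subgroup.closure_mono Set.subset_union_right ?_
      rw [Subgroup.normalClosure] at hker
      exact hker
    have := mul_mem h1 h2
    simpa using this
  have hmem' : FreeGroup.mk w ∈ Submonoid.closure (U ∪ U⁻¹) := by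
    rw [← Subgroup.closure_toSubmonoid]
    exact hmem
  obtain ⟨l, hl, hlp⟩ := Submonoid.exists_list_of_mem_closure hmem'
  obtain ⟨e, he⟩ := exists_items_of_list R L U hU l hl
  refine ⟨e, ?_⟩
  rw [checkWord, decide_eq_true_eq]
  have : FreeGroup.mk w = FreeGroup.mk (candidate R L e) := by rw [he, hlp]
  have := congrArg FreeGroup.toWord this
  simpa [FreeGroup.toWord_mk] using this

lemma checkAll_sound (R L X : List (Word n)) (E : List (List (Item n)))
    (h : checkAll R L X E = true) :
    ∀ u ∈ X, wordElt R u ∈ Subgroup.closure {x | ∃ v ∈ L, x = wordElt R v} := by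
  intro u hu
  rcases List.mem_iff_getElem.1 hu with ⟨i, hi, rfl⟩
  have := (List.all_eq_true.1 h) i (List.mem_range.2 hi)
  rw [List.getD_eq_getElem X [] hi] at this
  exact checkWord_sound R L X[i] _ this

lemma checkAll_complete (R L X : List (Word n))
    (h : ∀ u ∈ X, wordElt R u ∈ Subgroup.closure {x | ∃ v ∈ L, x = wordElt R v}) :
    ∃ E : List (List (Item n)), checkAll R L X E = true := by
  classical
  set f : Word n → List (Item n) := fun u =>
    if h' : ∃ e, checkWord R L u e = true then h'.choose else [] with hf
  refine ⟨X.map f, ?_⟩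
  rw [checkAll, List.all_eq_true]
  intro i hi
  rw [List.mem_range] at hi
  rw [List.getD_eq_getElem X [] hi,
    List.getD_eq_getElem (X.map f) [] (by simpa using hi), List.getElem_map]
  have h' : ∃ e, checkWord R L X[i] e = true :=
    checkWord_complete R L X[i] (h X[i] (List.getElem_mem hi))
  rw [hf]
  simp only [dif_pos h']
  exact h'.choose_spec

lemma check_iff (R : List (Word n)) (p : List (Word n) × List (Word n)) :
    (Subgroup.closure {x | ∃ u ∈ p.1, x = wordElt R u} =
        Subgroup.closure {x | ∃ u ∈ p.2, x = wordElt R u}) ↔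
      ∃ c : List (List (Item n)) × List (List (Item n)), check R p c = true := by
  constructor
  · intro h
    have h1 : ∀ u ∈ p.1, wordElt R u ∈ Subgroup.closure {x | ∃ v ∈ p.2, x = wordElt R v} := by
      intro u hu
      rw [← h]
      exact Subgroup.subset_closure ⟨u, hu, rfl⟩
    have h2 : ∀ u ∈ p.2, wordElt R u ∈ Subgroup.closure {x | ∃ v ∈ p.1, x = wordElt R v} := by
      intro u hu
      rw [h]
      exact Subgroup.subset_closure ⟨u, hu, rfl⟩
    obtain ⟨E1, hE1⟩ := checkAll_complete R p.2 p.1 h1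
    obtain ⟨E2, hE2⟩ := checkAll_complete R p.1 p.2 h2
    exact ⟨(E1, E2), by rw [check, hE1, hE2]; rfl⟩
  · rintro ⟨c, hc⟩
    rw [check, Bool.and_eq_true] at hc
    apply le_antisymm
    · rw [Subgroup.closure_le]
      rintro x ⟨u, hu, rfl⟩
      exact checkAll_sound R p.2 p.1 c.1 hc.1 u hu
    · rw [Subgroup.closure_le]
      rintro x ⟨u, hu, rfl⟩
      exact checkAll_sound R p.1 p.2 c.2 hc.2 u hu

open Primrec in
lemma primrec_invRev : Primrec (FreeGroup.invRev : Word n → Word n) := by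
  unfold FreeGroup.invRev
  exact list_reverse.comp
    (list_map Primrec.id ((Primrec.pair (fst.comp snd) (Primrec.not.comp (snd.comp snd)))).to₂)

open Primrec in
lemma primrec_reduce : Primrec (FreeGroup.reduce : Word n → Word n) := by
  have hcond : PrimrecPred (fun w : (Word n × ((Fin n × Bool) × Word n × Word n)) ×
      ((Fin n × Bool) × Word n) => w.1.2.1.1 = w.2.1.1 ∧ w.1.2.1.2 = !w.2.1.2) :=
    PrimrecPred.and
      (Primrec.eq.comp (fst.comp (fst.comp (snd.comp fst))) (fst.comp (fst.comp snd)))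
      (Primrec.eq.comp (snd.comp (fst.comp (snd.comp fst)))
        (Primrec.not.comp (snd.comp (fst.comp snd))))
  have hh : Primrec₂ (fun (z : Word n × ((Fin n × Bool) × Word n × Word n))
      (y : (Fin n × Bool) × Word n) =>
      (if z.2.1.1 = y.1.1 ∧ z.2.1.2 = !y.1.2 then y.2 else z.2.1 :: y.1 :: y.2 : Word n)) :=
    (Primrec.ite hcond (snd.comp snd)
      (list_cons.comp (fst.comp (snd.comp fst))
        (list_cons.comp (fst.comp snd) (snd.comp snd)))).to₂
  have H : Primrec (fun z : Word n × ((Fin n × Bool) × Word n × Word n) =>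
      (List.casesOn z.2.2.2 [z.2.1] fun hd2 tl2 =>
        if z.2.1.1 = hd2.1 ∧ z.2.1.2 = !hd2.2 then tl2 else z.2.1 :: hd2 :: tl2 : Word n)) :=
    list_casesOn (f := fun z : Word n × ((Fin n × Bool) × Word n × Word n) => z.2.2.2)
      (g := fun z : Word n × ((Fin n × Bool) × Word n × Word n) => [z.2.1])
      (h := fun (z : Word n × ((Fin n × Bool) × Word n × Word n)) (y : (Fin n × Bool) × Word n) =>
        if z.2.1.1 = y.1.1 ∧ z.2.1.2 = !y.1.2 then y.2 else z.2.1 :: y.1 :: y.2)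
      (snd.comp (snd.comp snd))
      (show Primrec fun z : Word n × ((Fin n × Bool) × Word n × Word n) => [z.2.1] from
        list_cons.comp (fst.comp snd) (const [])) hh
  exact (list_rec (f := fun w : Word n => w) (g := fun _ => ([] : Word n))
    (h := fun z x =>
      (List.casesOn x.2.2 [x.1] fun hd2 tl2 =>
        if x.1.1 = hd2.1 ∧ x.1.2 = !hd2.2 then tl2 else x.1 :: hd2 :: tl2 : Word n))
    Primrec.id (const []) H.to₂).of_eq fun l => by
      induction l with
      | nil => rfl
      | cons a l ih => simpa [FreeGroup.reduce] using ih

open Primrec in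
lemma primrec_itemWord (R : List (Word n)) :
    Primrec₂ (fun (L : List (Word n)) (it : Item n) => itemWord R L it) := by
  have hget : Primrec fun w : (List (Word n) × Item n) × (ℕ × Bool) => w.1.1.getD w.2.1 [] :=
    (list_getD []).comp (fst.comp fst) (fst.comp snd)
  have hg : Primrec₂ fun (x : List (Word n) × Item n) (ib : ℕ × Bool) =>
      (cond ib.2 (x.1.getD ib.1 []) (FreeGroup.invRev (x.1.getD ib.1 [])) : Word n) :=
    (Primrec.cond (snd.comp snd) hget (primrec_invRev.comp hget)).to₂
  have hr : Primrec fun w : (List (Word n) × Item n) × ((ℕ × Bool) × Word n) =>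
      R.getD w.2.1.1 [] :=
    (list_getD []).comp (const R) (fst.comp (fst.comp snd))
  have hh : Primrec₂ fun (x : List (Word n) × Item n) (q : (ℕ × Bool) × Word n) =>
      (q.2 ++ (cond q.1.2 (R.getD q.1.1 []) (FreeGroup.invRev (R.getD q.1.1 []))) ++
        FreeGroup.invRev q.2 : Word n) :=
    (list_append.comp
      (list_append.comp (snd.comp snd)
        (Primrec.cond (snd.comp (fst.comp snd)) hr (primrec_invRev.comp hr)))
      (primrec_invRev.comp (snd.comp snd))).to₂
  have h1 := sumCasesOn (f := fun x : List (Word n) × Item n => x.2) snd hg hh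
  have h2 : Primrec fun x : List (Word n) × Item n => itemWord R x.1 x.2 :=
    h1.of_eq (fun x => by rcases x with ⟨L, ⟨i, b⟩ | ⟨⟨i, b⟩, c⟩⟩ <;> rfl)
  exact h2.to₂

open Primrec in
lemma primrec_candidate (R : List (Word n)) :
    Primrec fun x : List (Word n) × List (Item n) => candidate R x.1 x.2 :=
  list_flatten.comp
    (list_map snd (((primrec_itemWord R).comp (fst.comp fst) snd).to₂))

open Primrec in
lemma primrec_checkWord (R : List (Word n)) :
    Primrec fun x : List (Word n) × Word n × List (Item n) =>
      checkWord R x.1 x.2.1 x.2.2 :=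
  (Primrec.eq.comp (primrec_reduce.comp (fst.comp snd))
    (primrec_reduce.comp ((primrec_candidate R).comp (pair fst (snd.comp snd))))).decide

open Primrec in
lemma primrec_checkAll (R : List (Word n)) :
    Primrec fun x : List (Word n) × List (Word n) × List (List (Item n)) =>
      checkAll R x.1 x.2.1 x.2.2 := by
  have hX : Primrec fun w : (List (Word n) × List (Word n) × List (List (Item n))) × (ℕ × Bool) =>
      w.1.2.1.getD w.2.1 [] :=
    (list_getD []).comp (fst.comp (snd.comp fst)) (fst.comp snd)
  have hE : Primrec fun w : (List (Word n) × List (Word n) × List (List (Item n))) × (ℕ × Bool) =>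
      w.1.2.2.getD w.2.1 [] :=
    (list_getD []).comp (snd.comp (snd.comp fst)) (fst.comp snd)
  have hh : Primrec₂ fun (a : List (Word n) × List (Word n) × List (List (Item n)))
      (q : ℕ × Bool) =>
      (checkWord R a.1 (a.2.1.getD q.1 []) (a.2.2.getD q.1 []) && q.2 : Bool) :=
    (Primrec.and.comp
      ((primrec_checkWord R).comp (pair (fst.comp fst) (pair hX hE)))
      (snd.comp snd)).to₂
  have := list_foldr (list_range.comp (list_length.comp (fst.comp snd)))
    (const true) hh
  apply this.of_eq
  intro a
  show _ = (List.range a.2.1.length).all fun i => checkWord R a.1 (a.2.1.getD i []) (a.2.2.getD i [])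
  generalize List.range a.2.1.length = l
  induction l with
  | nil => rfl
  | cons b l ih => simp only [List.foldr_cons, List.all_cons, ih]

open Primrec in
lemma check_primrec (R : List (Word n)) : Primrec₂ (check R) :=
  (Primrec.and.comp
    ((primrec_checkAll R).comp (pair (snd.comp fst) (pair (fst.comp fst) (fst.comp snd))))
    ((primrec_checkAll R).comp (pair (fst.comp fst) (pair (snd.comp fst) (snd.comp snd))))).to₂

lemma check_computable (R : List (Word n)) : Computable₂ (check R) :=
  (check_primrec R).to_comp

end SameSubgroupRE

/-- Equality of the subgroups generated by two finite lists of words is recursively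
enumerable. -/
theorem same_subgroup_re (n : ℕ) (R : List (List (Fin n × Bool))) :
    REPred fun p : List (List (Fin n × Bool)) × List (List (Fin n × Bool)) =>
      Subgroup.closure {x | ∃ u ∈ p.1, x = wordElt R u} =
        Subgroup.closure {x | ∃ u ∈ p.2, x = wordElt R u} := by
  exact re_of_exists (SameSubgroupRE.check_computable R) (SameSubgroupRE.check_iff R)
end

section
/- Fix n, m : ℕ. The predicate on pairs (R, R'), where R is a list of words in n generators and R' is a list of words in m generators, asserting that the presented groups PresentedGroup S and PresentedGroup S' are isomorphic (i.e. Nonempty (PresentedGroup S ≃* PresentedGroup S'), where S ⊆ FreeGroup (Fin n) and S' ⊆ FreeGroup (Fin m) are the sets of elements determined by R and R' respectively) satisfies REPred. -/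
set_option maxHeartbeats 10000000



theorem rePred_exists_bool {α β : Type} [Primcodable α] [Primcodable β] {q : α → β → Bool}
    (hq : Computable₂ q) : REPred fun a => ∃ b, q a b = true := by
  have hc : Computable₂ fun (a : α) (k : ℕ) =>
      ((Encodable.decode (α := β) k).map (q a)).getD false :=
    Computable.option_getD
      (Computable.option_map (Computable.decode.comp Computable.snd) (hq.comp (Computable.fst.comp Computable.fst) Computable.snd))
      (Computable.const false)
  have hf : Partrec fun a : α => Nat.rfind fun k =>
      Part.some (((Encodable.decode (α := β) k).map (q a)).getD false) :=
    Partrec.rfind hc.partrec₂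
  refine (hf.dom_re).of_eq fun a => ?_
  refine Nat.rfind_dom.trans ?_
  constructor
  · rintro ⟨k, hk, -⟩
    simp only [Part.mem_some_iff] at hk
    obtain ⟨b, hb⟩ : ∃ b, Encodable.decode (α := β) k = some b := by
      rcases h : Encodable.decode (α := β) k with _ | b
      · rw [h] at hk; simp at hk
      · exact ⟨b, rfl⟩
    refine ⟨b, ?_⟩
    rw [hb] at hk; simpa using hk.symm
  · rintro ⟨b, hb⟩
    exact ⟨Encodable.encode b, by simp [Part.mem_some_iff, hb], by intro _ _; trivial⟩



abbrev Word (k : ℕ) := List (Fin k × Bool)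
abbrev NCCert (k : ℕ) := List (Word k × ℕ × Bool)
abbrev IsoCert (n m : ℕ) :=
  (List (Word m) × List (Word n)) ×
    ((List (NCCert m) × List (NCCert n)) × (List (NCCert n) × List (NCCert m)))

def substL {k l : ℕ} (fl : List (Word l)) (w : Word k) : Word l :=
  w.flatMap fun g => cond g.2 (fl.getD g.1.val []) (FreeGroup.invRev (fl.getD g.1.val []))

def ncWord {k : ℕ} (R : List (Word k)) (c : NCCert k) : Word k :=
  c.flatMap fun e =>
    e.1 ++ (cond e.2.2 (R.getD e.2.1 []) (FreeGroup.invRev (R.getD e.2.1 []))) ++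
      FreeGroup.invRev e.1

def checkNC {k : ℕ} (R : List (Word k)) (t : Word k) (c : NCCert k) : Bool :=
  decide (FreeGroup.reduce (ncWord R c) = FreeGroup.reduce t)

def check (n m : ℕ) (p : List (Word n) × List (Word m)) (c : IsoCert n m) : Bool :=
  ((List.range p.1.length).all fun k =>
      checkNC p.2 (substL c.1.1 (p.1.getD k [])) (c.2.1.1.getD k [])) &&
  ((List.range p.2.length).all fun k =>
      checkNC p.1 (substL c.1.2 (p.2.getD k [])) (c.2.1.2.getD k [])) &&
  ((List.finRange n).all fun i =>
      checkNC p.1 (substL c.1.2 (c.1.1.getD i.val []) ++ [(i, false)]) (c.2.2.1.getD i.val [])) &&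
  ((List.finRange m).all fun i =>
      checkNC p.2 (substL c.1.1 (c.1.2.getD i.val []) ++ [(i, false)]) (c.2.2.2.getD i.val []))

namespace Primrec

variable {α β : Type} [Primcodable α] [Primcodable β]

theorem list_all' {f : α → List β} {g : α → β → Bool} (hf : Primrec f) (hg : Primrec₂ g) :
    Primrec fun a => (f a).all (g a) := by
  have : Primrec fun a => (f a).foldr (fun b r => g a b && r) true :=
    list_foldr hf (const true) <|
      ((dom_bool₂ (· && ·)).comp (hg.comp fst (fst.comp snd)) (snd.comp snd)).to₂
  refine this.of_eq fun a => ?_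
  induction f a with
  | nil => rfl
  | cons b l ih => simp [List.all_cons, ih]

theorem prim_invRev {k : ℕ} : Primrec (FreeGroup.invRev (α := Fin k)) := by
  have : Primrec fun L : Word k => (L.map fun g => (g.1, !g.2)).reverse :=
    list_reverse.comp <| list_map .id <|
      (Primrec.pair (fst.comp snd) ((dom_bool (!·)).comp (snd.comp snd)))
  exact this.of_eq fun L => by simp [FreeGroup.invRev]

theorem prim_getD {β : Type} [Primcodable β] (d : β) :
    Primrec₂ fun (l : List β) (i : ℕ) => l.getD i d := by
  have : Primrec₂ fun (l : List β) (i : ℕ) => (l[i]?).getD d :=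
    option_getD.comp₂ list_getElem? (Primrec₂.const d)
  exact this.of_eq fun l i => by simp [List.getD_eq_getElem?_getD]

theorem prim_substL {k l : ℕ} : Primrec₂ fun (fl : List (Word l)) (w : Word k) => substL fl w := by
  unfold substL
  refine list_flatMap snd ?_
  have H : Primrec fun p : (List (Word l) × Word k) × (Fin k × Bool) =>
      _root_.cond p.2.2 (p.1.1.getD p.2.1.val []) (FreeGroup.invRev (p.1.1.getD p.2.1.val [])) := by
    exact Primrec.cond (snd.comp snd)
      ((prim_getD []).comp (fst.comp fst) (fin_val.comp (fst.comp snd)))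
      (prim_invRev.comp ((prim_getD []).comp (fst.comp fst) (fin_val.comp (fst.comp snd))))
  exact H.to₂

theorem prim_reduce {k : ℕ} : Primrec (FreeGroup.reduce (α := Fin k)) := by
  have H2 : Primrec fun x : (Word k × ((Fin k × Bool) × Word k)) × ((Fin k × Bool) × Word k) =>
      if x.1.2.1.1 = x.2.1.1 ∧ x.1.2.1.2 = !x.2.1.2 then x.2.2
      else x.1.2.1 :: x.2.1 :: x.2.2 := by
    refine Primrec.ite ?_ (snd.comp snd) (list_cons.comp (fst.comp (snd.comp fst))
      (list_cons.comp (fst.comp snd) (snd.comp snd)))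
    refine PrimrecPred.and ?_ ?_
    · exact Primrec.eq.comp (fst.comp (fst.comp (snd.comp fst))) (fst.comp (fst.comp snd))
    · exact Primrec.eq.comp (snd.comp (fst.comp (snd.comp fst)))
        ((dom_bool (!·)).comp (snd.comp (fst.comp snd)))
  have H : Primrec fun p : Word k × ((Fin k × Bool) × Word k) =>
      (List.casesOn p.2.2 [p.2.1] (fun hd2 tl2 =>
        if p.2.1.1 = hd2.1 ∧ p.2.1.2 = !hd2.2 then tl2 else p.2.1 :: hd2 :: tl2) : Word k) :=
    list_casesOn (f := fun p : Word k × ((Fin k × Bool) × Word k) => p.2.2)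
      (g := fun p : Word k × ((Fin k × Bool) × Word k) => [p.2.1])
      (h := fun (p : Word k × ((Fin k × Bool) × Word k)) (q : (Fin k × Bool) × Word k) =>
        if p.2.1.1 = q.1.1 ∧ p.2.1.2 = !q.1.2 then q.2 else p.2.1 :: q.1 :: q.2)
      (snd.comp snd)
      (list_cons.comp (g := fun p : Word k × ((Fin k × Bool) × Word k) => p.2.1)
        (h := fun _ => ([] : Word k)) (fst.comp snd) (const [])) H2.to₂
  have main : Primrec fun L : Word k =>
      L.foldr (fun hd1 ih => (List.casesOn ih [hd1] (fun hd2 tl2 =>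
        if hd1.1 = hd2.1 ∧ hd1.2 = !hd2.2 then tl2 else hd1 :: hd2 :: tl2) : Word k)) ([] : Word k) :=
    list_foldr (f := fun L : Word k => L) (g := fun _ => ([] : Word k))
      (h := fun _ p => (List.casesOn p.2 [p.1] (fun hd2 tl2 =>
        if p.1.1 = hd2.1 ∧ p.1.2 = !hd2.2 then tl2 else p.1 :: hd2 :: tl2) : Word k))
      .id (const ([] : Word k)) H.to₂
  refine main.of_eq fun L => ?_
  induction L with
  | nil => rfl
  | cons hd tl ih => rw [List.foldr_cons, ih]; rfl

theorem prim_ncWord {k : ℕ} : Primrec₂ fun (R : List (Word k)) (c : NCCert k) => ncWord R c := by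
  unfold ncWord
  refine list_flatMap snd ?_
  have H : Primrec fun p : (List (Word k) × NCCert k) × (Word k × ℕ × Bool) =>
      p.2.1 ++ (_root_.cond p.2.2.2 (p.1.1.getD p.2.2.1 []) (FreeGroup.invRev (p.1.1.getD p.2.2.1 [])))
        ++ FreeGroup.invRev p.2.1 := by
    have M : Primrec fun p : (List (Word k) × NCCert k) × (Word k × ℕ × Bool) =>
        _root_.cond p.2.2.2 (p.1.1.getD p.2.2.1 []) (FreeGroup.invRev (p.1.1.getD p.2.2.1 [])) :=
      Primrec.cond (snd.comp (snd.comp snd))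
        ((prim_getD []).comp (fst.comp fst) (fst.comp (snd.comp snd)))
        (prim_invRev.comp ((prim_getD []).comp (fst.comp fst) (fst.comp (snd.comp snd))))
    exact list_append.comp (list_append.comp (fst.comp snd) M) (prim_invRev.comp (fst.comp snd))
  exact H.to₂

theorem prim_checkNC {k : ℕ} :
    Primrec fun x : (List (Word k) × Word k) × NCCert k => checkNC x.1.1 x.1.2 x.2 := by
  unfold checkNC
  exact PrimrecPred.decide (Primrec.eq.comp (prim_reduce.comp (prim_ncWord.comp (fst.comp fst) snd))
    (prim_reduce.comp (snd.comp fst)))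

theorem prim_check (n m : ℕ) :
    Primrec fun x : (List (Word n) × List (Word m)) × IsoCert n m => check n m x.1 x.2 := by
  unfold check
  have band := dom_bool₂ (· && ·)
  have t1 : Primrec fun x : (List (Word n) × List (Word m)) × IsoCert n m =>
      (List.range x.1.1.length).all fun k =>
        checkNC x.1.2 (substL x.2.1.1 (x.1.1.getD k [])) (x.2.2.1.1.getD k []) := by
    refine list_all' (list_range.comp (list_length.comp (fst.comp fst))) ?_
    have H : Primrec fun y : ((List (Word n) × List (Word m)) × IsoCert n m) × ℕ =>
        checkNC y.1.1.2 (substL y.1.2.1.1 (y.1.1.1.getD y.2 [])) (y.1.2.2.1.1.getD y.2 []) := by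
      refine prim_checkNC.comp (Primrec.pair (Primrec.pair ?_ ?_) ?_)
      · exact snd.comp (fst.comp fst)
      · exact prim_substL.comp (fst.comp (fst.comp (snd.comp fst)))
          ((prim_getD []).comp (fst.comp (fst.comp fst)) snd)
      · exact (prim_getD []).comp (fst.comp (fst.comp (snd.comp (snd.comp fst)))) snd
    exact H.to₂
  have t2 : Primrec fun x : (List (Word n) × List (Word m)) × IsoCert n m =>
      (List.range x.1.2.length).all fun k =>
        checkNC x.1.1 (substL x.2.1.2 (x.1.2.getD k [])) (x.2.2.1.2.getD k []) := by
    refine list_all' (list_range.comp (list_length.comp (snd.comp fst))) ?_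
    have H : Primrec fun y : ((List (Word n) × List (Word m)) × IsoCert n m) × ℕ =>
        checkNC y.1.1.1 (substL y.1.2.1.2 (y.1.1.2.getD y.2 [])) (y.1.2.2.1.2.getD y.2 []) := by
      refine prim_checkNC.comp (Primrec.pair (Primrec.pair ?_ ?_) ?_)
      · exact fst.comp (fst.comp fst)
      · exact prim_substL.comp (snd.comp (fst.comp (snd.comp fst)))
          ((prim_getD []).comp (snd.comp (fst.comp fst)) snd)
      · exact (prim_getD []).comp (snd.comp (fst.comp (snd.comp (snd.comp fst)))) snd
    exact H.to₂
  have t3 : Primrec fun x : (List (Word n) × List (Word m)) × IsoCert n m =>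
      (List.finRange n).all fun i =>
        checkNC x.1.1 (substL x.2.1.2 (x.2.1.1.getD i.val []) ++ [(i, false)])
          (x.2.2.2.1.getD i.val []) := by
    refine list_all' (const (List.finRange n)) ?_
    have H : Primrec fun y : ((List (Word n) × List (Word m)) × IsoCert n m) × Fin n =>
        checkNC y.1.1.1 (substL y.1.2.1.2 (y.1.2.1.1.getD y.2.val []) ++ [(y.2, false)])
          (y.1.2.2.2.1.getD y.2.val []) := by
      refine prim_checkNC.comp (Primrec.pair (Primrec.pair ?_ ?_) ?_)
      · exact fst.comp (fst.comp fst)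
      · exact list_append.comp
          (prim_substL.comp (snd.comp (fst.comp (snd.comp fst)))
            ((prim_getD []).comp (fst.comp (fst.comp (snd.comp fst))) (fin_val.comp snd)))
          (list_cons.comp (Primrec.pair snd (const false)) (const ([] : Word n)))
      · exact (prim_getD []).comp (fst.comp (snd.comp (snd.comp (snd.comp fst))))
          (fin_val.comp snd)
    exact H.to₂
  have t4 : Primrec fun x : (List (Word n) × List (Word m)) × IsoCert n m =>
      (List.finRange m).all fun i =>
        checkNC x.1.2 (substL x.2.1.1 (x.2.1.2.getD i.val []) ++ [(i, false)])
          (x.2.2.2.2.getD i.val []) := by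
    refine list_all' (const (List.finRange m)) ?_
    have H : Primrec fun y : ((List (Word n) × List (Word m)) × IsoCert n m) × Fin m =>
        checkNC y.1.1.2 (substL y.1.2.1.1 (y.1.2.1.2.getD y.2.val []) ++ [(y.2, false)])
          (y.1.2.2.2.2.getD y.2.val []) := by
      refine prim_checkNC.comp (Primrec.pair (Primrec.pair ?_ ?_) ?_)
      · exact snd.comp (fst.comp fst)
      · exact list_append.comp
          (prim_substL.comp (fst.comp (fst.comp (snd.comp fst)))
            ((prim_getD []).comp (snd.comp (fst.comp (snd.comp fst))) (fin_val.comp snd)))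
          (list_cons.comp (Primrec.pair snd (const false)) (const ([] : Word m)))
      · exact (prim_getD []).comp (snd.comp (snd.comp (snd.comp (snd.comp fst))))
          (fin_val.comp snd)
    exact H.to₂
  exact band.comp (band.comp (band.comp t1 t2) t3) t4

end Primrec

open FreeGroup Subgroup

theorem mk_substL {k l : ℕ} (fl : List (Word l)) (w : Word k) :
    FreeGroup.mk (substL fl w) =
      FreeGroup.lift (fun i : Fin k => FreeGroup.mk (fl.getD i.val [])) (FreeGroup.mk w) := by
  rw [FreeGroup.lift_mk]
  induction w with
  | nil => simp [substL, ← FreeGroup.one_eq_mk]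
  | cons g w ih =>
    rw [substL, List.flatMap_cons, ← FreeGroup.mul_mk, List.map_cons, List.prod_cons, ← substL, ih]
    congr 1
    cases hb : g.2 <;> simp [FreeGroup.inv_mk]

def entryW {k : ℕ} (R : List (Word k)) (e : Word k × ℕ × Bool) : Word k :=
  e.1 ++ (cond e.2.2 (R.getD e.2.1 []) (FreeGroup.invRev (R.getD e.2.1 []))) ++
    FreeGroup.invRev e.1

theorem ncWord_cons {k : ℕ} (R : List (Word k)) (e : Word k × ℕ × Bool) (c : NCCert k) :
    ncWord R (e :: c) = entryW R e ++ ncWord R c := by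
  simp [ncWord, entryW]

theorem ncWord_append {k : ℕ} (R : List (Word k)) (c1 c2 : NCCert k) :
    ncWord R (c1 ++ c2) = ncWord R c1 ++ ncWord R c2 := by
  simp [ncWord]

theorem ncWord_nil {k : ℕ} (R : List (Word k)) : ncWord R ([] : NCCert k) = [] := rfl

theorem mk_entryW_inv {k : ℕ} (R : List (Word k)) (e : Word k × ℕ × Bool) :
    FreeGroup.mk (entryW R (e.1, e.2.1, !e.2.2)) = (FreeGroup.mk (entryW R e))⁻¹ := by
  show FreeGroup.mk (e.1 ++ _ ++ FreeGroup.invRev e.1) = _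
  rw [entryW, ← FreeGroup.mul_mk, ← FreeGroup.mul_mk, ← FreeGroup.inv_mk,
    ← FreeGroup.mul_mk, ← FreeGroup.mul_mk, ← FreeGroup.inv_mk]
  have : FreeGroup.mk (cond (!e.2.2) (R.getD e.2.1 []) (FreeGroup.invRev (R.getD e.2.1 []))) =
      (FreeGroup.mk (cond e.2.2 (R.getD e.2.1 []) (FreeGroup.invRev (R.getD e.2.1 []))))⁻¹ := by
    cases e.2.2 <;> simp [FreeGroup.inv_mk, FreeGroup.invRev_invRev]
  rw [this]
  group

theorem mk_ncWord_mem {k : ℕ} (R : List (Word k)) (c : NCCert k) :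
    FreeGroup.mk (ncWord R c) ∈ Subgroup.normalClosure (relsOf R) := by
  induction c with
  | nil =>
    show FreeGroup.mk ([] : Word k) ∈ _
    rw [← FreeGroup.one_eq_mk]; exact one_mem _
  | cons e c ih =>
    rw [ncWord_cons, ← FreeGroup.mul_mk]
    refine mul_mem ?_ ih
    rw [entryW, ← FreeGroup.mul_mk, ← FreeGroup.mul_mk, ← FreeGroup.inv_mk]
    have hbase : FreeGroup.mk (R.getD e.2.1 []) ∈ Subgroup.normalClosure (relsOf R) := by
      by_cases h : e.2.1 < R.length
      · refine Subgroup.subset_normalClosure ⟨R.getD e.2.1 [], ?_, rfl⟩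
        rw [List.getD_eq_getElem _ _ h]
        exact List.getElem_mem h
      · rw [List.getD_eq_default _ _ (le_of_not_gt h), ← FreeGroup.one_eq_mk]
        exact one_mem _
    have hmid : FreeGroup.mk (cond e.2.2 (R.getD e.2.1 [])
        (FreeGroup.invRev (R.getD e.2.1 []))) ∈ Subgroup.normalClosure (relsOf R) := by
      cases e.2.2
      · rw [cond_false, ← FreeGroup.inv_mk]; exact inv_mem hbase
      · rwa [cond_true]
    exact Subgroup.normalClosure_normal.conj_mem _ hmid (FreeGroup.mk e.1)

theorem mk_ncWord_inv {k : ℕ} (R : List (Word k)) (c : NCCert k) :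
    FreeGroup.mk (ncWord R ((c.map fun e => (e.1, e.2.1, !e.2.2)).reverse)) =
      (FreeGroup.mk (ncWord R c))⁻¹ := by
  induction c with
  | nil => simp [ncWord, ← FreeGroup.one_eq_mk]
  | cons e c ih =>
    rw [List.map_cons, List.reverse_cons, ncWord_append, ← FreeGroup.mul_mk, ih,
      ncWord_cons, ncWord_nil, List.append_nil, ncWord_cons, ← FreeGroup.mul_mk,
      mul_inv_rev, mk_entryW_inv R e]

theorem exists_ncCert' {k : ℕ} {R : List (Word k)} (x : FreeGroup (Fin k))
    (h : x ∈ Subgroup.normalClosure (relsOf R)) :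
    ∃ c : NCCert k, FreeGroup.mk (ncWord R c) = x := by
  rw [Subgroup.normalClosure] at h
  induction h using Subgroup.closure_induction with
  | mem x hx =>
    obtain ⟨a, ha, hconj⟩ := Group.mem_conjugatesOfSet_iff.mp hx
    obtain ⟨r, hr, rfl⟩ := ha
    obtain ⟨j, hj, hrj⟩ := List.mem_iff_getElem.mp hr
    obtain ⟨g, hg⟩ := isConj_iff.mp hconj
    refine ⟨[(g.toWord, j, true)], ?_⟩
    rw [ncWord_cons, ncWord_nil, List.append_nil, entryW]
    show FreeGroup.mk (g.toWord ++ R.getD j [] ++ FreeGroup.invRev g.toWord) = _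
    rw [← FreeGroup.mul_mk, ← FreeGroup.mul_mk, ← FreeGroup.inv_mk, FreeGroup.mk_toWord,
      List.getD_eq_getElem _ _ hj, hrj]
    exact hg
  | one => exact ⟨[], by simp [ncWord, ← FreeGroup.one_eq_mk]⟩
  | mul x y _ _ hx hy =>
    obtain ⟨c1, hc1⟩ := hx
    obtain ⟨c2, hc2⟩ := hy
    exact ⟨c1 ++ c2, by rw [ncWord_append, ← FreeGroup.mul_mk, hc1, hc2]⟩
  | inv x _ hx =>
    obtain ⟨c, hc⟩ := hx
    exact ⟨(c.map fun e => (e.1, e.2.1, !e.2.2)).reverse, by rw [mk_ncWord_inv, hc]⟩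

theorem exists_ncCert {k : ℕ} {R : List (Word k)} {t : Word k}
    (h : FreeGroup.mk t ∈ Subgroup.normalClosure (relsOf R)) :
    ∃ c : NCCert k, checkNC R t c = true := by
  obtain ⟨c, hc⟩ := exists_ncCert' (FreeGroup.mk t) h
  exact ⟨c, decide_eq_true (FreeGroup.reduce.sound hc)⟩

theorem checkNC_mem {k : ℕ} {R : List (Word k)} {t : Word k} {c : NCCert k}
    (h : checkNC R t c = true) :
    FreeGroup.mk t ∈ Subgroup.normalClosure (relsOf R) := by
  have := FreeGroup.reduce.exact (of_decide_eq_true h)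
  rw [← this]
  exact mk_ncWord_mem R c

theorem mem_iff_exists_ncCert {k : ℕ} {R : List (Word k)} {t : Word k} :
    FreeGroup.mk t ∈ Subgroup.normalClosure (relsOf R) ↔
      ∃ c : NCCert k, checkNC R t c = true :=
  ⟨exists_ncCert, fun ⟨_, hc⟩ => checkNC_mem hc⟩


theorem mem_nc_iff {α : Type} (rels : Set (FreeGroup α)) (x : FreeGroup α) :
    x ∈ Subgroup.normalClosure rels ↔ PresentedGroup.mk rels x = 1 :=
  (QuotientGroup.eq_one_iff x).symm

theorem hom_mk_substL {k l : ℕ} {G : Type} [Group G] (ρ : FreeGroup (Fin l) →* G)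
    (fl : List (Word l)) (w : Word k) :
    ρ (FreeGroup.mk (substL fl w)) =
      FreeGroup.lift (fun i : Fin k => ρ (FreeGroup.mk (fl.getD i.val []))) (FreeGroup.mk w) := by
  rw [mk_substL]
  have h := FreeGroup.ext_hom
    (ρ.comp (FreeGroup.lift fun i : Fin k => FreeGroup.mk (fl.getD i.val [])))
    (FreeGroup.lift fun i : Fin k => ρ (FreeGroup.mk (fl.getD i.val [])))
    (by intro a; simp)
  exact DFunLike.congr_fun h (FreeGroup.mk w)

theorem subst_comm {n m : ℕ} {R : List (Word n)} {R' : List (Word m)}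
    (Φ : PresentedGroup (relsOf R) →* PresentedGroup (relsOf R')) (fl : List (Word m))
    (hfl : ∀ i : Fin n, PresentedGroup.mk (relsOf R') (FreeGroup.mk (fl.getD i.val [])) =
      Φ (PresentedGroup.of i)) (w : Word n) :
    PresentedGroup.mk (relsOf R') (FreeGroup.mk (substL fl w)) =
      Φ (PresentedGroup.mk (relsOf R) (FreeGroup.mk w)) := by
  rw [hom_mk_substL]
  have h := FreeGroup.ext_hom
    (FreeGroup.lift fun i : Fin n =>
      PresentedGroup.mk (relsOf R') (FreeGroup.mk (fl.getD i.val [])))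
    (Φ.comp (PresentedGroup.mk (relsOf R)))
    (by intro a; rw [FreeGroup.lift_apply_of, hfl a]; rfl)
  exact DFunLike.congr_fun h (FreeGroup.mk w)

theorem getD_ofFn {β : Type} {q : ℕ} (f : Fin q → β) (d : β) (j : ℕ) (hj : j < q) :
    (List.ofFn f).getD j d = f ⟨j, hj⟩ := by
  rw [List.getD_eq_getElem _ _ (by simpa using hj), List.getElem_ofFn]

theorem mk_inv_gen {k : ℕ} (i : Fin k) :
    FreeGroup.mk [(i, false)] = (FreeGroup.of i)⁻¹ := by
  rw [show (FreeGroup.of i : FreeGroup (Fin k)) = FreeGroup.mk [(i, true)] from rfl,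
    FreeGroup.inv_mk]
  simp [FreeGroup.invRev]

theorem check_iff {n m : ℕ} (R : List (Word n)) (R' : List (Word m))
    (fl : List (Word m)) (gl : List (Word n)) (cA : List (NCCert m)) (cB : List (NCCert n))
    (cC : List (NCCert n)) (cD : List (NCCert m)) :
    check n m (R, R') ((fl, gl), ((cA, cB), (cC, cD))) = true ↔
      ((∀ k < R.length, checkNC R' (substL fl (R.getD k [])) (cA.getD k []) = true) ∧
       (∀ k < R'.length, checkNC R (substL gl (R'.getD k [])) (cB.getD k []) = true) ∧
       (∀ i : Fin n,
          checkNC R (substL gl (fl.getD i.val []) ++ [(i, false)]) (cC.getD i.val []) = true) ∧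
       (∀ i : Fin m,
          checkNC R' (substL fl (gl.getD i.val []) ++ [(i, false)]) (cD.getD i.val []) = true)) := by
  simp [check, List.all_eq_true, List.mem_range, List.mem_finRange, and_assoc]

theorem iso_iff_cert (n m : ℕ) (R : List (Word n)) (R' : List (Word m)) :
    Nonempty (PresentedGroup (relsOf R) ≃* PresentedGroup (relsOf R')) ↔
      ∃ c : IsoCert n m, check n m (R, R') c = true := by
  constructor
  · rintro ⟨e⟩
    choose wf hwf using fun i : Fin n =>
      PresentedGroup.mk_surjective (relsOf R') (e (PresentedGroup.of i))
    choose wg hwg using fun j : Fin m =>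
      PresentedGroup.mk_surjective (relsOf R) (e.symm (PresentedGroup.of j))
    set fl : List (Word m) := List.ofFn fun i => (wf i).toWord with hfl_def
    set gl : List (Word n) := List.ofFn fun j => (wg j).toWord with hgl_def
    have hfl : ∀ i : Fin n,
        PresentedGroup.mk (relsOf R') (FreeGroup.mk (fl.getD i.val [])) =
          e.toMonoidHom (PresentedGroup.of i) := by
      intro i
      rw [hfl_def, getD_ofFn _ _ _ i.isLt]
      simp [FreeGroup.mk_toWord, hwf]
    have hgl : ∀ j : Fin m,
        PresentedGroup.mk (relsOf R) (FreeGroup.mk (gl.getD j.val [])) =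
          e.symm.toMonoidHom (PresentedGroup.of j) := by
      intro j
      rw [hgl_def, getD_ofFn _ _ _ j.isLt]
      simp [FreeGroup.mk_toWord, hwg]
    have relator_one : ∀ k, k < R.length →
        PresentedGroup.mk (relsOf R) (FreeGroup.mk (R.getD k [])) = 1 := by
      intro k hk
      refine (mem_nc_iff _ _).mp (Subgroup.subset_normalClosure ⟨R.getD k [], ?_, rfl⟩)
      rw [List.getD_eq_getElem _ _ hk]; exact List.getElem_mem hk
    have relator_one' : ∀ k, k < R'.length →
        PresentedGroup.mk (relsOf R') (FreeGroup.mk (R'.getD k [])) = 1 := by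
      intro k hk
      refine (mem_nc_iff _ _).mp (Subgroup.subset_normalClosure ⟨R'.getD k [], ?_, rfl⟩)
      rw [List.getD_eq_getElem _ _ hk]; exact List.getElem_mem hk
    have condA : ∀ k : Fin R.length,
        ∃ cc : NCCert m, checkNC R' (substL fl (R.getD k.val [])) cc = true := by
      intro k
      apply exists_ncCert
      rw [mem_nc_iff, subst_comm e.toMonoidHom fl hfl, relator_one k.val k.isLt, _root_.map_one]
    have condB : ∀ k : Fin R'.length,
        ∃ cc : NCCert n, checkNC R (substL gl (R'.getD k.val [])) cc = true := by
      intro k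
      apply exists_ncCert
      rw [mem_nc_iff, subst_comm e.symm.toMonoidHom gl hgl, relator_one' k.val k.isLt, _root_.map_one]
    have condC : ∀ i : Fin n, ∃ cc : NCCert n,
        checkNC R (substL gl (fl.getD i.val []) ++ [(i, false)]) cc = true := by
      intro i
      apply exists_ncCert
      rw [mem_nc_iff, ← FreeGroup.mul_mk, _root_.map_mul,
        subst_comm e.symm.toMonoidHom gl hgl, hfl i, mk_inv_gen, _root_.map_inv,
        show (PresentedGroup.mk (relsOf R)) (FreeGroup.of i) = PresentedGroup.of i from rfl]
      simp
    have condD : ∀ j : Fin m, ∃ cc : NCCert m,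
        checkNC R' (substL fl (gl.getD j.val []) ++ [(j, false)]) cc = true := by
      intro j
      apply exists_ncCert
      rw [mem_nc_iff, ← FreeGroup.mul_mk, _root_.map_mul,
        subst_comm e.toMonoidHom fl hfl, hgl j, mk_inv_gen, _root_.map_inv,
        show (PresentedGroup.mk (relsOf R')) (FreeGroup.of j) = PresentedGroup.of j from rfl]
      simp
    choose cA hcA using condA
    choose cB hcB using condB
    choose cC hcC using condC
    choose cD hcD using condD
    refine ⟨⟨(fl, gl), ((List.ofFn cA, List.ofFn cB), (List.ofFn cC, List.ofFn cD))⟩, ?_⟩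
    rw [check_iff]
    refine ⟨?_, ?_, ?_, ?_⟩
    · intro k hk
      rw [getD_ofFn cA [] k hk]
      exact hcA ⟨k, hk⟩
    · intro k hk
      rw [getD_ofFn cB [] k hk]
      exact hcB ⟨k, hk⟩
    · intro i
      rw [getD_ofFn cC [] i.val i.isLt]
      exact hcC i
    · intro j
      rw [getD_ofFn cD [] j.val j.isLt]
      exact hcD j
  · rintro ⟨⟨⟨fl, gl⟩, ⟨⟨cA, cB⟩, ⟨cC, cD⟩⟩⟩, hc⟩
    rw [check_iff] at hc
    obtain ⟨hA, hB, hC, hD⟩ := hc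
    have hrelA : ∀ r ∈ relsOf R, FreeGroup.lift (fun i : Fin n =>
        PresentedGroup.mk (relsOf R') (FreeGroup.mk (fl.getD i.val []))) r = 1 := by
      rintro r ⟨r₀, hr₀, rfl⟩
      obtain ⟨k, hk, hRk⟩ := List.mem_iff_getElem.mp hr₀
      have hmem : FreeGroup.mk (substL fl r₀) ∈ Subgroup.normalClosure (relsOf R') := by
        refine checkNC_mem (c := cA.getD k []) ?_
        have := hA k hk
        rwa [List.getD_eq_getElem _ _ hk, hRk] at this
      rw [← hom_mk_substL (PresentedGroup.mk (relsOf R')) fl r₀]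
      exact (mem_nc_iff _ _).mp hmem
    have hrelB : ∀ r ∈ relsOf R', FreeGroup.lift (fun j : Fin m =>
        PresentedGroup.mk (relsOf R) (FreeGroup.mk (gl.getD j.val []))) r = 1 := by
      rintro r ⟨r₀, hr₀, rfl⟩
      obtain ⟨k, hk, hRk⟩ := List.mem_iff_getElem.mp hr₀
      have hmem : FreeGroup.mk (substL gl r₀) ∈ Subgroup.normalClosure (relsOf R) := by
        refine checkNC_mem (c := cB.getD k []) ?_
        have := hB k hk
        rwa [List.getD_eq_getElem _ _ hk, hRk] at this
      rw [← hom_mk_substL (PresentedGroup.mk (relsOf R)) gl r₀]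
      exact (mem_nc_iff _ _).mp hmem
    set φ := PresentedGroup.toGroup hrelA with hφ_def
    set ψ := PresentedGroup.toGroup hrelB with hψ_def
    have hψπ : ∀ w : Word m, ψ (PresentedGroup.mk (relsOf R') (FreeGroup.mk w)) =
        PresentedGroup.mk (relsOf R) (FreeGroup.mk (substL gl w)) := by
      intro w
      rw [hom_mk_substL (PresentedGroup.mk (relsOf R)) gl w]
      have h := FreeGroup.ext_hom (ψ.comp (PresentedGroup.mk (relsOf R')))
        (FreeGroup.lift fun j : Fin m =>
          PresentedGroup.mk (relsOf R) (FreeGroup.mk (gl.getD j.val [])))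
        (fun a => by
          rw [FreeGroup.lift_apply_of]
          exact PresentedGroup.toGroup.of hrelB)
      exact DFunLike.congr_fun h (FreeGroup.mk w)
    have hφπ : ∀ w : Word n, φ (PresentedGroup.mk (relsOf R) (FreeGroup.mk w)) =
        PresentedGroup.mk (relsOf R') (FreeGroup.mk (substL fl w)) := by
      intro w
      rw [hom_mk_substL (PresentedGroup.mk (relsOf R')) fl w]
      have h := FreeGroup.ext_hom (φ.comp (PresentedGroup.mk (relsOf R)))
        (FreeGroup.lift fun i : Fin n =>
          PresentedGroup.mk (relsOf R') (FreeGroup.mk (fl.getD i.val [])))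
        (fun a => by
          rw [FreeGroup.lift_apply_of]
          exact PresentedGroup.toGroup.of hrelA)
      exact DFunLike.congr_fun h (FreeGroup.mk w)
    have hleft : ψ.comp φ = MonoidHom.id (PresentedGroup (relsOf R)) := by
      ext i
      have h1 := (mem_nc_iff (relsOf R) _).mp (checkNC_mem (hC i))
      rw [← FreeGroup.mul_mk, _root_.map_mul, mk_inv_gen, _root_.map_inv, mul_inv_eq_one] at h1
      have h2 : φ (PresentedGroup.of i) =
          PresentedGroup.mk (relsOf R') (FreeGroup.mk (fl.getD i.val [])) :=
        PresentedGroup.toGroup.of hrelA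
      simp only [MonoidHom.comp_apply, MonoidHom.id_apply]
      rw [h2, hψπ, h1]
      rfl
    have hright : φ.comp ψ = MonoidHom.id (PresentedGroup (relsOf R')) := by
      ext j
      have h1 := (mem_nc_iff (relsOf R') _).mp (checkNC_mem (hD j))
      rw [← FreeGroup.mul_mk, _root_.map_mul, mk_inv_gen, _root_.map_inv, mul_inv_eq_one] at h1
      have h2 : ψ (PresentedGroup.of j) =
          PresentedGroup.mk (relsOf R) (FreeGroup.mk (gl.getD j.val [])) :=
        PresentedGroup.toGroup.of hrelB
      simp only [MonoidHom.comp_apply, MonoidHom.id_apply]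
      rw [h2, hφπ, h1]
      rfl
    exact ⟨MonoidHom.toMulEquiv φ ψ hleft hright⟩


/-- Isomorphism of two presented groups, as a predicate on pairs of finite presentations,
is recursively enumerable. -/
theorem isomorphism_problem_re (n m : ℕ) :
    REPred fun p : List (List (Fin n × Bool)) × List (List (Fin m × Bool)) =>
      Nonempty (PresentedGroup (relsOf p.1) ≃* PresentedGroup (relsOf p.2)) := by
  have hq : Computable₂ (check n m) := (Primrec.prim_check n m).to_comp
  have h := rePred_exists_bool hq
  refine h.of_eq fun p => ?_
  have := iso_iff_cert n m p.1 p.2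
  simpa using this.symm
end
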